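/- arXiv:1801.09874 — 9 statements merged into one kernel-verified Lean document; each statement's English description precedes it below -/
import Mathlib

section
/- Let μ : [0,1] → ℝ be continuous, c > 0, and K_d : ℝ → ℝ be integrable with support contained in [−1,1], ∫_{−1}^{1} K_d(x)dx = 1 and ∫_{−1}^{1} |K_d(x)|dx ≤ κ. Assume there exist ε₀ > 0 and M ∈ ℕ such that (a) for every δ ∈ (0, ε₀] the set {t ∈ [0,1] : |μ(t) − μ(0) − c| ≤ δ} is a union of at most M closed intervals, (b) the equation μ(t) − μ(0) = c has at most M solutions in [0,1], and (c) there exist A > 0 and ι > 0 with m_{c+μ(0),δ}(μ) ≤ A·δ^ι for all δ ∈ (0, ε₀]. Then there exists a constant C > 0 such that for all integers N ≥ 1 and all h ∈ (0, ε₀]: |T⁺_{N,c,h} − T_c⁺| ≤ C · max(h^ι, 1/N). -/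
open MeasureTheory Set

section Kernel
variable {K : ℝ → ℝ} {h y c κ : ℝ}

private lemma aux_kernel_integrable (hK : Integrable K) (hh : 0 < h) (y : ℝ) :
    Integrable (fun u => (1/h) * K ((y - u)/h)) := by
  have h1 : Integrable (fun u : ℝ => K (u / h)) := hK.comp_div hh.ne'
  have h2 : Integrable (fun u : ℝ => K ((y - u) / h)) := h1.comp_sub_left y
  exact h2.const_mul _

private lemma aux_kernel_total (hh : 0 < h) (y : ℝ) :
    (∫ u, (1/h) * K ((y - u)/h)) = ∫ v, K v := by
  rw [integral_const_mul]
  rw [integral_sub_left_eq_self (fun u : ℝ => K (u / h)) volume y]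
  rw [Measure.integral_comp_div K h, smul_eq_mul, abs_of_pos hh]
  field_simp

private lemma aux_kernel_abs_bound (hK : Integrable K) (hh : 0 < h)
    (hsupp : Function.support K ⊆ Icc (-1 : ℝ) 1)
    (habs : (∫ x in Icc (-1 : ℝ) 1, |K x|) ≤ κ) (y c : ℝ) :
    |∫ u in Ioi c, (1/h) * K ((y - u)/h)| ≤ κ := by
  have hint := aux_kernel_integrable hK hh y
  have habs' : (∫ v, |K v|) ≤ κ := by
    rw [← setIntegral_eq_integral_of_forall_compl_eq_zero (s := Icc (-1:ℝ) 1)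
      (f := fun v => |K v|)]
    · exact habs
    · intro x hx
      have : K x = 0 := by
        by_contra hne
        exact hx (hsupp (Function.mem_support.mpr hne))
      simp [this]
  calc |∫ u in Ioi c, (1/h) * K ((y - u)/h)|
      ≤ ∫ u in Ioi c, |(1/h) * K ((y - u)/h)| := by
        have := norm_integral_le_integral_norm (fun u => (1/h) * K ((y - u)/h))
            (μ := volume.restrict (Ioi c))
        simpa [Real.norm_eq_abs, abs_mul, abs_inv] using this
    _ ≤ ∫ u, |(1/h) * K ((y - u)/h)| := by
        apply setIntegral_le_integral hint.abs
        filter_upwards with u using abs_nonneg _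
    _ = ∫ u, (1/h) * |K ((y - u)/h)| := by
        congr 1; funext u
        rw [abs_mul, abs_of_pos (by positivity : (0:ℝ) < 1/h)]
    _ = ∫ v, |K v| := aux_kernel_total (K := fun v => |K v|) hh y
    _ ≤ κ := habs'

private lemma aux_kernel_one (hK : Integrable K) (hh : 0 < h)
    (hsupp : Function.support K ⊆ Icc (-1 : ℝ) 1)
    (hone : (∫ x in Icc (-1 : ℝ) 1, K x) = 1) (hyc : c + h ≤ y) :
    (∫ u in Ioi c, (1/h) * K ((y - u)/h)) = 1 := by
  have hint := aux_kernel_integrable hK hh y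
  have htot : (∫ u, (1/h) * K ((y - u)/h)) = 1 := by
    rw [aux_kernel_total hh y,
      ← setIntegral_eq_integral_of_forall_compl_eq_zero (s := Icc (-1:ℝ) 1) (f := K)]
    · exact hone
    · intro x hx
      by_contra hne
      exact hx (hsupp (Function.mem_support.mpr hne))
  have hIic : (∫ u in Iic c, (1/h) * K ((y - u)/h)) = 0 := by
    rw [integral_Iic_eq_integral_Iio]
    rw [setIntegral_congr_fun measurableSet_Iio (g := fun _ => (0:ℝ))]
    · simp
    · intro u hu
      have hu' : u < c := hu
      have h1 : (1:ℝ) < (y - u)/h := by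
        rw [lt_div_iff₀ hh]
        linarith
      have : K ((y - u)/h) = 0 := by
        by_contra hne
        have := hsupp (Function.mem_support.mpr hne)
        exact absurd this.2 (not_le.mpr h1)
      simp [this]
  have hadd := integral_add_compl (measurableSet_Iic (a := c)) hint (μ := volume)
  rw [compl_Iic, hIic, zero_add] at hadd
  rw [hadd, htot]

private lemma aux_kernel_zero (hh : 0 < h)
    (hsupp : Function.support K ⊆ Icc (-1 : ℝ) 1) (hyc : y ≤ c - h) :
    (∫ u in Ioi c, (1/h) * K ((y - u)/h)) = 0 := by
  rw [setIntegral_congr_fun measurableSet_Ioi (g := fun _ => (0:ℝ))]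
  · simp
  · intro u hu
    have hu' : c < u := hu
    have h1 : (y - u)/h < -1 := by
      rw [div_lt_iff₀ hh]
      linarith
    have : K ((y - u)/h) = 0 := by
      by_contra hne
      have := hsupp (Function.mem_support.mpr hne)
      have := this.1
      linarith
    simp [this]

end Kernel

private lemma aux_grid_count_le {N : ℕ} (hN : 1 ≤ N) {a b : ℝ} (hab : a ≤ b) (ha0 : 0 ≤ a)
    (P : ℕ → Prop) [DecidablePred P] (hP : ∀ i, P i → a ≤ (i:ℝ)/N ∧ (i:ℝ)/N ≤ b) :
    (((Finset.Icc 1 N).filter P).card : ℝ) ≤ N*(b-a) + 1 := by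
  have hNpos : (0:ℝ) < N := by exact_mod_cast hN
  have hsub : (Finset.Icc 1 N).filter P ⊆ Finset.Icc ⌈(N:ℝ)*a⌉₊ ⌊(N:ℝ)*b⌋₊ := by
    intro i hi
    rw [Finset.mem_filter] at hi
    obtain ⟨hi1, hi2⟩ := hP i hi.2
    rw [Finset.mem_Icc]
    constructor
    · exact Nat.ceil_le.mpr (by rw [le_div_iff₀ hNpos] at hi1; linarith)
    · exact Nat.le_floor (by rw [div_le_iff₀ hNpos] at hi2; linarith)
  have hcard := Finset.card_le_card hsub
  rcases le_or_gt ⌈(N:ℝ)*a⌉₊ (⌊(N:ℝ)*b⌋₊ + 1) with hle | hlt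
  · have : ((Finset.Icc ⌈(N:ℝ)*a⌉₊ ⌊(N:ℝ)*b⌋₊).card : ℝ)
        = (⌊(N:ℝ)*b⌋₊ : ℝ) + 1 - ⌈(N:ℝ)*a⌉₊ := by
      rw [Nat.card_Icc]
      rw [Nat.cast_sub hle]
      push_cast
      ring
    have hfl : (⌊(N:ℝ)*b⌋₊ : ℝ) ≤ N*b := Nat.floor_le (mul_nonneg hNpos.le (ha0.trans hab))
    have hcl : (N:ℝ)*a ≤ ⌈(N:ℝ)*a⌉₊ := Nat.le_ceil _
    calc (((Finset.Icc 1 N).filter P).card : ℝ)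
        ≤ ((Finset.Icc ⌈(N:ℝ)*a⌉₊ ⌊(N:ℝ)*b⌋₊).card : ℝ) := by exact_mod_cast hcard
      _ = (⌊(N:ℝ)*b⌋₊ : ℝ) + 1 - ⌈(N:ℝ)*a⌉₊ := this
      _ ≤ N*(b-a) + 1 := by nlinarith
  · have : Finset.Icc ⌈(N:ℝ)*a⌉₊ ⌊(N:ℝ)*b⌋₊ = ∅ := by
      apply Finset.Icc_eq_empty
      omega
    rw [this] at hcard
    simp only [Finset.card_empty, Nat.le_zero] at hcard
    rw [hcard]
    have : (0:ℝ) ≤ N*(b-a) := by nlinarith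
    push_cast
    linarith

private lemma aux_grid_count_two {N : ℕ} {f : ℝ} (hf0 : 0 ≤ f)
    (P : ℕ → Prop) [DecidablePred P]
    (hP : ∀ i, P i → (i:ℝ) - 1 ≤ (N:ℝ)*f ∧ (N:ℝ)*f ≤ i) :
    ((Finset.Icc 1 N).filter P).card ≤ 2 := by
  have hsub : (Finset.Icc 1 N).filter P ⊆ Finset.Icc ⌊(N:ℝ)*f⌋₊ (⌊(N:ℝ)*f⌋₊ + 1) := by
    intro i hi
    rw [Finset.mem_filter] at hi
    obtain ⟨him, hPi⟩ := hi
    rw [Finset.mem_Icc] at him ⊢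
    obtain ⟨h1, h2⟩ := hP i hPi
    constructor
    · have : (⌊(N:ℝ)*f⌋₊ : ℝ) ≤ i := le_trans (Nat.floor_le (by positivity)) h2
      exact_mod_cast this
    · have hi1 : 1 ≤ i := him.1
      have : ((i - 1 : ℕ) : ℝ) ≤ (N:ℝ)*f := by
        rw [Nat.cast_sub hi1]
        push_cast
        linarith
      have := Nat.le_floor this
      omega
  calc ((Finset.Icc 1 N).filter P).card ≤ (Finset.Icc ⌊(N:ℝ)*f⌋₊ (⌊(N:ℝ)*f⌋₊ + 1)).card :=
        Finset.card_le_card hsub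
    _ ≤ 2 := by rw [Nat.card_Icc]; omega

set_option maxHeartbeats 1000000 in
/-- Proposition 2.1: deterministic approximation of the excess
measure `T_c⁺` by the smoothed Riemann sum `T⁺_{N,c,h}`. -/
theorem excess_measure_riemann_approx
    (μ : ℝ → ℝ) (hμ : ContinuousOn μ (Icc 0 1))
    (c : ℝ) (hc : 0 < c)
    (K_d : ℝ → ℝ) (κ : ℝ)
    (hK_int : Integrable K_d)
    (hK_supp : Function.support K_d ⊆ Icc (-1 : ℝ) 1)
    (hK_one : (∫ x in Icc (-1 : ℝ) 1, K_d x) = 1)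
    (hK_abs : (∫ x in Icc (-1 : ℝ) 1, |K_d x|) ≤ κ)
    (ε₀ : ℝ) (hε₀ : 0 < ε₀) (M : ℕ)
    -- (a) for every δ ∈ (0, ε₀] the band is a union of at most M closed intervals
    (ha : ∀ δ ∈ Ioc (0:ℝ) ε₀, ∃ a b : Fin M → ℝ,
      {s ∈ Icc (0:ℝ) 1 | |μ s - μ 0 - c| ≤ δ} = ⋃ j, Icc (a j) (b j))
    -- (b) the equation μ(t) - μ(0) = c has at most M solutions in [0,1]
    (hb : {s ∈ Icc (0:ℝ) 1 | μ s - μ 0 = c}.encard ≤ (M : ℕ∞))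
    -- (c) m_{c+μ(0),δ}(μ) ≤ A δ^ι
    (A ι : ℝ) (hA : 0 < A) (hι : 0 < ι)
    (hm : ∀ δ ∈ Ioc (0:ℝ) ε₀,
      (volume {s ∈ Icc (0:ℝ) 1 | |μ s - (c + μ 0)| ≤ δ}).toReal ≤ A * δ ^ ι) :
    ∃ C > 0, ∀ N : ℕ, 1 ≤ N → ∀ h ∈ Ioc (0:ℝ) ε₀,
      |(1 / (N:ℝ)) * ∑ i ∈ Finset.Icc 1 N,
          (∫ u in Ioi c, (1 / h) * K_d ((μ ((i:ℝ) / (N:ℝ)) - μ 0 - u) / h)) -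
        (volume {s ∈ Icc (0:ℝ) 1 | μ s - μ 0 > c}).toReal|
      ≤ C * max (h ^ ι) (1 / (N:ℝ)) := by
  classical
  have hκ1 : (1:ℝ) ≤ κ := by
    have h1 : |∫ x in Icc (-1:ℝ) 1, K_d x| ≤ ∫ x in Icc (-1:ℝ) 1, |K_d x| := by
      have := norm_integral_le_integral_norm K_d (μ := volume.restrict (Icc (-1:ℝ) 1))
      simpa [Real.norm_eq_abs] using this
    rw [hK_one] at h1
    simpa using h1.trans hK_abs
  have hκpos : (0:ℝ) < κ + 1 := by linarith
  -- the excess set W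
  set W : Set ℝ := {s ∈ Icc (0:ℝ) 1 | μ s - μ 0 > c} with hWdef
  have hWmeas : MeasurableSet W := by
    obtain ⟨u, hu, hset⟩ := (continuousOn_iff'.mp hμ) (Ioi (c + μ 0)) isOpen_Ioi
    have : W = u ∩ Icc 0 1 := by
      rw [← hset]
      ext s
      simp only [hWdef, mem_sep_iff, mem_inter_iff, mem_preimage, mem_Ioi]
      constructor
      · rintro ⟨h1, h2⟩; exact ⟨by linarith, h1⟩
      · rintro ⟨h1, h2⟩; exact ⟨h2, by linarith⟩
    rw [this]
    exact hu.measurableSet.inter measurableSet_Icc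
  -- F : the level set, finite
  have hFfin : ({s ∈ Icc (0:ℝ) 1 | μ s - μ 0 = c} : Set ℝ).Finite :=
    Set.finite_of_encard_le_coe hb
  have hFcard : hFfin.toFinset.card ≤ M := by
    have h1 := hFfin.encard_eq_coe_toFinset_card
    rw [h1] at hb
    exact_mod_cast hb
  refine ⟨(κ+1)*M*A + (κ+1)*M + 2*M + 1, ?_, ?_⟩
  · have h1 : (0:ℝ) ≤ (κ+1)*M*A :=
      mul_nonneg (mul_nonneg hκpos.le (Nat.cast_nonneg M)) hA.le
    have h2 : (0:ℝ) ≤ (κ+1)*M := mul_nonneg hκpos.le (Nat.cast_nonneg M)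
    have h3 : (0:ℝ) ≤ 2*M := by positivity
    linarith
  intro N hN h hh
  obtain ⟨hh0, hhε⟩ := hh
  have hNpos : (0:ℝ) < N := by exact_mod_cast hN
  set φ : ℕ → ℝ := fun i => ∫ u in Ioi c, (1/h) * K_d ((μ ((i:ℝ)/(N:ℝ)) - μ 0 - u)/h) with hφdef
  set ind : ℕ → ℝ := fun i => if c < μ ((i:ℝ)/(N:ℝ)) - μ 0 then 1 else 0 with hinddef
  have hind01 : ∀ i, 0 ≤ ind i ∧ ind i ≤ 1 := by
    intro i
    simp only [hinddef]
    split_ifs <;> norm_num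
  have hgrid : ∀ i ∈ Finset.Icc 1 N, (i:ℝ)/(N:ℝ) ∈ Icc (0:ℝ) 1 := by
    intro i hi
    rw [Finset.mem_Icc] at hi
    have h1 : (1:ℝ) ≤ i := by exact_mod_cast hi.1
    have h2 : (i:ℝ) ≤ N := by exact_mod_cast hi.2
    constructor
    · positivity
    · rw [div_le_one hNpos]; exact h2
  ---- Term 1 : smoothing error
  have hterm1 : |(1/(N:ℝ)) * ∑ i ∈ Finset.Icc 1 N, φ i
      - (1/(N:ℝ)) * ∑ i ∈ Finset.Icc 1 N, ind i|
      ≤ (κ+1) * (M * ((N:ℝ) * (A * h ^ ι) + 1)) / N := by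
    obtain ⟨a, b, hab⟩ := ha h ⟨hh0, hhε⟩
    have hBvol : (volume {s ∈ Icc (0:ℝ) 1 | |μ s - μ 0 - c| ≤ h}).toReal ≤ A * h ^ ι := by
      have hseteq : {s ∈ Icc (0:ℝ) 1 | |μ s - μ 0 - c| ≤ h}
          = {s ∈ Icc (0:ℝ) 1 | |μ s - (c + μ 0)| ≤ h} := by
        ext s
        simp only [mem_sep_iff, mem_setOf_eq]
        rw [show μ s - μ 0 - c = μ s - (c + μ 0) from by ring]
      rw [hseteq]
      exact hm h ⟨hh0, hhε⟩
    set badB := (Finset.Icc 1 N).filter (fun i : ℕ => |μ ((i:ℝ)/(N:ℝ)) - μ 0 - c| ≤ h) with hbadB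
    have hsum1 : ∑ i ∈ Finset.Icc 1 N, |φ i - ind i| ≤ (badB.card : ℝ) * (κ+1) := by
      have hpt : ∀ i ∈ Finset.Icc 1 N, |φ i - ind i|
          ≤ if |μ ((i:ℝ)/(N:ℝ)) - μ 0 - c| ≤ h then (κ+1) else 0 := by
        intro i _
        split_ifs with hcase
        · have h1 : |φ i| ≤ κ :=
            aux_kernel_abs_bound hK_int hh0 hK_supp hK_abs _ _
          have h2 := hind01 i
          calc |φ i - ind i| ≤ |φ i| + |ind i| := abs_sub _ _
            _ ≤ κ + 1 := by
              have : |ind i| ≤ 1 := abs_le.mpr ⟨by linarith [h2.1], h2.2⟩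
              linarith
        · push_neg at hcase
          rcases lt_abs.mp hcase with hgt | hlt
          · -- μ(i/N) - μ 0 - c > h, so both are "1"
            have hy : c + h ≤ μ ((i:ℝ)/(N:ℝ)) - μ 0 := by linarith
            have hφ1 : φ i = 1 := aux_kernel_one hK_int hh0 hK_supp hK_one hy
            have hind1 : ind i = 1 := if_pos (by linarith)
            rw [hφ1, hind1]; simp
          · -- < - h : both are "0"
            have hy : μ ((i:ℝ)/(N:ℝ)) - μ 0 ≤ c - h := by linarith
            have hφ0 : φ i = 0 := aux_kernel_zero hh0 hK_supp hy
            have hind0 : ind i = 0 := if_neg (by push_neg; linarith)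
            rw [hφ0, hind0]; simp
      calc ∑ i ∈ Finset.Icc 1 N, |φ i - ind i|
          ≤ ∑ i ∈ Finset.Icc 1 N,
              (if |μ ((i:ℝ)/(N:ℝ)) - μ 0 - c| ≤ h then (κ+1) else (0:ℝ)) :=
            Finset.sum_le_sum hpt
        _ = ∑ i ∈ badB, (κ+1) := (Finset.sum_filter _ _).symm
        _ = (badB.card : ℝ) * (κ+1) := by
            rw [Finset.sum_const, nsmul_eq_mul]
    have hbadBcard : (badB.card : ℝ) ≤ M * ((N:ℝ) * (A * h ^ ι) + 1) := by
      have hsub : badB ⊆ Finset.univ.biUnion (fun j : Fin M =>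
          (Finset.Icc 1 N).filter (fun i : ℕ => (i:ℝ)/(N:ℝ) ∈ Icc (a j) (b j))) := by
        intro i hi
        rw [hbadB, Finset.mem_filter] at hi
        have hmem : (i:ℝ)/(N:ℝ) ∈ {s ∈ Icc (0:ℝ) 1 | |μ s - μ 0 - c| ≤ h} :=
          ⟨hgrid i hi.1, hi.2⟩
        rw [hab, mem_iUnion] at hmem
        obtain ⟨j, hj⟩ := hmem
        exact Finset.mem_biUnion.mpr ⟨j, Finset.mem_univ j,
          Finset.mem_filter.mpr ⟨hi.1, hj⟩⟩
      have hjcard : ∀ j : Fin M,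
          ((((Finset.Icc 1 N).filter (fun i : ℕ => (i:ℝ)/(N:ℝ) ∈ Icc (a j) (b j))).card : ℝ))
          ≤ (N:ℝ) * (A * h ^ ι) + 1 := by
        intro j
        by_cases hne : ((Finset.Icc 1 N).filter
            (fun i : ℕ => (i:ℝ)/(N:ℝ) ∈ Icc (a j) (b j))).Nonempty
        · obtain ⟨i₀, hi₀⟩ := hne
          rw [Finset.mem_filter] at hi₀
          have haab : a j ≤ b j := le_trans hi₀.2.1 hi₀.2.2
          have haj : a j ∈ {s ∈ Icc (0:ℝ) 1 | |μ s - μ 0 - c| ≤ h} := by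
            rw [hab]
            exact mem_iUnion.mpr ⟨j, left_mem_Icc.mpr haab⟩
          have ha0 : 0 ≤ a j := haj.1.1
          have hlen : b j - a j ≤ A * h ^ ι := by
            have h1 : volume (Icc (a j) (b j))
                ≤ volume {s ∈ Icc (0:ℝ) 1 | |μ s - μ 0 - c| ≤ h} := by
              apply measure_mono
              rw [hab]
              exact subset_iUnion (fun j => Icc (a j) (b j)) j
            have hnt : volume {s ∈ Icc (0:ℝ) 1 | |μ s - μ 0 - c| ≤ h} ≠ ⊤ :=
              ((measure_mono (sep_subset _ _)).trans_lt measure_Icc_lt_top).ne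
            have h2 := ENNReal.toReal_mono hnt h1
            rw [Real.volume_Icc, ENNReal.toReal_ofReal (sub_nonneg.mpr haab)] at h2
            linarith
          have := aux_grid_count_le hN haab ha0
            (fun i : ℕ => (i:ℝ)/(N:ℝ) ∈ Icc (a j) (b j)) (fun i hi => hi)
          calc ((((Finset.Icc 1 N).filter
              (fun i : ℕ => (i:ℝ)/(N:ℝ) ∈ Icc (a j) (b j))).card : ℝ))
              ≤ (N:ℝ)*(b j - a j) + 1 := this
            _ ≤ (N:ℝ) * (A * h ^ ι) + 1 := by nlinarith
        · rw [Finset.not_nonempty_iff_eq_empty] at hne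
          rw [hne]
          simp only [Finset.card_empty, Nat.cast_zero]
          have : (0:ℝ) ≤ (N:ℝ) * (A * h ^ ι) := by
            apply mul_nonneg hNpos.le
            apply mul_nonneg hA.le (Real.rpow_nonneg hh0.le ι)
          linarith
      calc (badB.card : ℝ)
          ≤ ((Finset.univ.biUnion (fun j : Fin M =>
              (Finset.Icc 1 N).filter (fun i : ℕ => (i:ℝ)/(N:ℝ) ∈ Icc (a j) (b j)))).card : ℝ) := by
            exact_mod_cast Finset.card_le_card hsub
        _ ≤ ((∑ j : Fin M, ((Finset.Icc 1 N).filter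
              (fun i : ℕ => (i:ℝ)/(N:ℝ) ∈ Icc (a j) (b j))).card : ℕ) : ℝ) := by
            exact_mod_cast Finset.card_biUnion_le
        _ = ∑ j : Fin M, (((Finset.Icc 1 N).filter
              (fun i : ℕ => (i:ℝ)/(N:ℝ) ∈ Icc (a j) (b j))).card : ℝ) := by
            push_cast; rfl
        _ ≤ ∑ _j : Fin M, ((N:ℝ) * (A * h ^ ι) + 1) :=
            Finset.sum_le_sum (fun j _ => hjcard j)
        _ = M * ((N:ℝ) * (A * h ^ ι) + 1) := by
            rw [Finset.sum_const, Finset.card_univ, Fintype.card_fin, nsmul_eq_mul]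
    rw [← mul_sub, ← Finset.sum_sub_distrib, abs_mul,
      abs_of_pos (by positivity : (0:ℝ) < 1/(N:ℝ))]
    have habs := Finset.abs_sum_le_sum_abs
      (fun i => φ i - ind i) (Finset.Icc 1 N)
    have h1 : |∑ i ∈ Finset.Icc 1 N, (φ i - ind i)| ≤ (badB.card : ℝ) * (κ+1) :=
      le_trans habs hsum1
    have h2 : (badB.card : ℝ) * (κ+1) ≤ (κ+1) * (M * ((N:ℝ) * (A * h ^ ι) + 1)) := by
      rw [mul_comm]
      exact mul_le_mul_of_nonneg_left hbadBcard hκpos.le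
    calc 1/(N:ℝ) * |∑ i ∈ Finset.Icc 1 N, (φ i - ind i)|
        ≤ 1/(N:ℝ) * ((κ+1) * (M * ((N:ℝ) * (A * h ^ ι) + 1))) := by
          apply mul_le_mul_of_nonneg_left (le_trans h1 h2) (by positivity)
      _ = (κ+1) * (M * ((N:ℝ) * (A * h ^ ι) + 1)) / N := by ring
  ---- Term 2 : Riemann sum of indicator vs measure
  set J : ℕ → Set ℝ := fun i => Ioc (((i:ℝ)-1)/(N:ℝ)) ((i:ℝ)/(N:ℝ)) with hJdef
  have hJvol : ∀ i : ℕ, 1 ≤ i → volume (J i) = ENNReal.ofReal (1/(N:ℝ)) := by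
    intro i _
    rw [hJdef]
    simp only
    rw [Real.volume_Ioc]
    congr 1
    field_simp
    ring
  have hterm2 : |(1/(N:ℝ)) * ∑ i ∈ Finset.Icc 1 N, ind i - (volume W).toReal|
      ≤ 2*(M:ℝ)/N := by
    -- decomposition of W
    have hWdecomp : W = ⋃ i ∈ Finset.Icc 1 N, (W ∩ J i) := by
      apply Subset.antisymm
      · intro s hs
        have hs01 : s ∈ Icc (0:ℝ) 1 := hs.1
        have hspos : 0 < s := by
          rcases lt_or_eq_of_le hs01.1 with h1 | h1
          · exact h1
          · exfalso
            have := hs.2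
            rw [← h1] at this
            simp at this
            linarith
        have hNs : 0 < (N:ℝ)*s := by positivity
        set i := ⌈(N:ℝ)*s⌉₊ with hidef
        have hi1 : 1 ≤ i := by
          rw [hidef]
          exact Nat.one_le_ceil_iff.mpr hNs
        have hiN : i ≤ N := by
          rw [hidef]
          apply Nat.ceil_le.mpr
          have : (N:ℝ)*s ≤ N := by nlinarith [hs01.2]
          exact_mod_cast this
        apply mem_biUnion (Finset.mem_Icc.mpr ⟨hi1, hiN⟩)
        refine ⟨hs, ?_, ?_⟩
        · rw [div_lt_iff₀ hNpos]
          have := Nat.ceil_lt_add_one hNs.le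
          rw [← hidef] at this
          linarith [this]
        · rw [le_div_iff₀ hNpos]
          have := Nat.le_ceil ((N:ℝ)*s)
          rw [← hidef] at this
          linarith [this]
      · exact iUnion₂_subset fun i _ => inter_subset_left
    have hvolW : (volume W).toReal
        = ∑ i ∈ Finset.Icc 1 N, (volume (W ∩ J i)).toReal := by
      have hdisj : (↑(Finset.Icc 1 N) : Set ℕ).PairwiseDisjoint (fun i => W ∩ J i) := by
        intro i hi j hj hij
        apply Set.disjoint_left.mpr
        rintro s ⟨_, hsi⟩ ⟨_, hsj⟩
        rcases lt_or_gt_of_ne hij with hlt | hlt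
        · have h1 : (i:ℝ) ≤ (j:ℝ) - 1 := by
            have : i + 1 ≤ j := hlt
            have : ((i:ℕ):ℝ) + 1 ≤ j := by exact_mod_cast this
            linarith
          have h2 : s ≤ (i:ℝ)/N := hsi.2
          have h3 : ((j:ℝ)-1)/N < s := hsj.1
          have h4 : (i:ℝ)/N ≤ ((j:ℝ)-1)/N := by
            rw [div_le_div_iff₀ hNpos hNpos]
            nlinarith
          linarith
        · have h1 : (j:ℝ) ≤ (i:ℝ) - 1 := by
            have : j + 1 ≤ i := hlt
            have : ((j:ℕ):ℝ) + 1 ≤ i := by exact_mod_cast this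
            linarith
          have h2 : s ≤ (j:ℝ)/N := hsj.2
          have h3 : ((i:ℝ)-1)/N < s := hsi.1
          have h4 : (j:ℝ)/N ≤ ((i:ℝ)-1)/N := by
            rw [div_le_div_iff₀ hNpos hNpos]
            nlinarith
          linarith
      have hmeaseq : volume W = ∑ i ∈ Finset.Icc 1 N, volume (W ∩ J i) := by
        conv_lhs => rw [hWdecomp]
        exact measure_biUnion_finset hdisj (fun i _ => hWmeas.inter measurableSet_Ioc)
      rw [hmeaseq]
      apply ENNReal.toReal_sum
      intro i hi
      rw [Finset.mem_Icc] at hi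
      have h1 : volume (W ∩ J i) ≤ volume (J i) := measure_mono inter_subset_right
      rw [hJvol i hi.1] at h1
      exact (h1.trans_lt ENNReal.ofReal_lt_top).ne
    rw [hvolW, Finset.mul_sum, ← Finset.sum_sub_distrib]
    refine le_trans (Finset.abs_sum_le_sum_abs _ _) ?_
    have hbound : ∀ i ∈ Finset.Icc 1 N,
        |1/(N:ℝ) * ind i - (volume (W ∩ J i)).toReal|
        ≤ if (∃ s ∈ Icc (((i:ℝ)-1)/(N:ℝ)) ((i:ℝ)/(N:ℝ)), μ s - μ 0 = c)
          then 1/(N:ℝ) else 0 := by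
      intro i hi
      rw [Finset.mem_Icc] at hi
      have hi1 : (1:ℝ) ≤ i := by exact_mod_cast hi.1
      have hiN : (i:ℝ) ≤ N := by exact_mod_cast hi.2
      have hIccsub : Icc (((i:ℝ)-1)/(N:ℝ)) ((i:ℝ)/(N:ℝ)) ⊆ Icc (0:ℝ) 1 := by
        apply Icc_subset_Icc
        · apply div_nonneg (by linarith) hNpos.le
        · rw [div_le_one hNpos]; exact hiN
      have hJsub : J i ⊆ Icc (((i:ℝ)-1)/(N:ℝ)) ((i:ℝ)/(N:ℝ)) := Ioc_subset_Icc_self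
      have hvle : (volume (W ∩ J i)).toReal ≤ 1/(N:ℝ) := by
        have h1 : volume (W ∩ J i) ≤ volume (J i) := measure_mono inter_subset_right
        rw [hJvol i hi.1] at h1
        have := ENNReal.toReal_mono ENNReal.ofReal_ne_top h1
        rwa [ENNReal.toReal_ofReal (by positivity)] at this
      split_ifs with hbad
      · have h2 := hind01 i
        rw [abs_sub_le_iff]
        constructor
        · have hle1 : 1/(N:ℝ) * ind i ≤ 1/(N:ℝ) * 1 :=
            mul_le_mul_of_nonneg_left h2.2 (by positivity)
          rw [mul_one] at hle1
          linarith [ENNReal.toReal_nonneg (a := volume (W ∩ J i))]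
        · have : 0 ≤ 1/(N:ℝ) * ind i := mul_nonneg (by positivity) (hind01 i).1
          linarith [hvle]
      · push_neg at hbad
        have hticc : (i:ℝ)/(N:ℝ) ∈ Icc (((i:ℝ)-1)/(N:ℝ)) ((i:ℝ)/(N:ℝ)) := by
          apply right_mem_Icc.mpr
          rw [div_le_div_iff₀ hNpos hNpos]
          nlinarith
        have htne : μ ((i:ℝ)/(N:ℝ)) - μ 0 ≠ c := hbad _ hticc
        have hcont : ContinuousOn (fun s => μ s - μ 0)
            (Icc (((i:ℝ)-1)/(N:ℝ)) ((i:ℝ)/(N:ℝ))) :=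
          (hμ.mono hIccsub).sub continuousOn_const
        rcases lt_or_gt_of_ne htne with hlt | hgt
        · -- W ∩ J i = ∅
          have hempty : W ∩ J i = ∅ := by
            ext s
            simp only [mem_inter_iff, mem_empty_iff_false, iff_false, not_and]
            intro hsW hsJ
            have hsle : s ≤ (i:ℝ)/(N:ℝ) := hsJ.2
            have hsub2 : Icc s ((i:ℝ)/(N:ℝ)) ⊆ Icc (((i:ℝ)-1)/(N:ℝ)) ((i:ℝ)/(N:ℝ)) :=
              Icc_subset_Icc (le_of_lt hsJ.1) le_rfl
            have hIVT := intermediate_value_Icc' hsle (hcont.mono hsub2)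
            have hcmem : c ∈ Icc ((fun s => μ s - μ 0) ((i:ℝ)/(N:ℝ)))
                ((fun s => μ s - μ 0) s) := ⟨le_of_lt hlt, le_of_lt hsW.2⟩
            obtain ⟨t, ht, htv⟩ := hIVT hcmem
            exact hbad t (hsub2 ht) htv
          rw [hempty]
          have hind0 : ind i = 0 := if_neg (not_lt.mpr (le_of_lt hlt))
          simp [hind0]
        · -- W ∩ J i = J i
          have hJW : J i ⊆ W := by
            intro s hsJ
            refine ⟨hIccsub (hJsub hsJ), ?_⟩
            by_contra hle
            push_neg at hle
            have hsle : s ≤ (i:ℝ)/(N:ℝ) := hsJ.2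
            have hsub2 : Icc s ((i:ℝ)/(N:ℝ)) ⊆ Icc (((i:ℝ)-1)/(N:ℝ)) ((i:ℝ)/(N:ℝ)) :=
              Icc_subset_Icc (le_of_lt hsJ.1) le_rfl
            have hIVT := intermediate_value_Icc hsle (hcont.mono hsub2)
            have hcmem : c ∈ Icc ((fun s => μ s - μ 0) s)
                ((fun s => μ s - μ 0) ((i:ℝ)/(N:ℝ))) := ⟨hle, le_of_lt hgt⟩
            obtain ⟨t, ht, htv⟩ := hIVT hcmem
            exact hbad t (hsub2 ht) htv
          have hfull : W ∩ J i = J i := inter_eq_self_of_subset_right hJW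
          rw [hfull, hJvol i hi.1, ENNReal.toReal_ofReal (by positivity)]
          have hind1 : ind i = 1 := if_pos hgt
          rw [hind1]
          simp
    refine le_trans (Finset.sum_le_sum hbound) ?_
    set badF := (Finset.Icc 1 N).filter
      (fun i : ℕ => ∃ s ∈ Icc (((i:ℝ)-1)/(N:ℝ)) ((i:ℝ)/(N:ℝ)), μ s - μ 0 = c) with hbadF
    have hsum2 : ∑ i ∈ Finset.Icc 1 N,
        (if (∃ s ∈ Icc (((i:ℝ)-1)/(N:ℝ)) ((i:ℝ)/(N:ℝ)), μ s - μ 0 = c)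
          then 1/(N:ℝ) else 0) = (badF.card : ℝ) * (1/(N:ℝ)) := by
      rw [← Finset.sum_filter, ← hbadF, Finset.sum_const, nsmul_eq_mul]
    rw [hsum2]
    have hbadFcard : badF.card ≤ 2*M := by
      have hsub : badF ⊆ hFfin.toFinset.biUnion (fun f =>
          (Finset.Icc 1 N).filter (fun i : ℕ => (i:ℝ) - 1 ≤ (N:ℝ)*f ∧ (N:ℝ)*f ≤ i)) := by
        intro i hi
        rw [hbadF, Finset.mem_filter] at hi
        obtain ⟨him, s, hsIcc, hsval⟩ := hi
        rw [Finset.mem_Icc] at him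
        have hi1 : (1:ℝ) ≤ i := by exact_mod_cast him.1
        have hiN : (i:ℝ) ≤ N := by exact_mod_cast him.2
        have hs01 : s ∈ Icc (0:ℝ) 1 := by
          constructor
          · have := hsIcc.1
            have h0 : (0:ℝ) ≤ ((i:ℝ)-1)/(N:ℝ) := div_nonneg (by linarith) hNpos.le
            linarith
          · have := hsIcc.2
            have h1 : (i:ℝ)/(N:ℝ) ≤ 1 := by rw [div_le_one hNpos]; exact hiN
            linarith
        have hsF : s ∈ hFfin.toFinset := by
          rw [Set.Finite.mem_toFinset]
          exact ⟨hs01, hsval⟩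
        apply Finset.mem_biUnion.mpr
        refine ⟨s, hsF, Finset.mem_filter.mpr ⟨Finset.mem_Icc.mpr him, ?_, ?_⟩⟩
        · have := hsIcc.1
          rw [div_le_iff₀ hNpos] at this
          linarith
        · have := hsIcc.2
          rw [le_div_iff₀ hNpos] at this
          linarith
      calc badF.card ≤ ∑ f ∈ hFfin.toFinset,
            ((Finset.Icc 1 N).filter (fun i : ℕ => (i:ℝ) - 1 ≤ (N:ℝ)*f ∧ (N:ℝ)*f ≤ i)).card :=
          le_trans (Finset.card_le_card hsub) Finset.card_biUnion_le
        _ ≤ ∑ f ∈ hFfin.toFinset, 2 := by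
            apply Finset.sum_le_sum
            intro f hf
            rw [Set.Finite.mem_toFinset] at hf
            exact aux_grid_count_two hf.1.1 _ (fun i hi => hi)
        _ = 2 * hFfin.toFinset.card := by rw [Finset.sum_const, smul_eq_mul, mul_comm]
        _ ≤ 2 * M := by omega
    calc (badF.card : ℝ) * (1/(N:ℝ)) ≤ (2*M : ℕ) * (1/(N:ℝ)) := by
          apply mul_le_mul_of_nonneg_right _ (by positivity)
          exact_mod_cast hbadFcard
      _ = 2*(M:ℝ)/N := by push_cast; ring
  ---- assemble
  have htri : |(1/(N:ℝ)) * ∑ i ∈ Finset.Icc 1 N, φ i - (volume W).toReal|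
      ≤ (κ+1) * (M * ((N:ℝ) * (A * h ^ ι) + 1)) / N + 2*(M:ℝ)/N := by
    calc |(1/(N:ℝ)) * ∑ i ∈ Finset.Icc 1 N, φ i - (volume W).toReal|
        ≤ |(1/(N:ℝ)) * ∑ i ∈ Finset.Icc 1 N, φ i
            - (1/(N:ℝ)) * ∑ i ∈ Finset.Icc 1 N, ind i|
          + |(1/(N:ℝ)) * ∑ i ∈ Finset.Icc 1 N, ind i - (volume W).toReal| :=
          abs_sub_le _ _ _
      _ ≤ _ := add_le_add hterm1 hterm2
  have hmax1 : h ^ ι ≤ max (h ^ ι) (1/(N:ℝ)) := le_max_left _ _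
  have hmax2 : 1/(N:ℝ) ≤ max (h ^ ι) (1/(N:ℝ)) := le_max_right _ _
  have hrpow : (0:ℝ) ≤ h ^ ι := Real.rpow_nonneg hh0.le ι
  have hmax0 : 0 ≤ max (h ^ ι) (1/(N:ℝ)) := le_trans hrpow hmax1
  have heq : (κ+1) * (M * ((N:ℝ) * (A * h ^ ι) + 1)) / N
      = (κ+1)*M*A*(h ^ ι) + (κ+1)*M*(1/(N:ℝ)) := by
    field_simp
  have e1 : (κ+1)*M*A*(h ^ ι) ≤ (κ+1)*M*A * max (h ^ ι) (1/(N:ℝ)) :=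
    mul_le_mul_of_nonneg_left hmax1
      (mul_nonneg (mul_nonneg hκpos.le (Nat.cast_nonneg M)) hA.le)
  have e2 : (κ+1)*M*(1/(N:ℝ)) ≤ (κ+1)*M * max (h ^ ι) (1/(N:ℝ)) :=
    mul_le_mul_of_nonneg_left hmax2 (mul_nonneg hκpos.le (Nat.cast_nonneg M))
  have e3 : 2*(M:ℝ)/N ≤ 2*M * max (h ^ ι) (1/(N:ℝ)) := by
    have : 2*(M:ℝ)/N = 2*M*(1/(N:ℝ)) := by ring
    rw [this]
    exact mul_le_mul_of_nonneg_left hmax2 (by positivity)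
  calc |(1/(N:ℝ)) * ∑ i ∈ Finset.Icc 1 N, φ i - (volume W).toReal|
      ≤ (κ+1) * (M * ((N:ℝ) * (A * h ^ ι) + 1)) / N + 2*(M:ℝ)/N := htri
    _ = (κ+1)*M*A*(h ^ ι) + (κ+1)*M*(1/(N:ℝ)) + 2*(M:ℝ)/N := by rw [heq]
    _ ≤ (κ+1)*M*A * max (h ^ ι) (1/(N:ℝ)) + (κ+1)*M * max (h ^ ι) (1/(N:ℝ))
        + 2*M * max (h ^ ι) (1/(N:ℝ)) := by
        exact add_le_add (add_le_add e1 e2) e3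
    _ ≤ ((κ+1)*M*A + (κ+1)*M + 2*M + 1) * max (h ^ ι) (1/(N:ℝ)) := by
        nlinarith [hmax0]
end

section
/- Let μ : [0,1] → ℝ, c > 0, and K_d : ℝ → ℝ be integrable with support contained in [−1,1], ∫_{−1}^{1} K_d(x)dx = 1 and ∫_{−1}^{1} |K_d(x)|dx ≤ κ. Then for every integer N ≥ 1 and every h > 0: |T⁺_{N,c,h} − (1/N)·Σ_{i=1}^{N} 1(μ(i/N) − μ(0) > c)| ≤ ((1+κ)/N) · card{i ∈ {1,…,N} : |μ(i/N) − μ(0) − c| ≤ h}. -/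
open MeasureTheory Set

lemma change_var_aux (K : ℝ → ℝ) (a c h : ℝ) (hh : 0 < h) :
    (∫ u in Ioi c, (1 / h) * K ((a - u) / h)) = ∫ x in Iio ((a - c) / h), K x := by
  rw [← integral_indicator measurableSet_Ioi, ← integral_indicator measurableSet_Iio]
  set F : ℝ → ℝ := (Ioi c).indicator (fun u => (1 / h) * K ((a - u) / h)) with hF
  have e1 : ∀ x : ℝ, F (a - h * x) = (1 / h) * (Iio ((a - c) / h)).indicator K x := by
    intro x
    by_cases hx : x < (a - c) / h
    · have hx' : c < a - h * x := by
        rw [lt_div_iff₀ hh] at hx; nlinarith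
      have : (a - (a - h * x)) / h = x := by field_simp; ring
      simp [hF, indicator_of_mem, mem_Ioi.mpr hx', mem_Iio.mpr hx, this, mul_div_cancel_left₀ x hh.ne']
    · have hx' : ¬ (c < a - h * x) := by
        rw [not_lt] at hx ⊢
        rw [div_le_iff₀ hh] at hx; nlinarith
      simp [hF, indicator_of_notMem, mem_Ioi, hx', mem_Iio, hx]
  have e2 : (∫ x : ℝ, F (a - h * x)) = |h⁻¹| • ∫ u : ℝ, F (a - u) :=
    Measure.integral_comp_mul_left (fun u => F (a - u)) h
  have e3 : (∫ u : ℝ, F (a - u)) = ∫ u : ℝ, F u := by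
    have h1 : (∫ u : ℝ, F (a + -u)) = ∫ u : ℝ, F (a + u) :=
      integral_neg_eq_self (fun u => F (a + u)) volume
    have h2 : (∫ u : ℝ, F (a + u)) = ∫ u : ℝ, F u :=
      integral_add_left_eq_self F a
    simpa [sub_eq_add_neg] using h1.trans h2
  have e4 : (∫ x : ℝ, F (a - h * x)) = ∫ x : ℝ, (1 / h) * (Iio ((a - c) / h)).indicator K x := by
    simp_rw [e1]
  rw [e3] at e2
  rw [e4] at e2
  rw [integral_const_mul] at e2
  have habs : |h⁻¹| = h⁻¹ := abs_of_pos (inv_pos.mpr hh)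
  rw [habs, smul_eq_mul] at e2
  have : (∫ u : ℝ, F u) = h * ((1 : ℝ) / h * ∫ x : ℝ, (Iio ((a - c) / h)).indicator K x) := by
    field_simp at e2 ⊢
    linarith
  rw [this]
  field_simp

/-- the smoothed Riemann sum differs from the exact Riemann sum of the
indicator only at sample points lying in the `h`-band around the level `c`. -/
theorem smoothed_vs_exact_riemann
    (μ : ℝ → ℝ) (c : ℝ) (hc : 0 < c)
    (K_d : ℝ → ℝ) (κ : ℝ)
    (hK_int : Integrable K_d)
    (hK_supp : Function.support K_d ⊆ Icc (-1 : ℝ) 1)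
    (hK_one : (∫ x in Icc (-1 : ℝ) 1, K_d x) = 1)
    (hK_abs : (∫ x in Icc (-1 : ℝ) 1, |K_d x|) ≤ κ) :
    ∀ N : ℕ, 1 ≤ N → ∀ h : ℝ, 0 < h →
      |(1 / (N:ℝ)) * ∑ i ∈ Finset.Icc 1 N,
          (∫ u in Ioi c, (1 / h) * K_d ((μ ((i:ℝ) / (N:ℝ)) - μ 0 - u) / h)) -
        (1 / (N:ℝ)) * ∑ i ∈ Finset.Icc 1 N,
          (if μ ((i:ℝ) / (N:ℝ)) - μ 0 > c then (1:ℝ) else 0)|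
      ≤ ((1 + κ) / (N:ℝ)) *
          (((Finset.Icc 1 N).filter
            (fun i : ℕ => |μ ((i:ℝ) / (N:ℝ)) - μ 0 - c| ≤ h)).card : ℝ) := by
  intro N hN h hh
  -- total integrals
  have hK_tot : (∫ x : ℝ, K_d x) = 1 := by
    rw [← hK_one]
    exact (setIntegral_eq_integral_of_forall_compl_eq_zero
      (fun x hx => Function.notMem_support.mp (fun hs => hx (hK_supp hs)))).symm
  have hKabs_tot : (∫ x : ℝ, |K_d x|) ≤ κ := by
    rwa [setIntegral_eq_integral_of_forall_compl_eq_zero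
      (f := fun x => |K_d x|)
      (fun x hx => by
        have : K_d x = 0 := Function.notMem_support.mp (fun hs => hx (hK_supp hs))
        simp [this])] at hK_abs
  have hκ0 : (0 : ℝ) ≤ κ := le_trans (integral_nonneg fun x => abs_nonneg _) hKabs_tot
  -- pointwise bound for each i
  have key : ∀ a : ℝ,
      |(∫ u in Ioi c, (1 / h) * K_d ((a - u) / h)) - (if a > c then (1:ℝ) else 0)|
        ≤ (1 + κ) * (if |a - c| ≤ h then (1:ℝ) else 0) := by
    intro a
    rw [change_var_aux K_d a c h hh]
    set t := (a - c) / h with ht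
    by_cases hband : |a - c| ≤ h
    · have hb1 : |∫ x in Iio t, K_d x| ≤ κ := by
        calc |∫ x in Iio t, K_d x| ≤ ∫ x in Iio t, |K_d x| :=
              (by simpa [Real.norm_eq_abs] using norm_integral_le_integral_norm (μ := volume.restrict (Iio t)) K_d)
          _ ≤ ∫ x : ℝ, |K_d x| :=
              setIntegral_le_integral hK_int.abs (Filter.Eventually.of_forall fun x => abs_nonneg _)
          _ ≤ κ := hKabs_tot
      have hind : |(if a > c then (1:ℝ) else 0)| ≤ 1 := by split <;> norm_num
      calc |(∫ x in Iio t, K_d x) - (if a > c then (1:ℝ) else 0)|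
          ≤ |∫ x in Iio t, K_d x| + |(if a > c then (1:ℝ) else 0)| := abs_sub _ _
        _ ≤ κ + 1 := add_le_add hb1 hind
        _ = (1 + κ) * (if |a - c| ≤ h then (1:ℝ) else 0) := by
            rw [if_pos hband]; ring
    · rw [if_neg hband]
      rw [not_le] at hband
      rcases lt_abs.mp hband with h1 | h2
      · have ht1 : (1:ℝ) < t := (lt_div_iff₀ hh).mpr (by nlinarith)
        have hint : (∫ x in Iio t, K_d x) = 1 := by
          rw [← hK_tot]
          exact setIntegral_eq_integral_of_forall_compl_eq_zero fun x hx =>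
            Function.notMem_support.mp fun hs =>
              hx (lt_of_le_of_lt (hK_supp hs).2 ht1)
        have hac : a > c := by linarith
        simp [hint, hac]
      · have ht1 : t < -1 := by rw [ht, div_lt_iff₀ hh]; nlinarith
        have hint : (∫ x in Iio t, K_d x) = 0 := by
          have hz : EqOn K_d (fun _ => (0:ℝ)) (Iio t) := fun x hx =>
            Function.notMem_support.mp fun hs => by
              have h1 := (hK_supp hs).1
              have : x < -1 := lt_trans hx ht1
              linarith
          rw [setIntegral_congr_fun measurableSet_Iio hz]
          simp
        have hac : ¬ a > c := by push_neg; nlinarith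
        simp [hint, hac]
  -- combine over the sum
  have hNpos : (0:ℝ) < (N:ℝ) := by exact_mod_cast Nat.lt_of_lt_of_le Nat.zero_lt_one hN
  rw [← mul_sub, ← Finset.sum_sub_distrib, abs_mul, abs_of_pos (by positivity : (0:ℝ) < 1/(N:ℝ))]
  have step1 : |∑ i ∈ Finset.Icc 1 N,
      ((∫ u in Ioi c, (1 / h) * K_d ((μ ((i:ℝ) / (N:ℝ)) - μ 0 - u) / h)) -
        (if μ ((i:ℝ) / (N:ℝ)) - μ 0 > c then (1:ℝ) else 0))|
      ≤ ∑ i ∈ Finset.Icc 1 N,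
        (1 + κ) * (if |μ ((i:ℝ) / (N:ℝ)) - μ 0 - c| ≤ h then (1:ℝ) else 0) := by
    refine (Finset.abs_sum_le_sum_abs _ _).trans (Finset.sum_le_sum fun i _ => ?_)
    exact key (μ ((i:ℝ) / (N:ℝ)) - μ 0)
  have step2 : ∑ i ∈ Finset.Icc 1 N,
      (1 + κ) * (if |μ ((i:ℝ) / (N:ℝ)) - μ 0 - c| ≤ h then (1:ℝ) else 0)
      = (1 + κ) * (((Finset.Icc 1 N).filter
          (fun i : ℕ => |μ ((i:ℝ) / (N:ℝ)) - μ 0 - c| ≤ h)).card : ℝ) := by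
    rw [← Finset.mul_sum, Finset.sum_boole]
  calc (1/(N:ℝ)) * |∑ i ∈ Finset.Icc 1 N,
      ((∫ u in Ioi c, (1 / h) * K_d ((μ ((i:ℝ) / (N:ℝ)) - μ 0 - u) / h)) -
        (if μ ((i:ℝ) / (N:ℝ)) - μ 0 > c then (1:ℝ) else 0))|
      ≤ (1/(N:ℝ)) * ((1 + κ) * (((Finset.Icc 1 N).filter
          (fun i : ℕ => |μ ((i:ℝ) / (N:ℝ)) - μ 0 - c| ≤ h)).card : ℝ)) := by
        apply mul_le_mul_of_nonneg_left _ (by positivity)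
        rw [← step2]; exact step1
    _ = ((1 + κ) / (N:ℝ)) * (((Finset.Icc 1 N).filter
          (fun i : ℕ => |μ ((i:ℝ) / (N:ℝ)) - μ 0 - c| ≤ h)).card : ℝ) := by ring
end

section
/- Suppose (μ, m) has critical root structure with roots 0 < t_1 < … < t_k < 1 of orders v_1, …, v_k, and set v = max_{1 ≤ l ≤ k} v_l. Then there exist constants C > 0 and h₀ > 0 such that for every h ∈ (0, h₀]: λ({s ∈ [0,1] : |μ(s) − m| ≤ h}) ≤ C · h^{1/(v+1)}. -/
open MeasureTheory Set

/-- The extended root sequence: `t₀ = 0`, `t_{k+1} = 1`, and the given roots in between. -/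
noncomputable def extRoots (k : ℕ) (t : ℕ → ℝ) : ℕ → ℝ :=
  fun i => if i = 0 then 0 else if i ≤ k then t i else 1

/-- `(μ, m)` has critical root structure with roots `0 < t 1 < … < t k < 1` of orders
`v 1, …, v k` and gap parameter `γ = (1/2)·min_{0 ≤ i ≤ k} (t_{i+1} - t_i)`
(with the convention `t 0 = 0`, `t (k+1) = 1`). -/
structure CriticalRootStructure (μ : ℝ → ℝ) (m : ℝ) (k : ℕ) (t : ℕ → ℝ)
    (v : ℕ → ℕ) (γ : ℝ) : Prop where
  k_pos : 0 < k
  mono : ∀ i j, 1 ≤ i → i < j → j ≤ k → t i < t j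
  first_pos : 0 < t 1
  last_lt : t k < 1
  gamma_eq : γ = (1 / 2) * ((Finset.Icc 0 k).inf' (Finset.nonempty_Icc.mpr (Nat.zero_le k))
      fun i => extRoots k t (i + 1) - extRoots k t i)
  root : ∀ l, 1 ≤ l → l ≤ k → μ (t l) = m
  -- (i) μ is (v l + 1)-times differentiable on [t l - γ, t l + γ] ...
  diffble : ∀ l, 1 ≤ l → l ≤ k → ∀ j ≤ v l,
      DifferentiableOn ℝ (iteratedDerivWithin j μ (Icc (t l - γ) (t l + γ)))
        (Icc (t l - γ) (t l + γ))
  -- ... with μ^{(j)}(t l) = 0 for 1 ≤ j ≤ v l ...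
  deriv_zero : ∀ l, 1 ≤ l → l ≤ k → ∀ j, 1 ≤ j → j ≤ v l →
      iteratedDerivWithin j μ (Icc (t l - γ) (t l + γ)) (t l) = 0
  -- ... μ^{(v l + 1)}(t l) ≠ 0 ...
  deriv_ne : ∀ l, 1 ≤ l → l ≤ k →
      iteratedDerivWithin (v l + 1) μ (Icc (t l - γ) (t l + γ)) (t l) ≠ 0
  -- ... and μ^{(v l + 1)} Lipschitz continuous on [t l - γ, t l + γ].
  deriv_lip : ∀ l, 1 ≤ l → l ≤ k → ∃ C : NNReal,
      LipschitzOnWith C (iteratedDerivWithin (v l + 1) μ (Icc (t l - γ) (t l + γ)))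
        (Icc (t l - γ) (t l + γ))
  -- (ii) μ strictly monotone on [t l - γ, t l] and on [t l, t l + γ].
  mono_left : ∀ l, 1 ≤ l → l ≤ k →
      StrictMonoOn μ (Icc (t l - γ) (t l)) ∨ StrictAntiOn μ (Icc (t l - γ) (t l))
  mono_right : ∀ l, 1 ≤ l → l ≤ k →
      StrictMonoOn μ (Icc (t l) (t l + γ)) ∨ StrictAntiOn μ (Icc (t l) (t l + γ))
  -- (iii) |μ - m| bounded away from 0 outside the γ-neighbourhoods of the roots.
  sep : ∃ ε > 0, ∀ s ∈ Icc (0:ℝ) 1,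
      (∀ l, 1 ≤ l → l ≤ k → γ < |s - t l|) → ε ≤ |μ s - m|

lemma taylor_lower (μ : ℝ → ℝ) (m c γ : ℝ) (n : ℕ) (hγ : 0 < γ)
    (hdiff : ∀ j ≤ n, DifferentiableOn ℝ (iteratedDerivWithin j μ (Icc (c-γ) (c+γ))) (Icc (c-γ) (c+γ)))
    (h0 : μ c = m)
    (hz : ∀ j, 1 ≤ j → j ≤ n → iteratedDerivWithin j μ (Icc (c-γ) (c+γ)) c = 0)
    (ha : iteratedDerivWithin (n+1) μ (Icc (c-γ) (c+γ)) c ≠ 0)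
    (hlip : ∃ L : NNReal, LipschitzOnWith L (iteratedDerivWithin (n+1) μ (Icc (c-γ) (c+γ))) (Icc (c-γ) (c+γ))) :
    ∃ c' > 0, ∃ δ, 0 < δ ∧ δ ≤ γ ∧ ∀ x ∈ Icc (c-γ) (c+γ), |x - c| ≤ δ →
      c' * |x - c| ^ (n+1) ≤ |μ x - m| := by
  obtain ⟨L, hL⟩ := hlip
  set S := Icc (c-γ) (c+γ) with hS
  have hcγ : c - γ < c + γ := by linarith
  have hud : UniqueDiffOn ℝ S := uniqueDiffOn_Icc hcγ
  have hcS : c ∈ S := by constructor <;> simp <;> linarith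
  set a := iteratedDerivWithin (n+1) μ S c with haa
  set K : ℝ := (L : ℝ) + 1 with hK
  have hK0 : 0 < K := by positivity
  -- uIcc subset
  have huIcc : ∀ x ∈ S, uIcc c x ⊆ S := by
    intro x hx
    rw [Set.uIcc]
    exact Icc_subset_Icc (le_min hcS.1 hx.1) (max_le hcS.2 hx.2)
  -- polynomial derivative helper
  have hpoly : ∀ (i : ℕ) (x : ℝ), HasDerivAt (fun y => a * (y - c)^(i+1) / (i+1).factorial)
      (a * (x - c)^i / i.factorial) x := by
    intro i x
    have h1 : HasDerivAt (fun y : ℝ => y - c) 1 x := (hasDerivAt_id x).sub_const c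
    have h2 := (h1.pow (i+1)).const_mul a |>.div_const ((i+1).factorial : ℝ)
    refine h2.congr_deriv ?_
    rw [Nat.add_sub_cancel]
    push_cast
    have : ((i+1).factorial : ℝ) = (i+1) * i.factorial := by
      rw [Nat.factorial_succ]; push_cast; ring
    rw [this]
    have hfi : (i.factorial : ℝ) ≠ 0 := Nat.cast_ne_zero.mpr i.factorial_ne_zero
    field_simp
  -- main claim by induction
  have claim : ∀ i, i ≤ n → ∀ x ∈ S,
      |iteratedDerivWithin (n+1-i) μ S x - a * (x - c)^i / i.factorial| ≤ K * |x - c|^(i+1) := by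
    intro i
    induction i with
    | zero =>
      intro _ x hx
      simp only [Nat.sub_zero, pow_zero, mul_one, Nat.factorial_zero, Nat.cast_one, div_one,
        pow_one]
      have := hL.dist_le_mul x hx c hcS
      rw [Real.dist_eq, Real.dist_eq] at this
      calc |iteratedDerivWithin (n+1) μ S x - a| ≤ L * |x - c| := this
        _ ≤ K * |x - c| ^ (0+1) := by
          rw [zero_add, pow_one]
          apply mul_le_mul_of_nonneg_right _ (abs_nonneg _)
          simp [hK]
    | succ i ih =>
      intro hi x hx
      have hin : i ≤ n := le_of_lt (Nat.lt_of_succ_le hi)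
      set j := n - i with hj
      have hj1 : 1 ≤ j := by omega
      have hjn : j ≤ n := by omega
      have hjsucc : j + 1 = n + 1 - i := by omega
      have hjeq : n + 1 - (i+1) = j := by omega
      rw [hjeq]
      set g : ℝ → ℝ := fun y => iteratedDerivWithin j μ S y - a * (y - c)^(i+1) / (i+1).factorial with hg
      have hgc : g c = 0 := by
        simp [hg, hz j hj1 hjn]
      have hgd : ∀ u ∈ S, HasDerivWithinAt g
          (iteratedDerivWithin (j+1) μ S u - a * (u - c)^i / i.factorial) S u := by
        intro u hu
        have h1 : HasDerivWithinAt (iteratedDerivWithin j μ S)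
            (iteratedDerivWithin (j+1) μ S u) S u := by
          have := (hdiff j hjn u hu).hasDerivWithinAt
          rw [iteratedDerivWithin_succ]
          exact this
        exact h1.sub ((hpoly i u).hasDerivWithinAt)
      -- MVT on uIcc c x
      have hsub := huIcc x hx
      have key : |g x - g c| ≤ (K * |x - c|^(i+1)) * |x - c| := by
        have := Convex.norm_image_sub_le_of_norm_hasDerivWithin_le
          (f := g) (f' := fun u => iteratedDerivWithin (j+1) μ S u - a * (u - c)^i / i.factorial)
          (s := uIcc c x) (C := K * |x - c|^(i+1))
          (fun u hu => (hgd u (hsub hu)).mono hsub)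
          (fun u hu => by
            have hub : |u - c| ≤ |x - c| := by
              rw [abs_sub_le_iff]
              rcases le_total c x with h | h
              · rw [uIcc_of_le h] at hu
                constructor <;> [skip; skip] <;>
                  · rcases hu with ⟨h1, h2⟩
                    rw [abs_of_nonneg (by linarith)]
                    linarith
              · rw [uIcc_of_ge h] at hu
                rcases hu with ⟨h1, h2⟩
                rw [abs_of_nonpos (by linarith)]
                constructor <;> linarith
            calc ‖iteratedDerivWithin (j+1) μ S u - a * (u - c)^i / i.factorial‖
                ≤ K * |u - c|^(i+1) := by
                  rw [← hjsucc] at ih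
                  exact ih hin u (hsub hu)
              _ ≤ K * |x - c|^(i+1) := by
                  apply mul_le_mul_of_nonneg_left _ hK0.le
                  exact pow_le_pow_left₀ (abs_nonneg _) hub _)
          (convex_uIcc c x) left_mem_uIcc right_mem_uIcc
        simpa [Real.norm_eq_abs] using this
      rw [hgc, sub_zero] at key
      calc |iteratedDerivWithin j μ S x - a * (x - c)^(i+1) / (i+1).factorial|
          = |g x| := rfl
        _ ≤ (K * |x - c|^(i+1)) * |x - c| := key
        _ = K * |x - c|^(i+1+1) := by ring
  -- final step: j = 0
  have final : ∀ x ∈ S, |μ x - m - a * (x - c)^(n+1) / (n+1).factorial| ≤ K * |x - c|^(n+2) := by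
    intro x hx
    set g : ℝ → ℝ := fun y => μ y - m - a * (y - c)^(n+1) / (n+1).factorial with hg
    have hgc : g c = 0 := by simp [hg, h0]
    have hmu : DifferentiableOn ℝ μ S := by
      have := hdiff 0 (Nat.zero_le n)
      simpa [iteratedDerivWithin_zero] using this
    have hgd : ∀ u ∈ S, HasDerivWithinAt g
        (iteratedDerivWithin 1 μ S u - a * (u - c)^n / n.factorial) S u := by
      intro u hu
      have h1 : HasDerivWithinAt μ (iteratedDerivWithin 1 μ S u) S u := by
        rw [iteratedDerivWithin_one]
        exact (hmu u hu).hasDerivWithinAt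
      exact (h1.sub_const m).sub ((hpoly n u).hasDerivWithinAt)
    have hcl := claim n le_rfl
    rw [show n + 1 - n = 1 by omega] at hcl
    have hsub := huIcc x hx
    have key : |g x - g c| ≤ (K * |x - c|^(n+1)) * |x - c| := by
      have := Convex.norm_image_sub_le_of_norm_hasDerivWithin_le
        (f := g) (f' := fun u => iteratedDerivWithin 1 μ S u - a * (u - c)^n / n.factorial)
        (s := uIcc c x) (C := K * |x - c|^(n+1))
        (fun u hu => (hgd u (hsub hu)).mono hsub)
        (fun u hu => by
          have hub : |u - c| ≤ |x - c| := by
            rw [abs_sub_le_iff]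
            rcases le_total c x with h | h
            · rw [uIcc_of_le h] at hu
              constructor <;> [skip; skip] <;>
                · rcases hu with ⟨h1, h2⟩
                  rw [abs_of_nonneg (by linarith)]
                  linarith
            · rw [uIcc_of_ge h] at hu
              rcases hu with ⟨h1, h2⟩
              rw [abs_of_nonpos (by linarith)]
              constructor <;> linarith
          calc ‖iteratedDerivWithin 1 μ S u - a * (u - c)^n / n.factorial‖
              ≤ K * |u - c|^(n+1) := hcl u (hsub hu)
            _ ≤ K * |x - c|^(n+1) := by
                apply mul_le_mul_of_nonneg_left _ hK0.le
                exact pow_le_pow_left₀ (abs_nonneg _) hub _)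
        (convex_uIcc c x) left_mem_uIcc right_mem_uIcc
      simpa [Real.norm_eq_abs] using this
    rw [hgc, sub_zero] at key
    calc |μ x - m - a * (x - c)^(n+1) / (n+1).factorial| = |g x| := rfl
      _ ≤ (K * |x - c|^(n+1)) * |x - c| := key
      _ = K * |x - c|^(n+2) := by ring
  -- conclusion
  refine ⟨|a| / (2 * (n+1).factorial), by positivity, min γ (|a| / (2 * (n+1).factorial) / K),
    lt_min hγ (by positivity), min_le_left _ _, ?_⟩
  intro x hx hxd
  set c' := |a| / (2 * (n+1).factorial) with hc'
  have hc'0 : 0 < c' := by positivity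
  have hP : |a * (x - c)^(n+1) / (n+1).factorial| = 2 * c' * |x - c|^(n+1) := by
    rw [abs_div, abs_mul, abs_pow, Nat.abs_cast, hc']
    field_simp
  have hfx := final x hx
  have htri : |a * (x - c)^(n+1) / (n+1).factorial| - |μ x - m - a * (x - c)^(n+1) / (n+1).factorial| ≤ |μ x - m| := by
    have := abs_sub_abs_le_abs_sub (a * (x - c)^(n+1) / (n+1).factorial) (a * (x - c)^(n+1) / (n+1).factorial - (μ x - m))
    rw [abs_sub_comm] at this
    simp only [sub_sub_cancel] at this
    linarith [this]
  have hxd' : |x - c| ≤ c' / K := le_trans hxd (min_le_right _ _)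
  have hbound : K * |x - c|^(n+2) ≤ c' * |x - c|^(n+1) := by
    have h1 : K * |x - c|^(n+2) = (K * |x - c|) * |x - c|^(n+1) := by ring
    rw [h1]
    apply mul_le_mul_of_nonneg_right _ (pow_nonneg (abs_nonneg _) _)
    calc K * |x - c| ≤ K * (c' / K) := mul_le_mul_of_nonneg_left hxd' hK0.le
      _ = c' := by field_simp
  rw [hP] at htri
  clear_value c'
  have hfin : |μ x - m - a * (x - c)^(n+1) / (n+1).factorial| ≤ c' * |x - c|^(n+1) :=
    le_trans hfx hbound
  linarith


lemma root_band (μ : ℝ → ℝ) (m c γ : ℝ) (n : ℕ) (hγ : 0 < γ)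
    (hm : μ c = m)
    (hlow : ∃ c' > 0, ∃ δ, 0 < δ ∧ δ ≤ γ ∧ ∀ x ∈ Icc (c-γ) (c+γ), |x - c| ≤ δ →
      c' * |x - c| ^ (n+1) ≤ |μ x - m|)
    (hml : StrictMonoOn μ (Icc (c-γ) c) ∨ StrictAntiOn μ (Icc (c-γ) c))
    (hmr : StrictMonoOn μ (Icc c (c+γ)) ∨ StrictAntiOn μ (Icc c (c+γ))) :
    ∃ C > 0, ∃ e > 0, ∀ h, 0 < h → h ≤ e → ∀ x ∈ Icc (c-γ) (c+γ), |μ x - m| ≤ h →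
      |x - c| ≤ C * h ^ ((1:ℝ)/(n+1)) := by
  obtain ⟨c', hc', δ, hδ0, hδγ, hlow⟩ := hlow
  refine ⟨(1/c') ^ ((1:ℝ)/(n+1)), Real.rpow_pos_of_pos (by positivity) _,
    c' * δ^(n+1), by positivity, ?_⟩
  intro h hh0 hhe x hx hband
  have hn1 : ((n:ℝ) + 1) ≠ 0 := by positivity
  -- key: the value at c ± δ is at least e = c' * δ^(n+1)
  have hvr : c' * δ^(n+1) ≤ |μ (c + δ) - m| := by
    have := hlow (c + δ) ⟨by linarith, by linarith⟩ (by rw [add_sub_cancel_left, abs_of_pos hδ0])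
    rwa [add_sub_cancel_left, abs_of_pos hδ0] at this
  have hvl : c' * δ^(n+1) ≤ |μ (c - δ) - m| := by
    have := hlow (c - δ) ⟨by linarith, by linarith⟩
      (by rw [sub_sub_cancel_left, abs_neg, abs_of_pos hδ0])
    rwa [sub_sub_cancel_left, abs_neg, abs_of_pos hδ0] at this
  -- x must be within δ of c
  have hxδ : |x - c| ≤ δ := by
    by_contra hcon
    push_neg at hcon
    rcases abs_cases (x - c) with ⟨he, _⟩ | ⟨he, _⟩
    · -- x > c + δ
      have hx1 : c + δ < x := by rw [he] at hcon; linarith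
      have hmem1 : c + δ ∈ Icc c (c+γ) := ⟨by linarith, by linarith⟩
      have hmem2 : x ∈ Icc c (c+γ) := ⟨by linarith, hx.2⟩
      have hmemc : c ∈ Icc c (c+γ) := ⟨le_refl _, by linarith⟩
      rcases hmr with hmono | hanti
      · have h1 : μ c < μ (c + δ) := hmono hmemc hmem1 (by linarith)
        have h2 : μ (c + δ) < μ x := hmono hmem1 hmem2 hx1
        rw [hm] at h1
        rw [abs_of_pos (by linarith)] at hvr
        have : h < |μ x - m| := by rw [abs_of_pos (by linarith)]; linarith
        linarith
      · have h1 : μ (c + δ) < μ c := hanti hmemc hmem1 (by linarith)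
        have h2 : μ x < μ (c + δ) := hanti hmem1 hmem2 hx1
        rw [hm] at h1
        rw [abs_of_neg (by linarith), neg_sub] at hvr
        have : h < |μ x - m| := by rw [abs_of_neg (by linarith), neg_sub]; linarith
        linarith
    · -- x < c - δ
      have hx1 : x < c - δ := by rw [he] at hcon; linarith
      have hmem1 : c - δ ∈ Icc (c-γ) c := ⟨by linarith, by linarith⟩
      have hmem2 : x ∈ Icc (c-γ) c := ⟨hx.1, by linarith⟩
      have hmemc : c ∈ Icc (c-γ) c := ⟨by linarith, le_refl _⟩
      rcases hml with hmono | hanti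
      · have h1 : μ (c - δ) < μ c := hmono hmem1 hmemc (by linarith)
        have h2 : μ x < μ (c - δ) := hmono hmem2 hmem1 hx1
        rw [hm] at h1
        rw [abs_of_neg (by linarith), neg_sub] at hvl
        have : h < |μ x - m| := by rw [abs_of_neg (by linarith), neg_sub]; linarith
        linarith
      · have h1 : μ c < μ (c - δ) := hanti hmem1 hmemc (by linarith)
        have h2 : μ (c - δ) < μ x := hanti hmem2 hmem1 hx1
        rw [hm] at h1
        rw [abs_of_pos (by linarith)] at hvl
        have : h < |μ x - m| := by rw [abs_of_pos (by linarith)]; linarith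
        linarith
  -- now the Taylor lower bound applies
  have h1 : c' * |x - c| ^ (n+1) ≤ h := le_trans (hlow x hx hxδ) hband
  have h2 : |x - c| ^ (n+1) ≤ h / c' := by
    rw [le_div_iff₀ hc']
    linarith [h1]
  have h3 : |x - c| = (|x - c| ^ (n+1)) ^ ((1:ℝ)/(n+1)) := by
    rw [← Real.rpow_natCast |x - c| (n+1), ← Real.rpow_mul (abs_nonneg _)]
    push_cast
    rw [mul_one_div, div_self hn1, Real.rpow_one]
  rw [h3]
  calc (|x - c| ^ (n+1)) ^ ((1:ℝ)/(n+1)) ≤ (h / c') ^ ((1:ℝ)/(n+1)) :=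
        Real.rpow_le_rpow (pow_nonneg (abs_nonneg _) _) h2 (by positivity)
    _ = (1/c') ^ ((1:ℝ)/(n+1)) * h ^ ((1:ℝ)/(n+1)) := by
        rw [div_eq_mul_one_div, Real.mul_rpow hh0.le (by positivity), mul_comm]

/-- Lemma B.1, measure bound: the Lebesgue measure of the `h`-band of the
level set is `O(h^{1/(v+1)})`, where `v` is the maximal critical order. -/
theorem level_set_band_measure_bound
    (μ : ℝ → ℝ) (m : ℝ) (k : ℕ) (t : ℕ → ℝ) (v : ℕ → ℕ) (γ : ℝ)
    (hcrs : CriticalRootStructure μ m k t v γ) :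
    ∃ C > 0, ∃ h₀ > 0, ∀ h ∈ Ioc (0:ℝ) h₀,
      (volume {s ∈ Icc (0:ℝ) 1 | |μ s - m| ≤ h}).toReal ≤
        C * h ^ ((1:ℝ) / ((((Finset.Icc 1 k).sup v : ℕ) : ℝ) + 1)) := by
  -- γ > 0
  have hγ : 0 < γ := by
    rw [hcrs.gamma_eq]
    have hpos : ∀ i ∈ Finset.Icc 0 k, 0 < extRoots k t (i + 1) - extRoots k t i := by
      intro i hi
      simp only [Finset.mem_Icc] at hi
      rcases Nat.eq_zero_or_pos i with rfl | hi1
      · have h1 : extRoots k t 0 = 0 := by simp [extRoots]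
        have h2 : extRoots k t 1 = t 1 := by
          simp [extRoots, Nat.one_le_iff_ne_zero.mp hcrs.k_pos, hcrs.k_pos]
        rw [h1, h2]
        linarith [hcrs.first_pos]
      · rcases eq_or_lt_of_le hi.2 with rfl | hik
        · have h1 : extRoots i t i = t i := by
            simp [extRoots, Nat.pos_iff_ne_zero.mp hi1]
          have h2 : extRoots i t (i + 1) = 1 := by
            simp [extRoots]
          rw [h1, h2]
          linarith [hcrs.last_lt]
        · have h1 : extRoots k t i = t i := by
            simp [extRoots, Nat.pos_iff_ne_zero.mp hi1, le_of_lt hik]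
          have h2 : extRoots k t (i + 1) = t (i + 1) := by
            simp [extRoots, Nat.succ_le_of_lt hik]
          rw [h1, h2]
          linarith [hcrs.mono i (i + 1) hi1 (Nat.lt_succ_self i) (Nat.succ_le_of_lt hik)]
    have := (Finset.lt_inf'_iff (Finset.nonempty_Icc.mpr (Nat.zero_le k))
      (f := fun i => extRoots k t (i + 1) - extRoots k t i) (a := 0)).mpr hpos
    linarith
  obtain ⟨ε, hε, hsep⟩ := hcrs.sep
  -- per-root bound
  have key : ∀ l, 1 ≤ l → l ≤ k → ∃ C > 0, ∃ e > 0, ∀ h, 0 < h → h ≤ e →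
      ∀ x ∈ Icc (t l - γ) (t l + γ), |μ x - m| ≤ h →
      |x - t l| ≤ C * h ^ ((1:ℝ)/(v l + 1)) := by
    intro l hl1 hlk
    exact root_band μ m (t l) γ (v l) hγ (hcrs.root l hl1 hlk)
      (taylor_lower μ m (t l) γ (v l) hγ (hcrs.diffble l hl1 hlk) (hcrs.root l hl1 hlk)
        (hcrs.deriv_zero l hl1 hlk) (hcrs.deriv_ne l hl1 hlk) (hcrs.deriv_lip l hl1 hlk))
      (hcrs.mono_left l hl1 hlk) (hcrs.mono_right l hl1 hlk)
  choose! C hC e he hkey using key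
  have hne : (Finset.Icc 1 k).Nonempty := Finset.nonempty_Icc.mpr hcrs.k_pos
  set V : ℕ := (Finset.Icc 1 k).sup v with hV
  set β : ℝ := (1:ℝ) / ((V : ℝ) + 1) with hβ
  set Csum : ℝ := ∑ l ∈ Finset.Icc 1 k, 2 * C l with hCsum
  have hCsum0 : 0 < Csum := by
    apply Finset.sum_pos _ hne
    intro l hl
    simp only [Finset.mem_Icc] at hl
    have := hC l hl.1 hl.2
    linarith
  refine ⟨Csum, hCsum0, min 1 (min (ε/2) ((Finset.Icc 1 k).inf' hne e)),
    lt_min one_pos (lt_min (by linarith) ?_), ?_⟩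
  · rw [Finset.lt_inf'_iff]
    intro l hl
    simp only [Finset.mem_Icc] at hl
    exact he l hl.1 hl.2
  intro h hh
  obtain ⟨hh0, hh1⟩ := hh
  have hhle1 : h ≤ 1 := le_trans hh1 (min_le_left _ _)
  have hhleε : h ≤ ε / 2 := le_trans hh1 (le_trans (min_le_right _ _) (min_le_left _ _))
  have hhlee : ∀ l, 1 ≤ l → l ≤ k → h ≤ e l := by
    intro l hl1 hlk
    refine le_trans hh1 (le_trans (min_le_right _ _) (le_trans (min_le_right _ _) ?_))
    exact Finset.inf'_le _ (Finset.mem_Icc.mpr ⟨hl1, hlk⟩)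
  -- covering
  have hcover : {s ∈ Icc (0:ℝ) 1 | |μ s - m| ≤ h} ⊆
      ⋃ l ∈ Finset.Icc 1 k, Icc (t l - C l * h ^ ((1:ℝ)/(v l + 1)))
        (t l + C l * h ^ ((1:ℝ)/(v l + 1))) := by
    intro s hs
    obtain ⟨hs01, hsband⟩ := hs
    have : ¬ (∀ l, 1 ≤ l → l ≤ k → γ < |s - t l|) := by
      intro hcon
      have := hsep s hs01 hcon
      linarith
    push_neg at this
    obtain ⟨l, hl1, hlk, hlγ⟩ := this
    have hmem : s ∈ Icc (t l - γ) (t l + γ) := by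
      rcases abs_le.mp hlγ with ⟨ha1, ha2⟩
      exact ⟨by linarith, by linarith⟩
    have := hkey l hl1 hlk h hh0 (hhlee l hl1 hlk) s hmem hsband
    rcases abs_le.mp this with ⟨hb1, hb2⟩
    refine mem_biUnion (Finset.mem_Icc.mpr ⟨hl1, hlk⟩) ⟨by linarith, by linarith⟩
  -- measure bound
  have hrpos : ∀ l ∈ Finset.Icc 1 k, 0 ≤ 2 * (C l * h ^ ((1:ℝ)/(v l + 1))) := by
    intro l hl
    simp only [Finset.mem_Icc] at hl
    have h1 := hC l hl.1 hl.2
    have h2 : (0:ℝ) ≤ h ^ ((1:ℝ)/(v l + 1)) := Real.rpow_nonneg hh0.le _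
    positivity
  have hmeas : volume {s ∈ Icc (0:ℝ) 1 | |μ s - m| ≤ h} ≤
      ENNReal.ofReal (∑ l ∈ Finset.Icc 1 k, 2 * (C l * h ^ ((1:ℝ)/(v l + 1)))) := by
    calc volume {s ∈ Icc (0:ℝ) 1 | |μ s - m| ≤ h}
        ≤ volume (⋃ l ∈ Finset.Icc 1 k, Icc (t l - C l * h ^ ((1:ℝ)/(v l + 1)))
            (t l + C l * h ^ ((1:ℝ)/(v l + 1)))) := measure_mono hcover
      _ ≤ ∑ l ∈ Finset.Icc 1 k, volume (Icc (t l - C l * h ^ ((1:ℝ)/(v l + 1)))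
            (t l + C l * h ^ ((1:ℝ)/(v l + 1)))) := measure_biUnion_finset_le _ _
      _ ≤ ∑ l ∈ Finset.Icc 1 k, ENNReal.ofReal (2 * (C l * h ^ ((1:ℝ)/(v l + 1)))) := by
          apply Finset.sum_le_sum
          intro l hl
          rw [Real.volume_Icc]
          apply le_of_eq
          congr 1
          ring
      _ = ENNReal.ofReal (∑ l ∈ Finset.Icc 1 k, 2 * (C l * h ^ ((1:ℝ)/(v l + 1)))) :=
          (ENNReal.ofReal_sum_of_nonneg hrpos).symm
  have h2 := ENNReal.toReal_le_of_le_ofReal (Finset.sum_nonneg hrpos) hmeas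
  refine le_trans h2 ?_
  have hterm : ∀ l ∈ Finset.Icc 1 k, 2 * (C l * h ^ ((1:ℝ)/(v l + 1))) ≤ 2 * C l * h ^ β := by
    intro l hl
    simp only [Finset.mem_Icc] at hl
    have hvl : v l ≤ V := Finset.le_sup (f := v) (Finset.mem_Icc.mpr hl)
    have hexp : β ≤ (1:ℝ)/(v l + 1) := by
      rw [hβ]
      apply one_div_le_one_div_of_le (by positivity)
      have : ((v l : ℝ)) ≤ (V : ℝ) := by exact_mod_cast hvl
      linarith
    have hmono := Real.rpow_le_rpow_of_exponent_ge hh0 hhle1 hexp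
    have hCl := hC l hl.1 hl.2
    calc 2 * (C l * h ^ ((1:ℝ)/(v l + 1))) ≤ 2 * (C l * h ^ β) := by
          apply mul_le_mul_of_nonneg_left _ (by norm_num)
          exact mul_le_mul_of_nonneg_left hmono hCl.le
      _ = 2 * C l * h ^ β := by ring
  calc ∑ l ∈ Finset.Icc 1 k, 2 * (C l * h ^ ((1:ℝ)/(v l + 1)))
      ≤ ∑ l ∈ Finset.Icc 1 k, 2 * C l * h ^ β := Finset.sum_le_sum hterm
    _ = Csum * h ^ β := by rw [hCsum, Finset.sum_mul]
end

section
/- Suppose (μ, m) has critical root structure with roots 0 < t_1 < … < t_k < 1 of orders v_1, …, v_k. Then there exist constants M > 0 and h₀ > 0 such that for every h ∈ (0, h₀]: {s ∈ [0,1] : |μ(s) − m| ≤ h} = ⋃_{l=1}^{k} B_{h,l,M}, where B_{h,l,M} = {s ∈ [0,1] : |s − t_l|^{v_l+1} ≤ M·h and |μ(s) − m| ≤ h}. -/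
open MeasureTheory Set

lemma eqOn_itdw_subset {f : ℝ → ℝ} {s₁ s₂ : Set ℝ}
    (h12 : s₂ ⊆ s₁) (hu2 : UniqueDiffOn ℝ s₂) :
    ∀ n : ℕ, (∀ j, j < n → DifferentiableOn ℝ (iteratedDerivWithin j f s₁) s₁) →
      Set.EqOn (iteratedDerivWithin n f s₂) (iteratedDerivWithin n f s₁) s₂ := by
  intro n
  induction n with
  | zero => intro _ x hx; simp [iteratedDerivWithin_zero]
  | succ n ih =>
    intro hd x hx
    have ihe := ih (fun j hj => hd j (hj.trans (Nat.lt_succ_self n)))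
    rw [iteratedDerivWithin_succ,
      derivWithin_congr ihe (ihe hx)]
    have h1 : HasDerivWithinAt (iteratedDerivWithin n f s₁)
        (derivWithin (iteratedDerivWithin n f s₁) s₁ x) s₂ x :=
      ((hd n (Nat.lt_succ_self n)) x (h12 hx)).hasDerivWithinAt.mono h12
    rw [h1.derivWithin (hu2 x hx), iteratedDerivWithin_succ]

lemma itdw_reflect {f : ℝ → ℝ} {a b : ℝ} (hab : a < b) (c : ℝ) :
    ∀ n : ℕ,
      (∀ j, j < n → DifferentiableOn ℝ (iteratedDerivWithin j f (Icc (c - b) (c - a)))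
        (Icc (c - b) (c - a))) →
      ∀ x ∈ Icc a b,
        iteratedDerivWithin n (fun y => f (c - y)) (Icc a b) x
          = (-1 : ℝ) ^ n * iteratedDerivWithin n f (Icc (c - b) (c - a)) (c - x) := by
  intro n
  induction n with
  | zero => intro _ x hx; simp [iteratedDerivWithin_zero]
  | succ n ih =>
    intro hd x hx
    have hab' : c - b < c - a := by linarith
    have hx' : c - x ∈ Icc (c - b) (c - a) := ⟨by linarith [hx.2], by linarith [hx.1]⟩
    have ihe : Set.EqOn (iteratedDerivWithin n (fun y => f (c - y)) (Icc a b))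
        (fun y => (-1 : ℝ) ^ n * iteratedDerivWithin n f (Icc (c - b) (c - a)) (c - y))
        (Icc a b) := fun y hy =>
      ih (fun j hj => hd j (hj.trans (Nat.lt_succ_self n))) y hy
    rw [iteratedDerivWithin_succ,
      derivWithin_congr ihe (ihe hx)]
    set F := iteratedDerivWithin n f (Icc (c - b) (c - a)) with hF
    have hdF : HasDerivWithinAt F (derivWithin F (Icc (c - b) (c - a)) (c - x))
        (Icc (c - b) (c - a)) (c - x) :=
      ((hd n (Nat.lt_succ_self n)) (c - x) hx').hasDerivWithinAt
    have hneg : HasDerivWithinAt (fun y : ℝ => c - y) (-1) (Icc a b) x :=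
      ((hasDerivAt_id x).const_sub c).hasDerivWithinAt
    have hmaps : MapsTo (fun y : ℝ => c - y) (Icc a b) (Icc (c - b) (c - a)) := by
      intro y hy
      exact ⟨show c - b ≤ c - y by linarith [hy.2], show c - y ≤ c - a by linarith [hy.1]⟩
    have hcomp : HasDerivWithinAt (fun y => F (c - y))
        (derivWithin F (Icc (c - b) (c - a)) (c - x) * (-1)) (Icc a b) x :=
      HasDerivWithinAt.comp x hdF hneg hmaps
    have hcm : HasDerivWithinAt (fun y => (-1 : ℝ) ^ n * F (c - y))
        ((-1 : ℝ) ^ n * (derivWithin F (Icc (c - b) (c - a)) (c - x) * (-1))) (Icc a b) x :=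
      hcomp.const_mul _
    rw [hcm.derivWithin ((uniqueDiffOn_Icc hab) x hx),
      iteratedDerivWithin_succ]
    ring

open Nat in
lemma key_right {μ : ℝ → ℝ} {m T γ : ℝ} {n : ℕ} (hγ : 0 < γ) (hroot : μ T = m)
    (hdiff : ∀ j ≤ n, DifferentiableOn ℝ
      (iteratedDerivWithin j μ (Icc (T - γ) (T + γ))) (Icc (T - γ) (T + γ)))
    (hzero : ∀ j, 1 ≤ j → j ≤ n →
      iteratedDerivWithin j μ (Icc (T - γ) (T + γ)) T = 0)
    {s : ℝ} (hs : T < s) (hsγ : s ≤ T + γ) :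
    ∃ x' ∈ Ioo T s, μ s - m =
      iteratedDerivWithin (n + 1) μ (Icc (T - γ) (T + γ)) x' * (s - T) ^ (n + 1) / (n + 1)! := by
  have hU : Icc T s ⊆ Icc (T - γ) (T + γ) :=
    Icc_subset_Icc (by linarith) hsγ
  have hu2 : UniqueDiffOn ℝ (Icc T s) := uniqueDiffOn_Icc hs
  have hE : ∀ j, j ≤ n + 1 → Set.EqOn (iteratedDerivWithin j μ (Icc T s))
      (iteratedDerivWithin j μ (Icc (T - γ) (T + γ))) (Icc T s) := fun j hj =>
    eqOn_itdw_subset hU hu2 j (fun j' hj' => hdiff j' (by omega))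
  have hf : ContDiffOn ℝ n μ (Icc T s) := by
    apply contDiffOn_of_differentiableOn_deriv
    intro j hj
    have hjn : j ≤ n := by exact_mod_cast hj
    exact ((hdiff j hjn).mono hU).congr (fun x hx => hE j (by omega) hx)
  have hf' : DifferentiableOn ℝ (iteratedDerivWithin n μ (Icc T s)) (Ioo T s) := by
    refine ((hdiff n le_rfl).mono (fun x hx => hU (Ioo_subset_Icc_self hx))).congr ?_
    exact fun x hx => hE n (by omega) (Ioo_subset_Icc_self hx)
  have hf2 : ContDiffOn ℝ n μ (uIcc T s) := by rwa [uIcc_of_le hs.le]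
  have hf2' : DifferentiableOn ℝ (iteratedDerivWithin n μ (uIcc T s)) (uIoo T s) := by
    rwa [uIcc_of_le hs.le, uIoo_of_le hs.le]
  obtain ⟨x', hx', heq⟩ := taylor_mean_remainder_lagrange hs.ne hf2 hf2'
  rw [uIcc_of_le hs.le] at heq
  rw [uIoo_of_le hs.le] at hx'
  refine ⟨x', hx', ?_⟩
  have htay : taylorWithinEval μ n (Icc T s) T s = m := by
    rw [taylor_within_apply]
    rw [Finset.sum_eq_single_of_mem 0 (Finset.mem_range.mpr (by omega))]
    · simp [hE 0 (by omega) (left_mem_Icc.mpr hs.le), hroot]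
    · intro j hj hj0
      have hjn : j ≤ n := Nat.lt_succ_iff.mp (Finset.mem_range.mp hj)
      rw [hE j (by omega) (left_mem_Icc.mpr hs.le), hzero j (by omega) hjn]
      simp
  rw [htay] at heq
  rw [heq, hE (n + 1) le_rfl (Ioo_subset_Icc_self hx')]

open Nat in
lemma key_lower {μ : ℝ → ℝ} {m T γ : ℝ} {n : ℕ} (hγ : 0 < γ) (hroot : μ T = m)
    (hdiff : ∀ j ≤ n, DifferentiableOn ℝ
      (iteratedDerivWithin j μ (Icc (T - γ) (T + γ))) (Icc (T - γ) (T + γ)))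
    (hzero : ∀ j, 1 ≤ j → j ≤ n →
      iteratedDerivWithin j μ (Icc (T - γ) (T + γ)) T = 0)
    (hne : iteratedDerivWithin (n + 1) μ (Icc (T - γ) (T + γ)) T ≠ 0)
    (hlip : ∃ C : NNReal, LipschitzOnWith C
      (iteratedDerivWithin (n + 1) μ (Icc (T - γ) (T + γ))) (Icc (T - γ) (T + γ))) :
    ∃ c > (0:ℝ), ∃ δ : ℝ, 0 < δ ∧ δ ≤ γ ∧
      ∀ s, |s - T| ≤ δ → c * |s - T| ^ (n + 1) ≤ |μ s - m| := by
  obtain ⟨C, hC⟩ := hlip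
  set S := Icc (T - γ) (T + γ) with hS
  set D := iteratedDerivWithin (n + 1) μ S with hD
  set A := |D T| with hA
  have hApos : 0 < A := abs_pos.mpr hne
  have hTS : T ∈ S := ⟨by linarith, by linarith⟩
  set δ := min γ (A / (2 * ((C : ℝ) + 1))) with hδ
  have hδpos : 0 < δ := lt_min hγ (by positivity)
  have hδγ : δ ≤ γ := min_le_left _ _
  have hfact : (0:ℝ) < (n + 1)! := by exact_mod_cast (n + 1).factorial_pos
  have hbig : ∀ y ∈ S, |y - T| ≤ δ → A / 2 ≤ |D y| := by
    intro y hy hyd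
    have h1 : dist (D y) (D T) ≤ (C : ℝ) * dist y T := hC.dist_le_mul y hy T hTS
    rw [Real.dist_eq, Real.dist_eq] at h1
    have h2 : (C : ℝ) * |y - T| ≤ (C : ℝ) * (A / (2 * ((C : ℝ) + 1))) :=
      mul_le_mul_of_nonneg_left (hyd.trans (min_le_right _ _)) C.coe_nonneg
    have h3 : (C : ℝ) * (A / (2 * ((C : ℝ) + 1))) ≤ A / 2 := by
      rw [mul_div_assoc', div_le_div_iff₀ (by positivity) two_pos]
      nlinarith [C.coe_nonneg, hApos]
    have h4 : |D T| - |D y| ≤ |D y - D T| := by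
      rw [abs_sub_comm]; exact abs_sub_abs_le_abs_sub _ _
    linarith
  have hmaps : MapsTo (fun x : ℝ => 2 * T - x) S S := by
    intro y hy
    obtain ⟨h1, h2⟩ := hy
    exact ⟨show T - γ ≤ 2 * T - y by linarith, show 2 * T - y ≤ T + γ by linarith⟩
  refine ⟨A / (2 * (n + 1)!), by positivity, δ, hδpos, hδγ, ?_⟩
  intro s hs
  rcases lt_trichotomy s T with hlt | heqT | hgt
  · -- reflection case
    set g := fun y => μ (2 * T - y) with hg
    have e1 : 2 * T - (T + γ) = T - γ := by ring
    have e2 : 2 * T - (T - γ) = T + γ := by ring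
    have hrefl : ∀ j, j ≤ n + 1 → ∀ x ∈ S, iteratedDerivWithin j g S x
        = (-1 : ℝ) ^ j * iteratedDerivWithin j μ S (2 * T - x) := by
      intro j hj x hx
      have := itdw_reflect (show T - γ < T + γ by linarith) (2 * T) j
        (fun j' hj' => by rw [e1, e2]; exact hdiff j' (by omega)) x hx
      rwa [e1, e2] at this
    have hTlt : T < 2 * T - s := by linarith
    have habs1 : |s - T| = T - s := by
      rw [abs_sub_comm]; exact abs_of_pos (by linarith)
    have hsγ2 : 2 * T - s ≤ T + γ := by
      have h := hs.trans hδγ; rw [habs1] at h; linarith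
    have hrootg : g T = m := by
      show μ (2 * T - T) = m; rw [show 2 * T - T = T by ring, hroot]
    have hinner : DifferentiableOn ℝ (fun x : ℝ => 2 * T - x) S :=
      (differentiableOn_const _).sub differentiableOn_id
    have hdiffg : ∀ j ≤ n, DifferentiableOn ℝ (iteratedDerivWithin j g S) S := by
      intro j hj
      have base : DifferentiableOn ℝ
          (fun x => (-1:ℝ) ^ j * iteratedDerivWithin j μ S (2 * T - x)) S :=
        ((hdiff j hj).comp hinner hmaps).const_mul _
      exact base.congr (fun x hx => hrefl j (by omega) x hx)
    have hzerog : ∀ j, 1 ≤ j → j ≤ n → iteratedDerivWithin j g S T = 0 := by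
      intro j h1j hjn
      rw [hrefl j (by omega) T hTS, show 2 * T - T = T by ring, hzero j h1j hjn, mul_zero]
    obtain ⟨x', hx', heq⟩ := key_right (μ := g) hγ hrootg hdiffg hzerog hTlt hsγ2
    have hgs : g (2 * T - s) = μ s := by
      show μ (2 * T - (2 * T - s)) = μ s; rw [show 2 * T - (2 * T - s) = s by ring]
    have hx'S : x' ∈ S := ⟨by have := hx'.1; linarith, by have := hx'.2; linarith⟩
    have hyS : 2 * T - x' ∈ S := hmaps hx'S
    have hyd : |2 * T - x' - T| ≤ δ := by
      have h1' := hx'.1; have h2' := hx'.2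
      rw [show 2 * T - x' - T = T - x' by ring, abs_sub_comm,
        abs_of_pos (show (0:ℝ) < x' - T by linarith)]
      have h := hs; rw [habs1] at h; linarith
    have hDy := hbig _ hyS hyd
    rw [hgs, hrefl (n + 1) le_rfl x' hx'S] at heq
    have habsneg : |(-1:ℝ) ^ (n + 1)| = 1 := by
      rw [abs_pow, abs_neg, abs_one, one_pow]
    have habseq : |μ s - m| = |D (2 * T - x')| * (T - s) ^ (n + 1) / (n + 1)! := by
      rw [sub_eq_iff_eq_add] at heq
      rw [heq]
      rw [add_sub_cancel_right, abs_div, abs_mul, abs_mul, habsneg, one_mul, abs_pow,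
        show 2 * T - s - T = T - s by ring, abs_of_pos (show (0:ℝ) < T - s by linarith),
        abs_of_pos hfact]
    rw [habseq, habs1]
    calc A / (2 * (n + 1)!) * (T - s) ^ (n + 1)
        = (A / 2) * (T - s) ^ (n + 1) / (n + 1)! := by field_simp
      _ ≤ |D (2 * T - x')| * (T - s) ^ (n + 1) / (n + 1)! := by
          have hp : (0:ℝ) ≤ (T - s) ^ (n + 1) := pow_nonneg (by linarith) _
          gcongr
  · subst heqT
    simp [hroot]
  · have hsγ' : s ≤ T + γ := by
      have h1 : |s - T| ≤ γ := hs.trans hδγ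
      have h2 : s - T ≤ |s - T| := le_abs_self _
      linarith
    obtain ⟨x', hx', heq⟩ := key_right hγ hroot hdiff hzero hgt hsγ'
    have hx'S : x' ∈ S := ⟨by have := hx'.1; linarith, by have := hx'.2; linarith⟩
    have habsT : |s - T| = s - T := abs_of_pos (by linarith)
    have hx'd : |x' - T| ≤ δ := by
      have h1 := hx'.1; have h2 := hx'.2
      have h := hs; rw [habsT] at h
      rw [abs_of_pos (show (0:ℝ) < x' - T by linarith)]
      linarith
    have hDx := hbig x' hx'S hx'd
    have habseq : |μ s - m| = |D x'| * (s - T) ^ (n + 1) / (n + 1)! := by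
      rw [heq, abs_div, abs_mul, abs_pow,
        abs_of_pos (show (0:ℝ) < s - T by linarith), abs_of_pos hfact]
    rw [habseq, habsT]
    calc A / (2 * (n + 1)!) * (s - T) ^ (n + 1)
        = (A / 2) * (s - T) ^ (n + 1) / (n + 1)! := by field_simp
      _ ≤ |D x'| * (s - T) ^ (n + 1) / (n + 1)! := by
          have hp : (0:ℝ) ≤ (s - T) ^ (n + 1) := pow_nonneg (by linarith) _
          gcongr

lemma far_bound {μ : ℝ → ℝ} {m T γ δ : ℝ} (hδ : 0 < δ) (hδγ : δ ≤ γ)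
    (hroot : μ T = m)
    (hml : StrictMonoOn μ (Icc (T - γ) T) ∨ StrictAntiOn μ (Icc (T - γ) T))
    (hmr : StrictMonoOn μ (Icc T (T + γ)) ∨ StrictAntiOn μ (Icc T (T + γ))) :
    ∃ e > (0:ℝ), ∀ s, |s - T| ≤ γ → δ ≤ |s - T| → e ≤ |μ s - m| := by
  have hγ : 0 < γ := hδ.trans_le hδγ
  have hmemL : T - δ ∈ Icc (T - γ) T := ⟨by linarith, by linarith⟩
  have hmemR : T + δ ∈ Icc T (T + γ) := ⟨by linarith, by linarith⟩
  have hTL : T ∈ Icc (T - γ) T := ⟨by linarith, le_rfl⟩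
  have hTR : T ∈ Icc T (T + γ) := ⟨le_rfl, by linarith⟩
  have hL : μ (T - δ) ≠ m := by
    rcases hml with h | h
    · exact ne_of_lt (hroot ▸ h hmemL hTL (by linarith))
    · exact ne_of_gt (hroot ▸ h hmemL hTL (by linarith))
  have hR : μ (T + δ) ≠ m := by
    rcases hmr with h | h
    · exact ne_of_gt (hroot ▸ h hTR hmemR (by linarith))
    · exact ne_of_lt (hroot ▸ h hTR hmemR (by linarith))
  refine ⟨min |μ (T - δ) - m| |μ (T + δ) - m|,
    lt_min (abs_pos.mpr (sub_ne_zero.mpr hL)) (abs_pos.mpr (sub_ne_zero.mpr hR)), ?_⟩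
  intro s hsγ hsδ
  rcases le_total s T with hsT | hsT
  · -- s ∈ [T - γ, T - δ]
    have habs : |s - T| = T - s := by rw [abs_sub_comm]; exact abs_of_nonneg (by linarith)
    rw [habs] at hsγ hsδ
    have hmem : s ∈ Icc (T - γ) T := ⟨by linarith, hsT⟩
    have h1 : min |μ (T - δ) - m| |μ (T + δ) - m| ≤ |μ (T - δ) - m| := min_le_left _ _
    rcases hml with h | h
    · have h2 : μ s ≤ μ (T - δ) :=
        h.monotoneOn hmem hmemL (by linarith)
      have h3 : μ (T - δ) < m := hroot ▸ h hmemL hTL (by linarith)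
      refine h1.trans ?_
      rw [abs_of_neg (show μ (T - δ) - m < 0 by linarith),
        abs_of_neg (show μ s - m < 0 by linarith)]
      linarith
    · have h2 : μ (T - δ) ≤ μ s :=
        h.antitoneOn hmem hmemL (by linarith)
      have h3 : m < μ (T - δ) := hroot ▸ h hmemL hTL (by linarith)
      refine h1.trans ?_
      rw [abs_of_pos (show (0:ℝ) < μ (T - δ) - m by linarith),
        abs_of_pos (show (0:ℝ) < μ s - m by linarith)]
      linarith
  · have habs : |s - T| = s - T := abs_of_nonneg (by linarith)
    rw [habs] at hsγ hsδ
    have hmem : s ∈ Icc T (T + γ) := ⟨hsT, by linarith⟩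
    have h1 : min |μ (T - δ) - m| |μ (T + δ) - m| ≤ |μ (T + δ) - m| := min_le_right _ _
    rcases hmr with h | h
    · have h2 : μ (T + δ) ≤ μ s := h.monotoneOn hmemR hmem (by linarith)
      have h3 : m < μ (T + δ) := hroot ▸ h hTR hmemR (by linarith)
      refine h1.trans ?_
      rw [abs_of_pos (show (0:ℝ) < μ (T + δ) - m by linarith),
        abs_of_pos (show (0:ℝ) < μ s - m by linarith)]
      linarith
    · have h2 : μ s ≤ μ (T + δ) := h.antitoneOn hmemR hmem (by linarith)
      have h3 : μ (T + δ) < m := hroot ▸ h hTR hmemR (by linarith)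
      refine h1.trans ?_
      rw [abs_of_neg (show μ (T + δ) - m < 0 by linarith),
        abs_of_neg (show μ s - m < 0 by linarith)]
      linarith

/-- Lemma B.1, decomposition: for small `h` the level-set band is the union
of the pieces `B_{h,l,M}` localized at the roots. -/
theorem level_set_band_decomposition
    (μ : ℝ → ℝ) (m : ℝ) (k : ℕ) (t : ℕ → ℝ) (v : ℕ → ℕ) (γ : ℝ)
    (hcrs : CriticalRootStructure μ m k t v γ) :
    ∃ M > (0:ℝ), ∃ h₀ > (0:ℝ), ∀ h ∈ Ioc (0:ℝ) h₀,
      {s ∈ Icc (0:ℝ) 1 | |μ s - m| ≤ h} =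
        ⋃ l ∈ Finset.Icc 1 k,
          {s ∈ Icc (0:ℝ) 1 | |s - t l| ^ (v l + 1) ≤ M * h ∧ |μ s - m| ≤ h} := by
  obtain ⟨ε, hε, hsep⟩ := hcrs.sep
  -- γ > 0
  have hγpos : 0 < γ := by
    rw [hcrs.gamma_eq]
    have hpos : ∀ i ∈ Finset.Icc 0 k, (0:ℝ) < extRoots k t (i + 1) - extRoots k t i := by
      intro i hi
      rw [Finset.mem_Icc] at hi
      by_cases h0 : i = 0
      · subst h0
        have hk1 : 1 ≤ k := hcrs.k_pos
        norm_num [extRoots, hk1]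
        linarith [hcrs.first_pos]
      · have h1i : 1 ≤ i := Nat.one_le_iff_ne_zero.mpr h0
        by_cases hik : i = k
        · subst hik
          simp only [extRoots, if_neg (Nat.succ_ne_zero i),
            if_neg (by omega : ¬ i + 1 ≤ i), if_neg h0, if_pos le_rfl]
          linarith [hcrs.last_lt]
        · have hlt : i < k := lt_of_le_of_ne hi.2 hik
          simp only [extRoots, if_neg (Nat.succ_ne_zero i),
            if_pos (by omega : i + 1 ≤ k), if_neg h0, if_pos hi.2]
          linarith [hcrs.mono i (i + 1) h1i (Nat.lt_succ_self i) (by omega)]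
    have h2 := (Finset.lt_inf'_iff (Finset.nonempty_Icc.mpr (Nat.zero_le k))).mpr hpos
    linarith
  -- per-root constants
  have H : ∀ l : ℕ, ∃ c e δ : ℝ, 0 < c ∧ 0 < e ∧ 0 < δ ∧
      (1 ≤ l → l ≤ k → δ ≤ γ ∧
        (∀ s, |s - t l| ≤ δ → c * |s - t l| ^ (v l + 1) ≤ |μ s - m|) ∧
        (∀ s, |s - t l| ≤ γ → δ ≤ |s - t l| → e ≤ |μ s - m|)) := by
    intro l
    by_cases hl : 1 ≤ l ∧ l ≤ k
    · obtain ⟨hl1, hlk⟩ := hl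
      obtain ⟨c, hc, δ, hδ, hδγ, hnear⟩ := key_lower hγpos (hcrs.root l hl1 hlk)
        (hcrs.diffble l hl1 hlk) (hcrs.deriv_zero l hl1 hlk) (hcrs.deriv_ne l hl1 hlk)
        (hcrs.deriv_lip l hl1 hlk)
      obtain ⟨e, he, hfar⟩ := far_bound hδ hδγ (hcrs.root l hl1 hlk)
        (hcrs.mono_left l hl1 hlk) (hcrs.mono_right l hl1 hlk)
      exact ⟨c, e, δ, hc, he, hδ, fun _ _ => ⟨hδγ, hnear, hfar⟩⟩
    · exact ⟨1, 1, 1, one_pos, one_pos, one_pos, fun h1 h2 => absurd ⟨h1, h2⟩ hl⟩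
  choose c e δ hc he hδ hprop using H
  have hne : (Finset.Icc 1 k).Nonempty := ⟨1, Finset.mem_Icc.mpr ⟨le_rfl, hcrs.k_pos⟩⟩
  set M := (Finset.Icc 1 k).sup' hne (fun l => 1 / c l) with hM
  have hMpos : 0 < M := by
    have h1 : (0:ℝ) < 1 / c 1 := one_div_pos.mpr (hc 1)
    exact h1.trans_le (Finset.le_sup' (fun i => 1 / c i)
      (Finset.mem_Icc.mpr ⟨le_rfl, hcrs.k_pos⟩))
  set E := min ε ((Finset.Icc 1 k).inf' hne e) with hE
  have hEpos : 0 < E := lt_min hε ((Finset.lt_inf'_iff hne).mpr (fun l _ => he l))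
  refine ⟨M, hMpos, E / 2, by positivity, ?_⟩
  rintro h ⟨hh0, hh1⟩
  have hhE : h < E := lt_of_le_of_lt hh1 (by linarith)
  ext s
  simp only [mem_sep_iff, mem_iUnion, exists_prop]
  constructor
  · rintro ⟨hs01, hband⟩
    -- find a root near s
    have hnear : ∃ l, 1 ≤ l ∧ l ≤ k ∧ |s - t l| ≤ γ := by
      by_contra hcon
      push_neg at hcon
      have := hsep s hs01 hcon
      have hεE : E ≤ ε := min_le_left _ _
      linarith
    obtain ⟨l, hl1, hlk, hsγ⟩ := hnear
    obtain ⟨hδγ, hnearb, hfarb⟩ := hprop l hl1 hlk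
    have hsδ : |s - t l| ≤ δ l := by
      by_contra hcon
      push_neg at hcon
      have := hfarb s hsγ hcon.le
      have hEe : E ≤ e l := (min_le_right _ _).trans
        (Finset.inf'_le e (Finset.mem_Icc.mpr ⟨hl1, hlk⟩))
      linarith
    refine ⟨l, Finset.mem_Icc.mpr ⟨hl1, hlk⟩, hs01, ?_, hband⟩
    have h1 := hnearb s hsδ
    have h2 : |s - t l| ^ (v l + 1) ≤ h / c l := by
      rw [le_div_iff₀ (hc l)]
      calc |s - t l| ^ (v l + 1) * c l = c l * |s - t l| ^ (v l + 1) := by ring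
        _ ≤ |μ s - m| := h1
        _ ≤ h := hband
    calc |s - t l| ^ (v l + 1) ≤ h / c l := h2
      _ = (1 / c l) * h := by ring
      _ ≤ M * h := mul_le_mul_of_nonneg_right
          (Finset.le_sup' (fun i => 1 / c i) (Finset.mem_Icc.mpr ⟨hl1, hlk⟩)) hh0.le
  · rintro ⟨l, _, hs01, _, hband⟩
    exact ⟨hs01, hband⟩
end

section
/- Let v ∈ ℕ, t₀ ∈ ℝ, δ > 0 and let g be (v+1)-times differentiable on [t₀ − δ, t₀ + δ] with g(t₀) = 0, g^{(j)}(t₀) = 0 for 1 ≤ j ≤ v, g^{(v+1)}(t₀) ≠ 0, and g^{(v+1)} Lipschitz continuous on [t₀ − δ, t₀ + δ]. Then there exist constants M > 0 and δ' ∈ (0, δ] such that for every h > 0 and every s with |s − t₀| ≤ δ' and |g(s)| ≤ h one has |s − t₀|^{v+1} ≤ M·h. -/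
open MeasureTheory Set

/-- local level-set inclusion at a critical root of order `v`
(the inclusion `A_{n,l} ⊆ B_{n,l,M}` in the proof of Lemma B.1). -/
theorem local_level_band_inclusion
    (v : ℕ) (t₀ δ : ℝ) (hδ : 0 < δ) (g : ℝ → ℝ)
    (hg0 : g t₀ = 0)
    (hdiff : ∀ j ≤ v, DifferentiableOn ℝ
      (iteratedDerivWithin j g (Icc (t₀ - δ) (t₀ + δ))) (Icc (t₀ - δ) (t₀ + δ)))
    (hderiv0 : ∀ j, 1 ≤ j → j ≤ v →
      iteratedDerivWithin j g (Icc (t₀ - δ) (t₀ + δ)) t₀ = 0)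
    (hderivne : iteratedDerivWithin (v + 1) g (Icc (t₀ - δ) (t₀ + δ)) t₀ ≠ 0)
    (hlip : ∃ C : NNReal, LipschitzOnWith C
      (iteratedDerivWithin (v + 1) g (Icc (t₀ - δ) (t₀ + δ))) (Icc (t₀ - δ) (t₀ + δ))) :
    ∃ M > (0:ℝ), ∃ δ' ∈ Ioc (0:ℝ) δ, ∀ h : ℝ, 0 < h → ∀ s : ℝ,
      |s - t₀| ≤ δ' → |g s| ≤ h → |s - t₀| ^ (v + 1) ≤ M * h := by
  obtain ⟨C, hC⟩ := hlip
  set S : Set ℝ := Icc (t₀ - δ) (t₀ + δ) with hS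
  set c : ℝ := iteratedDerivWithin (v + 1) g S t₀ with hc
  have hcpos : 0 < |c| := abs_pos.mpr hderivne
  have hUD : UniqueDiffOn ℝ S := uniqueDiffOn_Icc (by linarith)
  have ht₀S : t₀ ∈ S := ⟨by linarith, by linarith⟩
  set e : ℝ := if 0 < c then 1 else -1 with he
  have hec : e * c = |c| := by
    by_cases h : 0 < c
    · simp [he, h, abs_of_pos h]
    · have : c < 0 := lt_of_le_of_ne (not_lt.mp h) hderivne
      simp [he, h, abs_of_neg this]
  have heabs : |e| = 1 := by
    by_cases h : 0 < c <;> simp [he, h]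
  set δ' : ℝ := min δ (|c| / (2 * (C + 1))) with hδ'
  have hδ'pos : 0 < δ' := lt_min hδ (by positivity)
  have hδ'δ : δ' ≤ δ := min_le_left _ _
  have hsubS : Icc (t₀ - δ') (t₀ + δ') ⊆ S := Icc_subset_Icc (by linarith) (by linarith)
  -- derivative of iterated derivatives at interior points
  have hHD : ∀ j ≤ v, ∀ t ∈ Ioo (t₀ - δ) (t₀ + δ),
      HasDerivAt (iteratedDerivWithin j g S) (iteratedDerivWithin (j + 1) g S t) t := by
    intro j hj t ht
    have htS : t ∈ S := Ioo_subset_Icc_self ht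
    have hnb : S ∈ nhds t := by
      rw [hS]
      exact Icc_mem_nhds ht.1 ht.2
    have hd : DifferentiableAt ℝ (iteratedDerivWithin j g S) t :=
      ((hdiff j hj) t htS).differentiableAt hnb
    have heq : deriv (iteratedDerivWithin j g S) t = iteratedDerivWithin (j + 1) g S t := by
      rw [iteratedDerivWithin_succ, derivWithin_of_mem_nhds hnb]
    rw [← heq]
    exact hd.hasDerivAt
  -- base bound from Lipschitz
  have hbase : ∀ t ∈ Icc (t₀ - δ') (t₀ + δ'), |c| / 2 ≤ e * iteratedDerivWithin (v + 1) g S t := by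
    intro t ht
    have h1 : dist (iteratedDerivWithin (v + 1) g S t) (iteratedDerivWithin (v + 1) g S t₀)
        ≤ C * dist t t₀ := hC.dist_le_mul t (hsubS ht) t₀ ht₀S
    rw [Real.dist_eq, Real.dist_eq] at h1
    have h2 : |t - t₀| ≤ δ' := by
      rw [abs_le]; constructor <;> [linarith [ht.1]; linarith [ht.2]]
    have h3 : |iteratedDerivWithin (v + 1) g S t - c| ≤ C * δ' :=
      h1.trans (by
        have : (C:ℝ) ≥ 0 := C.coe_nonneg
        nlinarith)
    have h4 : (C:ℝ) * δ' ≤ |c| / 2 := by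
      have hCnn : (0:ℝ) ≤ C := C.coe_nonneg
      have h5 : δ' ≤ |c| / (2 * (C + 1)) := min_le_right _ _
      have h6 : (C:ℝ) * δ' ≤ C * (|c| / (2 * (C + 1))) := by
        apply mul_le_mul_of_nonneg_left h5 hCnn
      refine h6.trans ?_
      rw [← mul_div_assoc, div_le_div_iff₀ (by positivity) (by norm_num)]
      nlinarith
    have h7 : abs (e * iteratedDerivWithin (v + 1) g S t - e * c) ≤ |c| / 2 := by
      calc abs (e * iteratedDerivWithin (v + 1) g S t - e * c)
          = |e| * abs (iteratedDerivWithin (v + 1) g S t - c) := by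
            rw [← abs_mul]; ring_nf
        _ ≤ |c| / 2 := by rw [heabs, one_mul]; exact h3.trans h4
    rw [hec] at h7
    have := abs_le.mp h7
    linarith [this.1]
  -- main induction: lower bounds on iterated derivatives
  have key : ∀ k, k ≤ v + 1 → ∀ s ∈ Icc (t₀ - δ') (t₀ + δ'),
      (t₀ ≤ s → |c| / 2 * (s - t₀) ^ k / (Nat.factorial k : ℝ) ≤ e * iteratedDerivWithin (v + 1 - k) g S s) ∧
      (s ≤ t₀ → |c| / 2 * (t₀ - s) ^ k / (Nat.factorial k : ℝ) ≤
        (-1 : ℝ) ^ k * (e * iteratedDerivWithin (v + 1 - k) g S s)) := by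
    intro k
    induction k with
    | zero =>
      intro _ s hs
      have := hbase s hs
      constructor <;> intro _ <;> simpa using this
    | succ k ih =>
      intro hk1 s hs
      have hkv : k ≤ v := by omega
      have ihk := ih (by omega)
      set j := v - k with hj
      have e1 : v + 1 - (k + 1) = j := by omega
      have e2 : v + 1 - k = j + 1 := by omega
      have hjv : j ≤ v := by omega
      have hfac : ((Nat.factorial (k+1) : ℕ) : ℝ) = (k + 1) * (Nat.factorial k : ℝ) := by
        push_cast [Nat.factorial_succ]; ring
      have hfacpos : (0:ℝ) < (Nat.factorial k : ℝ) := by exact_mod_cast Nat.factorial_pos k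
      rw [e1]
      have hjt₀ : iteratedDerivWithin j g S t₀ = 0 := by
        rcases Nat.eq_zero_or_pos j with h | h
        · rw [h, iteratedDerivWithin_zero]; exact hg0
        · exact hderiv0 j h hjv
      constructor
      · -- right side
        intro hts
        set F : ℝ → ℝ := fun t =>
          e * iteratedDerivWithin j g S t - |c| / 2 / (Nat.factorial (k+1) : ℝ) * (t - t₀) ^ (k + 1) with hF
        have hderivF : ∀ t ∈ Ioo t₀ (t₀ + δ'), HasDerivAt F
            (e * iteratedDerivWithin (j + 1) g S t -
              |c| / 2 / (Nat.factorial (k+1) : ℝ) * (((k : ℝ) + 1) * (t - t₀) ^ k)) t := by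
          intro t ht
          have htI : t ∈ Ioo (t₀ - δ) (t₀ + δ) := ⟨by linarith [ht.1], by linarith [ht.2]⟩
          have hp : HasDerivAt (fun t : ℝ => (t - t₀) ^ (k + 1)) (((k : ℝ) + 1) * (t - t₀) ^ k) t := by
            simpa using ((hasDerivAt_id t).sub_const t₀).fun_pow (k + 1)
          exact ((hHD j hjv t htI).const_mul e).sub
            (hp.const_mul (|c| / 2 / (Nat.factorial (k+1) : ℝ)))
        have hmono : MonotoneOn F (Icc t₀ (t₀ + δ')) := by
          have hsub2 : Icc t₀ (t₀ + δ') ⊆ S := fun x hx =>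
            hsubS ⟨by linarith [hx.1], hx.2⟩
          apply monotoneOn_of_deriv_nonneg (convex_Icc _ _)
          · exact (continuousOn_const.mul (((hdiff j hjv).continuousOn).mono hsub2)).sub
              (Continuous.continuousOn (continuous_const.mul ((continuous_id.sub continuous_const).pow _)))
          · rw [interior_Icc]
            intro t ht
            exact ((hderivF t ht).differentiableAt).differentiableWithinAt
          · rw [interior_Icc]
            intro t ht
            rw [(hderivF t ht).deriv]
            have hIH := (ihk t ⟨by linarith [ht.1], le_of_lt ht.2⟩).1 (le_of_lt ht.1)
            rw [e2] at hIH
            have heq : |c| / 2 / (Nat.factorial (k+1) : ℝ) * (((k : ℝ) + 1) * (t - t₀) ^ k)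
                = |c| / 2 * (t - t₀) ^ k / (Nat.factorial k : ℝ) := by
              rw [hfac]
              field_simp
            rw [heq]
            linarith
        have hmemt₀ : t₀ ∈ Icc t₀ (t₀ + δ') := ⟨le_refl _, by linarith⟩
        have hmems : s ∈ Icc t₀ (t₀ + δ') := ⟨hts, hs.2⟩
        have h0 := hmono hmemt₀ hmems hts
        have hFt₀ : F t₀ = 0 := by
          simp [hF, hjt₀]
        have hFs : F s = e * iteratedDerivWithin j g S s
            - |c| / 2 / (Nat.factorial (k+1) : ℝ) * (s - t₀) ^ (k + 1) := rfl
        have heq2 : |c| / 2 / (Nat.factorial (k+1) : ℝ) * (s - t₀) ^ (k + 1)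
            = |c| / 2 * (s - t₀) ^ (k + 1) / ((Nat.factorial (k+1) : ℕ) : ℝ) := by ring
        rw [hFt₀, hFs] at h0
        linarith [heq2 ▸ h0]
      · -- left side
        intro hts
        set G : ℝ → ℝ := fun t =>
          (-1 : ℝ) ^ (k + 1) * (e * iteratedDerivWithin j g S t)
            - |c| / 2 / (Nat.factorial (k+1) : ℝ) * (t₀ - t) ^ (k + 1) with hG
        have hderivG : ∀ t ∈ Ioo (t₀ - δ') t₀, HasDerivAt G
            ((-1 : ℝ) ^ (k + 1) * (e * iteratedDerivWithin (j + 1) g S t) -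
              |c| / 2 / (Nat.factorial (k+1) : ℝ) * (((k : ℝ) + 1) * (t₀ - t) ^ k * (-1))) t := by
          intro t ht
          have htI : t ∈ Ioo (t₀ - δ) (t₀ + δ) := ⟨by linarith [ht.1], by linarith [ht.2]⟩
          have hp : HasDerivAt (fun t : ℝ => (t₀ - t) ^ (k + 1))
              (((k : ℝ) + 1) * (t₀ - t) ^ k * (-1)) t := by
            simpa using ((hasDerivAt_id t).const_sub t₀).fun_pow (k + 1)
          exact (((hHD j hjv t htI).const_mul e).const_mul ((-1 : ℝ) ^ (k + 1))).sub
            (hp.const_mul (|c| / 2 / (Nat.factorial (k+1) : ℝ)))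
        have hanti : AntitoneOn G (Icc (t₀ - δ') t₀) := by
          have hsub2 : Icc (t₀ - δ') t₀ ⊆ S := fun x hx =>
            hsubS ⟨hx.1, by linarith [hx.2]⟩
          apply antitoneOn_of_deriv_nonpos (convex_Icc _ _)
          · exact (continuousOn_const.mul
              (continuousOn_const.mul (((hdiff j hjv).continuousOn).mono hsub2))).sub
              (Continuous.continuousOn (continuous_const.mul ((continuous_const.sub continuous_id).pow _)))
          · rw [interior_Icc]
            intro t ht
            exact ((hderivG t ht).differentiableAt).differentiableWithinAt
          · rw [interior_Icc]
            intro t ht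
            rw [(hderivG t ht).deriv]
            have hIH := (ihk t ⟨le_of_lt ht.1, by linarith [ht.2]⟩).2 (le_of_lt ht.2)
            rw [e2] at hIH
            have heq : |c| / 2 / (Nat.factorial (k+1) : ℝ) * (((k : ℝ) + 1) * (t₀ - t) ^ k * (-1))
                = -(|c| / 2 * (t₀ - t) ^ k / (Nat.factorial k : ℝ)) := by
              rw [hfac]
              field_simp
            rw [heq]
            have hflip : (-1 : ℝ) ^ (k + 1) * (e * iteratedDerivWithin (j + 1) g S t)
                = -((-1 : ℝ) ^ k * (e * iteratedDerivWithin (j + 1) g S t)) := by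
              rw [pow_succ]; ring
            rw [hflip]
            linarith
        have hmemt₀ : t₀ ∈ Icc (t₀ - δ') t₀ := ⟨by linarith, le_refl _⟩
        have hmems : s ∈ Icc (t₀ - δ') t₀ := ⟨hs.1, hts⟩
        have h0 := hanti hmems hmemt₀ hts
        have hGt₀ : G t₀ = 0 := by
          simp [hG, hjt₀]
        have hGs : G s = (-1 : ℝ) ^ (k + 1) * (e * iteratedDerivWithin j g S s)
            - |c| / 2 / (Nat.factorial (k+1) : ℝ) * (t₀ - s) ^ (k + 1) := rfl
        have heq2 : |c| / 2 / (Nat.factorial (k+1) : ℝ) * (t₀ - s) ^ (k + 1)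
            = |c| / 2 * (t₀ - s) ^ (k + 1) / ((Nat.factorial (k+1) : ℕ) : ℝ) := by ring
        rw [hGt₀, hGs] at h0
        linarith [heq2 ▸ h0]
  -- conclusion
  have hfvpos : (0:ℝ) < (Nat.factorial (v+1) : ℝ) := by exact_mod_cast Nat.factorial_pos (v + 1)
  refine ⟨2 * (Nat.factorial (v+1) : ℝ) / |c|, by positivity, δ', ⟨hδ'pos, hδ'δ⟩, ?_⟩
  intro h hh s hsδ hgs
  have habs := abs_le.mp hsδ
  have hsI : s ∈ Icc (t₀ - δ') (t₀ + δ') := ⟨by linarith [habs.1], by linarith [habs.2]⟩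
  have hk := key (v + 1) le_rfl s hsI
  rcases le_total t₀ s with hts | hts
  · have hlow := hk.1 hts
    rw [Nat.sub_self, iteratedDerivWithin_zero] at hlow
    have hub : e * g s ≤ h := by
      have h1 : |e * g s| = |g s| := by rw [abs_mul, heabs, one_mul]
      have h2 := abs_le.mp (h1.symm ▸ hgs : |e * g s| ≤ h)
      exact h2.2
    have hA : |c| / 2 * (s - t₀) ^ (v + 1) / (Nat.factorial (v+1) : ℝ) ≤ h := hlow.trans hub
    have habs2 : |s - t₀| = s - t₀ := abs_of_nonneg (by linarith)
    rw [habs2, div_mul_eq_mul_div, le_div_iff₀ hcpos]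
    have hmul := mul_le_mul_of_nonneg_left hA (le_of_lt (mul_pos two_pos hfvpos))
    have heq3 : 2 * (Nat.factorial (v+1) : ℝ) *
        (|c| / 2 * (s - t₀) ^ (v + 1) / (Nat.factorial (v+1) : ℝ))
        = (s - t₀) ^ (v + 1) * |c| := by
      field_simp
    linarith
  · have hlow := hk.2 hts
    rw [Nat.sub_self, iteratedDerivWithin_zero] at hlow
    have hub : (-1 : ℝ) ^ (v + 1) * (e * g s) ≤ h := by
      have h1 : |(-1 : ℝ) ^ (v + 1) * (e * g s)| = |g s| := by
        rw [abs_mul, abs_mul, abs_pow, abs_neg, abs_one, one_pow, one_mul, heabs, one_mul]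
      have h2 := abs_le.mp (h1.symm ▸ hgs : |(-1 : ℝ) ^ (v + 1) * (e * g s)| ≤ h)
      exact h2.2
    have hA : |c| / 2 * (t₀ - s) ^ (v + 1) / (Nat.factorial (v+1) : ℝ) ≤ h := hlow.trans hub
    have habs2 : |s - t₀| = t₀ - s := by
      rw [abs_sub_comm]; exact abs_of_nonneg (by linarith)
    rw [habs2, div_mul_eq_mul_div, le_div_iff₀ hcpos]
    have hmul := mul_le_mul_of_nonneg_left hA (le_of_lt (mul_pos two_pos hfvpos))
    have heq3 : 2 * (Nat.factorial (v+1) : ℝ) *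
        (|c| / 2 * (t₀ - s) ^ (v + 1) / (Nat.factorial (v+1) : ℝ))
        = (t₀ - s) ^ (v + 1) * |c| := by
      field_simp
    linarith
end

section
/- Suppose (μ, m) has critical root structure with roots 0 < t_1 < … < t_k < 1 of orders v_1, …, v_k, and set v = max_{1 ≤ l ≤ k} v_l. Then there exist constants C > 0 and h₀ > 0 such that for every h ∈ (0, h₀] and every integer N ≥ 1: card{i ∈ {1,…,N} : |μ(i/N) − m| ≤ h} ≤ C·(N·h^{1/(v+1)} + 1). -/
open MeasureTheory Set

/-- If `G 0 ≥ c` on `[a,b]`, each `G (j+1)` has derivative `G j` on `(a,b)` and vanishes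
at `a` (for `1 ≤ j ≤ q`), then `G q x ≥ c (x-a)^q / q!`. -/
lemma chain_lower : ∀ (q : ℕ) (G : ℕ → ℝ → ℝ) (a b c : ℝ), a ≤ b → 0 ≤ c →
    (∀ j, j ≤ q → ContinuousOn (G j) (Icc a b)) →
    (∀ j, j < q → ∀ x ∈ Ioo a b, HasDerivAt (G (j + 1)) (G j x) x) →
    (∀ j, 1 ≤ j → j ≤ q → G j a = 0) →
    (∀ x ∈ Icc a b, c ≤ G 0 x) →
    ∀ x ∈ Icc a b, c * (x - a) ^ q / (Nat.factorial q : ℝ) ≤ G q x := by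
  intro q
  induction q with
  | zero =>
    intro G a b c hab hc hcont hder hz h0 x hx
    simpa using h0 x hx
  | succ q ih =>
    intro G a b c hab hc hcont hder hz h0
    have IH := ih G a b c hab hc (fun j hj => hcont j (hj.trans q.le_succ))
      (fun j hj => hder j (hj.trans q.lt_succ_self))
      (fun j h1 h2 => hz j h1 (h2.trans q.le_succ)) h0
    intro x hx
    set φ : ℝ → ℝ := fun y => G (q + 1) y - c * (y - a) ^ (q + 1) / (Nat.factorial (q + 1) : ℝ)
      with hφ
    have hderφ : ∀ y ∈ Ioo a b,
        HasDerivAt φ (G q y - c * (y - a) ^ q / (Nat.factorial q : ℝ)) y := by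
      intro y hy
      have h1 : HasDerivAt (fun z : ℝ => (z - a) ^ (q + 1)) ((q + 1 : ℕ) * (y - a) ^ q) y := by
        simpa [Function.comp_def] using ((hasDerivAt_pow (q + 1) (y - a)).comp y ((hasDerivAt_id y).sub_const a))
      have h2 : HasDerivAt (fun z : ℝ => c * (z - a) ^ (q + 1) / (Nat.factorial (q + 1) : ℝ))
          (c * ((q + 1 : ℕ) * (y - a) ^ q) / (Nat.factorial (q + 1) : ℝ)) y :=
        (h1.const_mul c).div_const _
      have h3 := (hder q q.lt_succ_self y hy).sub h2
      have : c * ((q + 1 : ℕ) * (y - a) ^ q) / (Nat.factorial (q + 1) : ℝ)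
          = c * (y - a) ^ q / (Nat.factorial q : ℝ) := by
        rw [Nat.factorial_succ]
        have hq : (Nat.factorial q : ℝ) ≠ 0 := Nat.cast_ne_zero.mpr q.factorial_ne_zero
        push_cast
        field_simp
      rw [this] at h3
      exact h3
    have hmono : MonotoneOn φ (Icc a b) := by
      apply monotoneOn_of_deriv_nonneg (convex_Icc a b)
      · exact (hcont (q + 1) le_rfl).sub ((continuous_const.mul
          ((continuous_id.sub continuous_const).pow _)).div_const _).continuousOn
      · rw [interior_Icc]
        exact fun y hy => (hderφ y hy).differentiableAt.differentiableWithinAt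
      · rw [interior_Icc]
        intro y hy
        rw [(hderφ y hy).deriv]
        have := IH y (Ioo_subset_Icc_self hy)
        linarith
    have hφa : φ a = 0 := by
      simp [hφ, hz (q + 1) (Nat.succ_le_succ (Nat.zero_le q)) le_rfl]
    have := hmono ⟨le_refl a, hab⟩ hx hx.1
    rw [hφa] at this
    simp only [hφ] at this
    linarith

/-- Near a root of order `p+1`, `|f s - f t|` is bounded below by `c |s-t|^(p+1)`. -/
lemma key_root_bound (f : ℝ → ℝ) (tl γ : ℝ) (p : ℕ) (hγ : 0 < γ)
    (hd : ∀ j ≤ p, DifferentiableOn ℝ (iteratedDerivWithin j f (Icc (tl - γ) (tl + γ)))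
      (Icc (tl - γ) (tl + γ)))
    (hz : ∀ j, 1 ≤ j → j ≤ p → iteratedDerivWithin j f (Icc (tl - γ) (tl + γ)) tl = 0)
    (hA : iteratedDerivWithin (p + 1) f (Icc (tl - γ) (tl + γ)) tl ≠ 0)
    (hlip : ∃ C : NNReal, LipschitzOnWith C
      (iteratedDerivWithin (p + 1) f (Icc (tl - γ) (tl + γ))) (Icc (tl - γ) (tl + γ))) :
    ∃ δ, 0 < δ ∧ δ ≤ γ ∧ ∃ c > 0, ∀ s ∈ Icc (tl - δ) (tl + δ),
      c * |s - tl| ^ (p + 1) ≤ |f s - f tl| := by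
  set I : Set ℝ := Icc (tl - γ) (tl + γ) with hI
  have hIuniq : UniqueDiffOn ℝ I := uniqueDiffOn_Icc (by linarith)
  set g : ℕ → ℝ → ℝ := fun j => iteratedDerivWithin j f I with hg
  obtain ⟨C, hC⟩ := hlip
  set A : ℝ := g (p + 1) tl with hAdef
  have hApos : 0 < |A| := abs_pos.mpr hA
  set δ : ℝ := min γ (|A| / (2 * ((C : ℝ) + 1))) with hδ
  have hCpos : (0:ℝ) < (C : ℝ) + 1 := by positivity
  have hδpos : 0 < δ := lt_min hγ (by positivity)
  have hδγ : δ ≤ γ := min_le_left _ _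
  have htlI : tl ∈ I := ⟨by linarith, by linarith⟩
  have hJI : Icc (tl - δ) (tl + δ) ⊆ I := Icc_subset_Icc (by linarith) (by linarith)
  -- the top derivative stays within |A|/2 of A on the δ-neighbourhood
  have hnear : ∀ x ∈ Icc (tl - δ) (tl + δ), |g (p + 1) x - A| ≤ |A| / 2 := by
    intro x hx
    have h1 : dist (g (p + 1) x) (g (p + 1) tl) ≤ (C : ℝ) * dist x tl :=
      hC.dist_le_mul x (hJI hx) tl htlI
    rw [Real.dist_eq, Real.dist_eq] at h1
    have h2 : |x - tl| ≤ δ := abs_le.mpr ⟨by linarith [hx.1], by linarith [hx.2]⟩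
    have h3 : δ ≤ |A| / (2 * ((C : ℝ) + 1)) := min_le_right _ _
    have h4 : (C : ℝ) * |x - tl| ≤ (C : ℝ) * (|A| / (2 * ((C : ℝ) + 1))) :=
      mul_le_mul_of_nonneg_left (h2.trans h3) C.2
    have h5 : (C : ℝ) * (|A| / (2 * ((C : ℝ) + 1))) ≤ |A| / 2 := by
      have e1 : |A| / (2 * ((C : ℝ) + 1)) * (2 * ((C : ℝ) + 1)) = |A| :=
        div_mul_cancel₀ _ (by positivity)
      have e2 : (0:ℝ) ≤ |A| / (2 * ((C : ℝ) + 1)) := by positivity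
      nlinarith [C.2]
    calc |g (p + 1) x - A| ≤ (C : ℝ) * |x - tl| := h1
      _ ≤ |A| / 2 := h4.trans h5
  set σ : ℝ := if 0 < A then 1 else -1 with hσdef
  have hσA : σ * A = |A| := by
    rcases lt_trichotomy 0 A with h | h | h
    · rw [hσdef, if_pos h, one_mul, abs_of_pos h]
    · exact absurd h.symm hA
    · rw [hσdef, if_neg (by linarith), abs_of_neg h]; ring
  have hσabs : |σ| = 1 := by
    rcases le_or_gt A 0 with h | h
    · rw [hσdef, if_neg (not_lt.mpr h)]; simp
    · rw [hσdef, if_pos h]; simp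
  have htop : ∀ x ∈ Icc (tl - δ) (tl + δ), |A| / 2 ≤ σ * g (p + 1) x := by
    intro x hx
    have h1 : |σ * (g (p + 1) x - A)| ≤ |A| / 2 := by
      rw [abs_mul, hσabs, one_mul]; exact hnear x hx
    have h2 : σ * (g (p + 1) x - A) = σ * g (p + 1) x - |A| := by
      rw [mul_sub, hσA]
    rw [h2] at h1
    have := abs_le.mp h1
    linarith [this.1]
  -- basic derivative facts
  have hder : ∀ i ≤ p, ∀ x ∈ Ioo (tl - γ) (tl + γ), HasDerivAt (g i) (g (i + 1) x) x := by
    intro i hi x hx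
    have hmem : I ∈ nhds x := Icc_mem_nhds hx.1 hx.2
    have hxI : x ∈ I := Ioo_subset_Icc_self hx
    have hdiff : DifferentiableAt ℝ (g i) x := ((hd i hi) x hxI).differentiableAt hmem
    have heq : g (i + 1) x = deriv (g i) x := by
      show iteratedDerivWithin (i + 1) f I x = deriv (iteratedDerivWithin i f I) x
      rw [iteratedDerivWithin_succ]
      exact derivWithin_of_mem_nhds hmem
    rw [heq]
    exact hdiff.hasDerivAt
  have hcont : ∀ i ≤ p + 1, ContinuousOn (g i) I := by
    intro i hi
    by_cases h : i ≤ p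
    · exact (hd i h).continuousOn
    · have hieq : i = p + 1 := by omega
      rw [hieq]; exact hC.continuousOn
  have hg0 : g 0 = f := by rw [hg]; exact iteratedDerivWithin_zero
  -- the chain
  set G : ℕ → ℝ → ℝ := fun j x => σ * (g (p + 1 - j) x - if p + 1 ≤ j then f tl else 0)
    with hG
  have hGcont : ∀ j ≤ p + 1, ContinuousOn (G j) I :=
    fun j hj => continuousOn_const.mul ((hcont (p + 1 - j) (by omega)).sub continuousOn_const)
  have hGz : ∀ j, 1 ≤ j → j ≤ p + 1 → G j tl = 0 := by
    intro j h1 h2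
    rcases Nat.lt_or_ge j (p + 1) with h | h
    · have : ¬ (p + 1 ≤ j) := by omega
      simp only [hG, this, if_false, sub_zero]
      show σ * iteratedDerivWithin (p + 1 - j) f I tl = 0
      rw [hz (p + 1 - j) (by omega) (by omega), mul_zero]
    · have hj : j = p + 1 := le_antisymm h2 h
      subst hj
      simp [hG, hg0]
  have hGder : ∀ j, j < p + 1 → ∀ x ∈ Ioo (tl - γ) (tl + γ), HasDerivAt (G (j + 1)) (G j x) x := by
    intro j hj x hx
    have h1 : p + 1 - (j + 1) = p - j := by omega
    have h2 : p + 1 - j = (p - j) + 1 := by omega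
    have base := hder (p - j) (by omega) x hx
    have hnle : ¬ (p + 1 ≤ j) := by omega
    have : HasDerivAt (fun y => σ * (g (p - j) y - if p + 1 ≤ j + 1 then f tl else 0))
        (σ * g ((p - j) + 1) x) x := by
      exact ((base.sub_const _).const_mul σ)
    simp only [hG, h1, h2, hnle, if_false, sub_zero]
    exact this
  have hGtop : ∀ x ∈ Icc (tl - δ) (tl + δ), |A| / 2 ≤ G 0 x := by
    intro x hx
    have hzero : G 0 x = σ * g (p + 1) x := by simp [hG]
    rw [hzero]
    exact htop x hx
  -- right side
  have hab : tl ≤ tl + δ := by linarith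
  have habI : Icc tl (tl + δ) ⊆ Icc (tl - δ) (tl + δ) := Icc_subset_Icc (by linarith) le_rfl
  have hright := chain_lower (p + 1) G tl (tl + δ) (|A| / 2) hab (by positivity)
    (fun j hj => (hGcont j hj).mono (fun y hy => hJI (habI hy)))
    (fun j hj x hx => hGder j hj x ⟨by linarith [hx.1], by linarith [hx.2, hδγ]⟩)
    hGz (fun x hx => hGtop x (habI hx))
  -- left side via reflection
  have hFder : ∀ j, j < p + 1 → ∀ x ∈ Ioo tl (tl + δ),
      HasDerivAt (fun y => (-1 : ℝ) ^ (j + 1) * G (j + 1) (2 * tl - y))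
        ((-1 : ℝ) ^ j * G j (2 * tl - x)) x := by
    intro j hj x hx
    have hx' : 2 * tl - x ∈ Ioo (tl - γ) (tl + γ) :=
      ⟨by linarith [hx.2, hδγ], by linarith [hx.1]⟩
    have base := hGder j hj (2 * tl - x) hx'
    have hrefl : HasDerivAt (fun y : ℝ => 2 * tl - y) (-1 : ℝ) x := by
      simpa using (hasDerivAt_id x).const_sub (2 * tl)
    have hcomp := (base.comp x hrefl).const_mul ((-1 : ℝ) ^ (j + 1))
    have : (-1 : ℝ) ^ (j + 1) * (G j (2 * tl - x) * (-1)) = (-1 : ℝ) ^ j * G j (2 * tl - x) := by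
      rw [pow_succ]; ring
    rw [this] at hcomp
    exact hcomp
  have hleft := chain_lower (p + 1) (fun j x => (-1 : ℝ) ^ j * G j (2 * tl - x)) tl (tl + δ)
    (|A| / 2) hab (by positivity)
    (fun j hj => continuousOn_const.mul ((hGcont j hj).comp
      ((continuous_const.sub continuous_id).continuousOn)
      (fun y hy => hJI ⟨by simp; linarith [hy.2], by simp; linarith [hy.1]⟩)))
    hFder
    (fun j h1 h2 => by
      have : 2 * tl - tl = tl := by ring
      simp only [this, hGz j h1 h2, mul_zero])
    (fun x hx => by
      have hx' : 2 * tl - x ∈ Icc (tl - δ) (tl + δ) :=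
        ⟨by linarith [hx.2], by linarith [hx.1]⟩
      simpa using hGtop (2 * tl - x) hx')
  -- combine
  refine ⟨δ, hδpos, hδγ, |A| / (2 * (Nat.factorial (p + 1) : ℝ)), by positivity, ?_⟩
  intro s hs
  have hfac : (0:ℝ) < (Nat.factorial (p + 1) : ℝ) := by positivity
  have habs : ∀ y : ℝ, σ * y ≤ |y| ∧ -|y| ≤ σ * y := by
    intro y
    have h1 : |σ * y| = |y| := by rw [abs_mul, hσabs, one_mul]
    constructor
    · rw [← h1]; exact le_abs_self _
    · rw [← h1]; exact neg_abs_le _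
  rcases le_total tl s with hts | hst
  · have hsmem : s ∈ Icc tl (tl + δ) := ⟨hts, hs.2⟩
    have h1 := hright s hsmem
    have h2 : G (p + 1) s = σ * (f s - f tl) := by
      simp [hG, hg0]
    rw [h2] at h1
    have h3 : σ * (f s - f tl) ≤ |f s - f tl| := (habs _).1
    have h4 : (s - tl) ^ (p + 1) = |s - tl| ^ (p + 1) := by
      rw [abs_of_nonneg (by linarith)]
    calc |A| / (2 * (Nat.factorial (p + 1) : ℝ)) * |s - tl| ^ (p + 1)
        = |A| / 2 * (s - tl) ^ (p + 1) / (Nat.factorial (p + 1) : ℝ) := by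
          rw [h4]; field_simp
      _ ≤ σ * (f s - f tl) := h1
      _ ≤ |f s - f tl| := h3
  · have hxmem : 2 * tl - s ∈ Icc tl (tl + δ) :=
      ⟨by linarith [hs.2], by linarith [hs.1]⟩
    have h1 := hleft (2 * tl - s) hxmem
    have h2 : (2 : ℝ) * tl - (2 * tl - s) = s := by ring
    simp only [h2] at h1
    have h3 : G (p + 1) s = σ * (f s - f tl) := by
      simp [hG, hg0]
    rw [h3] at h1
    have h4 : (-1 : ℝ) ^ (p + 1) * (σ * (f s - f tl)) ≤ |f s - f tl| := by
      have := (habs (f s - f tl))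
      rcases Nat.even_or_odd (p + 1) with he | ho
      · rw [he.neg_one_pow, one_mul]; exact this.1
      · rw [ho.neg_one_pow]
        have := this.2
        linarith
    have h5 : (2 * tl - s - tl) ^ (p + 1) = |s - tl| ^ (p + 1) := by
      have he : 2 * tl - s - tl = tl - s := by ring
      rw [he, abs_of_nonpos (by linarith : s - tl ≤ 0), neg_sub]
    calc |A| / (2 * (Nat.factorial (p + 1) : ℝ)) * |s - tl| ^ (p + 1)
        = |A| / 2 * (2 * tl - s - tl) ^ (p + 1) / (Nat.factorial (p + 1) : ℝ) := by
          rw [h5]; field_simp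
      _ ≤ (-1 : ℝ) ^ (p + 1) * (σ * (f s - f tl)) := h1
      _ ≤ |f s - f tl| := h4

/-- Number of grid points `i/N`, `1 ≤ i ≤ N`, within distance `R` of `a`. -/
lemma grid_count (N : ℕ) (hN : 1 ≤ N) (a R : ℝ) (hR : 0 ≤ R) :
    (((Finset.Icc 1 N).filter (fun i : ℕ => |(i : ℝ) / (N : ℝ) - a| ≤ R)).card : ℝ) ≤
      2 * (N : ℝ) * R + 1 := by
  have hNpos : (0:ℝ) < (N : ℝ) := by exact_mod_cast hN
  set lo : ℤ := ⌈(N : ℝ) * (a - R)⌉ with hlo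
  set hi : ℤ := ⌊(N : ℝ) * (a + R)⌋ with hhi
  have hsub : ((Finset.Icc 1 N).filter (fun i : ℕ => |(i : ℝ) / (N : ℝ) - a| ≤ R)).card ≤
      (Finset.Icc lo hi).card := by
    apply Finset.card_le_card_of_injOn (fun i : ℕ => (i : ℤ))
    · intro i hi'
      rw [Finset.mem_coe, Finset.mem_filter] at hi'
      obtain ⟨_, habs⟩ := hi'
      rw [abs_le] at habs
      have h1 : a - R ≤ (i : ℝ) / (N : ℝ) := by linarith [habs.1]
      have h2 : (i : ℝ) / (N : ℝ) ≤ a + R := by linarith [habs.2]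
      rw [Finset.mem_coe, Finset.mem_Icc]
      constructor
      · rw [hlo, Int.ceil_le]
        push_cast
        calc (N:ℝ) * (a - R) ≤ (N:ℝ) * ((i:ℝ)/(N:ℝ)) :=
              mul_le_mul_of_nonneg_left h1 hNpos.le
          _ = (i : ℝ) := by field_simp
      · rw [hhi, Int.le_floor]
        push_cast
        calc (i : ℝ) = (N:ℝ) * ((i:ℝ)/(N:ℝ)) := by field_simp
          _ ≤ (N:ℝ) * (a + R) := mul_le_mul_of_nonneg_left h2 hNpos.le
    · intro i _ j _ hij
      exact Nat.cast_injective hij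
  have hcard : ((Finset.Icc lo hi).card : ℝ) ≤ 2 * (N : ℝ) * R + 1 := by
    rw [Int.card_Icc]
    by_cases hlh : lo ≤ hi + 1
    · have h1 : ((hi + 1 - lo).toNat : ℝ) = ((hi : ℝ) + 1 - (lo : ℝ)) := by
        have h0 : ((hi + 1 - lo).toNat : ℤ) = hi + 1 - lo := Int.toNat_of_nonneg (by omega)
        calc ((hi + 1 - lo).toNat : ℝ) = (((hi + 1 - lo).toNat : ℤ) : ℝ) := by push_cast; ring
          _ = ((hi + 1 - lo : ℤ) : ℝ) := by rw [h0]
          _ = (hi : ℝ) + 1 - (lo : ℝ) := by push_cast; ring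
      rw [h1]
      have h2 : (hi : ℝ) ≤ (N : ℝ) * (a + R) := Int.floor_le _
      have h3 : (N : ℝ) * (a - R) ≤ (lo : ℝ) := Int.le_ceil _
      nlinarith
    · have : (hi + 1 - lo).toNat = 0 := by omega
      rw [this]
      have : (0:ℝ) ≤ 2 * (N:ℝ) * R := by positivity
      simp
      linarith
  calc (((Finset.Icc 1 N).filter (fun i : ℕ => |(i : ℝ) / (N : ℝ) - a| ≤ R)).card : ℝ)
      ≤ ((Finset.Icc lo hi).card : ℝ) := by exact_mod_cast hsub
    _ ≤ 2 * (N : ℝ) * R + 1 := hcard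

/-- equation (B.17): the number of grid points `i/N` in the `h`-band of
the level set is at most `C·(N·h^{1/(v+1)} + 1)`. -/
theorem grid_point_count_in_band
    (μ : ℝ → ℝ) (m : ℝ) (k : ℕ) (t : ℕ → ℝ) (v : ℕ → ℕ) (γ : ℝ)
    (hcrs : CriticalRootStructure μ m k t v γ) :
    ∃ C > (0:ℝ), ∃ h₀ > (0:ℝ), ∀ h ∈ Ioc (0:ℝ) h₀, ∀ N : ℕ, 1 ≤ N →
      (((Finset.Icc 1 N).filter
          (fun i : ℕ => |μ ((i:ℝ) / (N:ℝ)) - m| ≤ h)).card : ℝ) ≤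
        C * ((N:ℝ) * h ^ ((1:ℝ) / ((((Finset.Icc 1 k).sup v : ℕ) : ℝ) + 1)) + 1) := by
  classical
  obtain ⟨ε, hε, hsep⟩ := hcrs.sep
  have hk1 : 1 ≤ k := hcrs.k_pos
  have hγ : 0 < γ := by
    rw [hcrs.gamma_eq]
    have hpos : ∀ i ∈ Finset.Icc 0 k, (0:ℝ) < extRoots k t (i + 1) - extRoots k t i := by
      intro i hi
      rw [Finset.mem_Icc] at hi
      rcases Nat.eq_zero_or_pos i with h0 | h1
      · subst h0
        have e1 : extRoots k t 1 = t 1 := by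
          unfold extRoots; rw [if_neg (by omega), if_pos hk1]
        have e0 : extRoots k t 0 = 0 := by unfold extRoots; rw [if_pos rfl]
        rw [e1, e0]; linarith [hcrs.first_pos]
      · by_cases hik : i + 1 ≤ k
        · have e1 : extRoots k t (i + 1) = t (i + 1) := by
            unfold extRoots; rw [if_neg (by omega), if_pos hik]
          have e2 : extRoots k t i = t i := by
            unfold extRoots; rw [if_neg (by omega), if_pos (by omega)]
          rw [e1, e2]
          have := hcrs.mono i (i + 1) h1 (Nat.lt_succ_self i) hik
          linarith
        · have hik' : i = k := by omega
          rw [hik']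
          have e1 : extRoots k t (k + 1) = 1 := by
            unfold extRoots; rw [if_neg (by omega), if_neg (by omega)]
          have e2 : extRoots k t k = t k := by
            unfold extRoots; rw [if_neg (by omega), if_pos le_rfl]
          rw [e1, e2]; linarith [hcrs.last_lt]
    have hinf := (Finset.lt_inf'_iff (Finset.nonempty_Icc.mpr (Nat.zero_le k))).mpr hpos
    linarith [hinf]
  have hcontμ : ∀ l, 1 ≤ l → l ≤ k → ContinuousOn μ (Icc (t l - γ) (t l + γ)) := by
    intro l h1 h2
    have h := (hcrs.diffble l h1 h2 0 (Nat.zero_le _)).continuousOn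
    rwa [iteratedDerivWithin_zero] at h
  have hroot : ∀ l ∈ Finset.Icc 1 k, ∃ c, 0 < c ∧ ∃ M, 0 < M ∧
      ∀ s : ℝ, |s - t l| ≤ γ → |μ s - m| < M → c * |s - t l| ^ (v l + 1) ≤ |μ s - m| := by
    intro l hl
    rw [Finset.mem_Icc] at hl
    obtain ⟨hl1, hlk⟩ := hl
    obtain ⟨δ, hδ0, hδγ, c, hc0, hkey⟩ := key_root_bound μ (t l) γ (v l) hγ
      (hcrs.diffble l hl1 hlk) (hcrs.deriv_zero l hl1 hlk) (hcrs.deriv_ne l hl1 hlk)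
      (hcrs.deriv_lip l hl1 hlk)
    have hμt : μ (t l) = m := hcrs.root l hl1 hlk
    set K : Set ℝ := Icc (t l - γ) (t l + γ) \ Ioo (t l - δ) (t l + δ) with hK
    have hKcomp : IsCompact K := isCompact_Icc.diff isOpen_Ioo
    have hKmem : t l + γ ∈ K := ⟨⟨by linarith, le_rfl⟩, fun hmem =>
      absurd hmem.2 (not_lt.mpr (by linarith))⟩
    have hKcont : ContinuousOn (fun s => |μ s - m|) K :=
      (((hcontμ l hl1 hlk).mono diff_subset).sub continuousOn_const).abs
    obtain ⟨x₀, hx₀K, hx₀min⟩ := hKcomp.exists_isMinOn ⟨_, hKmem⟩ hKcont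
    have hx₀pos : 0 < |μ x₀ - m| := by
      rw [abs_pos, sub_ne_zero]
      obtain ⟨hx₀I, hx₀nI⟩ := hx₀K
      rw [mem_Ioo, not_and_or, not_lt, not_lt] at hx₀nI
      rcases hx₀nI with hle | hge
      · have hx₀lt : x₀ < t l := by linarith
        have hmem1 : x₀ ∈ Icc (t l - γ) (t l) := ⟨hx₀I.1, hx₀lt.le⟩
        have hmem2 : t l ∈ Icc (t l - γ) (t l) := ⟨by linarith, le_rfl⟩
        rcases hcrs.mono_left l hl1 hlk with hm | hm
        · have hlt := hm hmem1 hmem2 hx₀lt; rw [hμt] at hlt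
          exact ne_of_lt hlt
        · have hlt := hm hmem1 hmem2 hx₀lt; rw [hμt] at hlt
          exact ne_of_gt hlt
      · have hx₀gt : t l < x₀ := by linarith
        have hmem1 : x₀ ∈ Icc (t l) (t l + γ) := ⟨hx₀gt.le, hx₀I.2⟩
        have hmem2 : t l ∈ Icc (t l) (t l + γ) := ⟨le_rfl, by linarith⟩
        rcases hcrs.mono_right l hl1 hlk with hm | hm
        · have hlt := hm hmem2 hmem1 hx₀gt; rw [hμt] at hlt
          exact ne_of_gt hlt
        · have hlt := hm hmem2 hmem1 hx₀gt; rw [hμt] at hlt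
          exact ne_of_lt hlt
    refine ⟨c, hc0, |μ x₀ - m|, hx₀pos, ?_⟩
    intro s hsγ hsM
    have hsI : s ∈ Icc (t l - γ) (t l + γ) := by
      rw [abs_le] at hsγ
      exact ⟨by linarith [hsγ.1], by linarith [hsγ.2]⟩
    have hsδ : s ∈ Icc (t l - δ) (t l + δ) := by
      by_contra hcon
      have hsK : s ∈ K := ⟨hsI, fun hmem => hcon ⟨hmem.1.le, hmem.2.le⟩⟩
      exact absurd (isMinOn_iff.mp hx₀min s hsK) (not_le.mpr hsM)
    have hfin := hkey s hsδ
    rw [hμt] at hfin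
    exact hfin
  choose! c hc M hM hkey using hroot
  have hkkne : (Finset.Icc 1 k).Nonempty := ⟨1, Finset.mem_Icc.mpr ⟨le_rfl, hk1⟩⟩
  set B : ℝ := (Finset.Icc 1 k).sup' hkkne (fun l => max (1 / c l) 1) with hB
  have hBl : ∀ l ∈ Finset.Icc 1 k, max (1 / c l) 1 ≤ B := by
    intro l hl
    rw [hB]
    exact Finset.le_sup' (fun l => max (1 / c l) 1) hl
  have hB1 : (1:ℝ) ≤ B :=
    le_trans (le_max_right (1 / c 1) 1) (hBl 1 (Finset.mem_Icc.mpr ⟨le_rfl, hk1⟩))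
  set h₀ : ℝ := min (1/2) (min (ε/2) ((Finset.Icc 1 k).inf' hkkne (fun l => M l / 2)))
    with hh₀def
  have hh₀pos : 0 < h₀ := by
    apply lt_min (by norm_num)
    apply lt_min (by linarith)
    rw [Finset.lt_inf'_iff]
    intro l hl
    have := hM l hl
    linarith
  set V : ℕ := (Finset.Icc 1 k).sup v with hV
  have hkpos : (0:ℝ) < (k:ℝ) := by exact_mod_cast hcrs.k_pos
  refine ⟨(k:ℝ) * (2 * B + 1), mul_pos hkpos (by linarith), h₀, hh₀pos, ?_⟩
  intro h hh N hN
  obtain ⟨hhpos, hhle⟩ := hh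
  have hh1 : h ≤ 1/2 := hhle.trans (min_le_left _ _)
  have hhε : h ≤ ε/2 := hhle.trans ((min_le_right _ _).trans (min_le_left _ _))
  have hhM : ∀ l ∈ Finset.Icc 1 k, h ≤ M l / 2 := fun l hl =>
    hhle.trans ((min_le_right _ _).trans ((min_le_right _ _).trans (Finset.inf'_le _ hl)))
  set α : ℝ := (1:ℝ) / ((V:ℝ) + 1) with hα
  have hαpos : 0 < α := by positivity
  set R : ℝ := B * h ^ α with hR
  have hrpow_pos : 0 < h ^ α := Real.rpow_pos_of_pos hhpos _
  have hRpos : 0 < R := mul_pos (by linarith) hrpow_pos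
  have hNpos : (0:ℝ) < (N:ℝ) := by exact_mod_cast hN
  have hband : ∀ i ∈ (Finset.Icc 1 N).filter (fun i : ℕ => |μ ((i:ℝ)/(N:ℝ)) - m| ≤ h),
      ∃ l ∈ Finset.Icc 1 k, |(i:ℝ)/(N:ℝ) - t l| ≤ R := by
    intro i hi
    rw [Finset.mem_filter, Finset.mem_Icc] at hi
    obtain ⟨⟨hi1, hiN⟩, hib⟩ := hi
    have hs01 : (i:ℝ)/(N:ℝ) ∈ Icc (0:ℝ) 1 := by
      constructor
      · positivity
      · rw [div_le_one hNpos]; exact_mod_cast hiN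
    have hnear : ¬ (∀ l, 1 ≤ l → l ≤ k → γ < |(i:ℝ)/(N:ℝ) - t l|) := by
      intro hfar
      have := hsep _ hs01 hfar
      linarith
    push_neg at hnear
    obtain ⟨l, hl1, hlk, hlγ⟩ := hnear
    have hlmem : l ∈ Finset.Icc 1 k := Finset.mem_Icc.mpr ⟨hl1, hlk⟩
    have hMl : |μ ((i:ℝ)/(N:ℝ)) - m| < M l := by
      have h1 := hhM l hlmem
      have h2 := hM l hlmem
      linarith
    have hlow := hkey l hlmem _ hlγ hMl
    refine ⟨l, hlmem, ?_⟩
    set d : ℝ := |(i:ℝ)/(N:ℝ) - t l| with hd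
    have hd0 : 0 ≤ d := abs_nonneg _
    have hcl := hc l hlmem
    have h1 : d ^ (v l + 1) ≤ h / c l := by
      rw [le_div_iff₀ hcl]
      nlinarith [hlow, hib]
    have h2 : d ≤ (h / c l) ^ ((1:ℝ)/((v l:ℝ)+1)) := by
      have e1 : d = (d ^ (v l + 1)) ^ ((1:ℝ)/((v l:ℝ)+1)) := by
        rw [← Real.rpow_natCast d (v l + 1), ← Real.rpow_mul hd0]
        rw [show ((v l + 1 : ℕ):ℝ) * ((1:ℝ)/((v l:ℝ)+1)) = 1 by push_cast; field_simp]
        rw [Real.rpow_one]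
      rw [e1]
      exact Real.rpow_le_rpow (pow_nonneg hd0 _) h1 (by positivity)
    have h3 : (h / c l) ^ ((1:ℝ)/((v l:ℝ)+1)) ≤ R := by
      have e2 : h / c l = h * (1 / c l) := by ring
      rw [e2, Real.mul_rpow hhpos.le (by positivity)]
      have hvV : v l ≤ V := Finset.le_sup hlmem
      have hexp : α ≤ (1:ℝ)/((v l:ℝ)+1) := by
        rw [hα]
        apply one_div_le_one_div_of_le (by positivity)
        have : (v l : ℝ) ≤ (V : ℝ) := by exact_mod_cast hvV
        linarith
      have hh' : h ^ ((1:ℝ)/((v l:ℝ)+1)) ≤ h ^ α :=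
        Real.rpow_le_rpow_of_exponent_ge hhpos (by linarith) hexp
      have hcb : (1 / c l) ^ ((1:ℝ)/((v l:ℝ)+1)) ≤ B := by
        rcases le_total (1 / c l) 1 with hle | hge
        · have hone := Real.rpow_le_one (z := (1:ℝ)/((v l:ℝ)+1)) (by positivity) hle (by positivity)
          linarith
        · have h1' : (1 / c l) ^ ((1:ℝ)/((v l:ℝ)+1)) ≤ (1 / c l) ^ (1:ℝ) :=
            Real.rpow_le_rpow_of_exponent_le hge (by
              rw [div_le_one (by positivity)]
              have : (0:ℝ) ≤ (v l : ℝ) := by positivity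
              linarith)
          rw [Real.rpow_one] at h1'
          have hb2 := hBl l hlmem
          have hb3 := le_max_left (1 / c l) (1:ℝ)
          linarith
      calc h ^ ((1:ℝ)/((v l:ℝ)+1)) * (1/c l) ^ ((1:ℝ)/((v l:ℝ)+1))
          ≤ h ^ α * B := mul_le_mul hh' hcb (by positivity) (le_of_lt hrpow_pos)
        _ = R := by rw [hR]; ring
    exact h2.trans h3
  have hsubset : (Finset.Icc 1 N).filter (fun i : ℕ => |μ ((i:ℝ)/(N:ℝ)) - m| ≤ h) ⊆
      (Finset.Icc 1 k).biUnion (fun l => (Finset.Icc 1 N).filter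
        (fun i : ℕ => |(i:ℝ)/(N:ℝ) - t l| ≤ R)) := by
    intro i hi
    obtain ⟨l, hl, hle⟩ := hband i hi
    rw [Finset.mem_biUnion]
    exact ⟨l, hl, Finset.mem_filter.mpr ⟨(Finset.mem_filter.mp hi).1, hle⟩⟩
  have hcard1 := Finset.card_le_card hsubset
  have hcard2 := Finset.card_biUnion_le (s := Finset.Icc 1 k)
    (t := fun l => (Finset.Icc 1 N).filter (fun i : ℕ => |(i:ℝ)/(N:ℝ) - t l| ≤ R))
  have hstep : (((Finset.Icc 1 N).filter
      (fun i : ℕ => |μ ((i:ℝ)/(N:ℝ)) - m| ≤ h)).card : ℝ) ≤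
      ∑ l ∈ Finset.Icc 1 k, (2*(N:ℝ)*R + 1) := by
    have hnat := hcard1.trans hcard2
    calc (((Finset.Icc 1 N).filter (fun i : ℕ => |μ ((i:ℝ)/(N:ℝ)) - m| ≤ h)).card : ℝ)
        ≤ (∑ l ∈ Finset.Icc 1 k, ((Finset.Icc 1 N).filter
            (fun i : ℕ => |(i:ℝ)/(N:ℝ) - t l| ≤ R)).card : ℕ) := by exact_mod_cast hnat
      _ = ∑ l ∈ Finset.Icc 1 k, (((Finset.Icc 1 N).filter
            (fun i : ℕ => |(i:ℝ)/(N:ℝ) - t l| ≤ R)).card : ℝ) := by push_cast; ring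
      _ ≤ ∑ l ∈ Finset.Icc 1 k, (2*(N:ℝ)*R + 1) :=
          Finset.sum_le_sum (fun l _ => grid_count N hN (t l) R hRpos.le)
  rw [Finset.sum_const, Nat.card_Icc] at hstep
  have hkcard : ((k + 1 - 1 : ℕ) : ℝ) = (k : ℝ) := by simp
  have hstep2 : (((Finset.Icc 1 N).filter
      (fun i : ℕ => |μ ((i:ℝ)/(N:ℝ)) - m| ≤ h)).card : ℝ) ≤ (k:ℝ) * (2*(N:ℝ)*R + 1) := by
    have : ((k + 1 - 1 : ℕ) : ℝ) • (2*(N:ℝ)*R + 1) = (k:ℝ) * (2*(N:ℝ)*R + 1) := by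
      rw [hkcard, smul_eq_mul]
    calc _ ≤ ((k + 1 - 1 : ℕ)) • (2*(N:ℝ)*R + 1) := hstep
      _ = (k:ℝ) * (2*(N:ℝ)*R + 1) := by
          rw [nsmul_eq_mul]
          norm_num
  have hNh : (0:ℝ) ≤ (N:ℝ) * h ^ α := by positivity
  calc (((Finset.Icc 1 N).filter (fun i : ℕ => |μ ((i:ℝ)/(N:ℝ)) - m| ≤ h)).card : ℝ)
      ≤ (k:ℝ) * (2*(N:ℝ)*R + 1) := hstep2
    _ ≤ (k:ℝ) * (2 * B + 1) * ((N:ℝ) * h ^ α + 1) := by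
        rw [hR]
        nlinarith [hNh, hB1, hkpos, hrpow_pos, hNpos]
end

section
/- Let μ : [0,1] → ℝ be measurable, c ∈ ℝ, and K_d : ℝ → ℝ be integrable with support contained in [−1,1] and ∫_{−1}^{1} K_d(x)dx = 1. If λ({t ∈ [0,1] : μ(t) − μ(0) = c}) = 0, then lim_{h → 0⁺} ∫_0^1 (∫_{−∞}^{(μ(t)−μ(0)−c)/h} K_d(v) dv) dt = T_c⁺, where T_c⁺ = λ({t ∈ [0,1] : μ(t) − μ(0) > c}). -/
open MeasureTheory Set Filter Topology

/-- equation (2.8): the smoothed excess-mass functional converges to the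
exact excess measure `T_c⁺` as the bandwidth `h → 0⁺`. -/
theorem smoothed_excess_mass_tendsto
    (μ : ℝ → ℝ) (hμ : Measurable μ) (c : ℝ)
    (K_d : ℝ → ℝ) (hK_int : Integrable K_d)
    (hK_supp : Function.support K_d ⊆ Icc (-1 : ℝ) 1)
    (hK_one : (∫ x in Icc (-1 : ℝ) 1, K_d x) = 1)
    (hzero : volume {s ∈ Icc (0:ℝ) 1 | μ s - μ 0 = c} = 0) :
    Tendsto (fun h : ℝ =>
        ∫ s in Icc (0:ℝ) 1, ∫ w in Iic ((μ s - μ 0 - c) / h), K_d w)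
      (𝓝[>] 0)
      (𝓝 ((volume {s ∈ Icc (0:ℝ) 1 | μ s - μ 0 > c}).toReal)) := by
  set g : ℝ → ℝ := fun x => ∫ w in Iic x, K_d w with hg
  -- total integral is 1
  have htot : (∫ x, K_d x) = 1 := by
    rw [← hK_one]
    exact (setIntegral_eq_integral_of_forall_compl_eq_zero
      (fun x hx => Function.notMem_support.mp (fun h => hx (hK_supp h)))).symm
  -- g is continuous
  have hgcont : Continuous g := by
    have : g = fun x => (∫ w in Iic (-2:ℝ), K_d w) + ∫ w in (-2:ℝ)..x, K_d w := by
      funext x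
      have h := intervalIntegral.integral_Iic_sub_Iic (f := K_d) (μ := volume)
        (a := (-2:ℝ)) (b := x) hK_int.integrableOn hK_int.integrableOn
      simp only [hg]
      linarith
    rw [this]
    exact continuous_const.add (hK_int.continuous_primitive _)
  -- g is bounded by M
  set M : ℝ := ∫ x, ‖K_d x‖ with hM
  have hgbd : ∀ y, ‖g y‖ ≤ M := by
    intro y
    calc ‖g y‖ ≤ ∫ w in Iic y, ‖K_d w‖ := norm_integral_le_integral_norm _
    _ ≤ M := setIntegral_le_integral hK_int.norm (Eventually.of_forall fun x => norm_nonneg _)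
  -- g y = 1 for y ≥ 1, g y = 0 for y ≤ -1
  have hg1 : ∀ y : ℝ, 1 ≤ y → g y = 1 := by
    intro y hy
    show (∫ w in Iic y, K_d w) = 1
    exact (setIntegral_eq_integral_of_forall_compl_eq_zero (s := Iic y) (f := K_d)
      (fun x hx => Function.notMem_support.mp (fun h => hx ((hK_supp h).2.trans hy)))).trans htot
  have hg0 : ∀ y : ℝ, y ≤ -1 → g y = 0 := by
    intro y hy
    show (∫ w in Iic y, K_d w) = 0
    refine setIntegral_eq_zero_of_ae_eq_zero ?_
    rw [ae_iff]
    refine measure_mono_null (fun x hx => ?_) (Real.volume_singleton (a := (-1:ℝ)))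
    simp only [Set.mem_setOf_eq] at hx
    obtain ⟨hxy, hKx⟩ := Classical.not_imp.mp hx
    have h1 : -1 ≤ x := (hK_supp hKx).1
    have h2 : x ≤ -1 := le_trans hxy hy
    exact le_antisymm h2 h1
  -- the limit set
  have hms : MeasurableSet {s : ℝ | μ s - μ 0 > c} :=
    measurableSet_lt measurable_const (hμ.sub measurable_const)
  -- limit value
  have hlim_val : (volume {s ∈ Icc (0:ℝ) 1 | μ s - μ 0 > c}).toReal
      = ∫ s in Icc (0:ℝ) 1, Set.indicator {s | μ s - μ 0 > c} (fun _ => (1:ℝ)) s := by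
    rw [setIntegral_indicator hms, setIntegral_const, smul_eq_mul, mul_one]
    congr 1
  rw [hlim_val]
  -- dominated convergence along the filter 𝓝[>] 0
  refine tendsto_integral_filter_of_dominated_convergence (fun _ => M) ?_ ?_ ?_ ?_
  · filter_upwards [self_mem_nhdsWithin] with h hh
    exact (hgcont.measurable.comp
      ((((hμ.sub measurable_const).sub measurable_const).div_const h))).aestronglyMeasurable
  · filter_upwards [self_mem_nhdsWithin] with h hh
    exact Eventually.of_forall fun s => hgbd _
  · exact (integrableOn_const_iff).mpr (Or.inr (by simp [Real.volume_Icc]))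
  · -- a.e. pointwise convergence
    have hae : ∀ᵐ s ∂(volume.restrict (Icc (0:ℝ) 1)), μ s - μ 0 ≠ c := by
      rw [ae_restrict_iff' measurableSet_Icc]
      rw [ae_iff]
      refine measure_mono_null (fun s hs => ?_) hzero
      simp only [Set.mem_setOf_eq] at hs ⊢
      obtain ⟨h1, h2⟩ := Classical.not_imp.mp hs
      exact ⟨h1, not_not.mp h2⟩
    filter_upwards [hae] with s hs
    rcases lt_or_gt_of_ne hs with hlt | hgt
    · -- μ s - μ 0 < c : indicator = 0
      have hind : Set.indicator {s | μ s - μ 0 > c} (fun _ => (1:ℝ)) s = 0 :=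
        Set.indicator_of_notMem (show s ∉ {s | μ s - μ 0 > c} by simpa using hlt.not_gt) _
      rw [hind]
      have : ∀ᶠ h in 𝓝[>] (0:ℝ), g ((μ s - μ 0 - c) / h) = 0 := by
        have hx : μ s - μ 0 - c < 0 := by linarith
        filter_upwards [Ioo_mem_nhdsGT_of_mem (by constructor <;> [rfl; linarith] :
            (0:ℝ) ∈ Ico 0 (-(μ s - μ 0 - c)))] with h hh
        refine hg0 _ ?_
        rw [div_le_iff₀ hh.1]
        nlinarith [hh.1, hh.2]
      exact Tendsto.congr' (this.mono fun h e => e.symm) tendsto_const_nhds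
    · -- μ s - μ 0 > c : indicator = 1
      have hind : Set.indicator {s | μ s - μ 0 > c} (fun _ => (1:ℝ)) s = 1 :=
        Set.indicator_of_mem (show s ∈ {s | μ s - μ 0 > c} from hgt) _
      rw [hind]
      have : ∀ᶠ h in 𝓝[>] (0:ℝ), g ((μ s - μ 0 - c) / h) = 1 := by
        have hx : 0 < μ s - μ 0 - c := by linarith
        filter_upwards [Ioo_mem_nhdsGT_of_mem (by constructor <;> [rfl; linarith] :
            (0:ℝ) ∈ Ico 0 (μ s - μ 0 - c))] with h hh
        refine hg1 _ ?_
        rw [le_div_iff₀ hh.1]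
        linarith [hh.2]
      exact Tendsto.congr' (this.mono fun h e => e.symm) tendsto_const_nhds
end

section
/- Let v ∈ ℕ, t₀ ∈ ℝ, δ > 0 and let g be (v+1)-times differentiable on [t₀ − δ, t₀ + δ] with g(t₀) = 0, g^{(j)}(t₀) = 0 for 1 ≤ j ≤ v, A := g^{(v+1)}(t₀) ≠ 0, g^{(v+1)} Lipschitz continuous on [t₀ − δ, t₀ + δ], and g strictly monotone on [t₀ − δ, t₀] and on [t₀, t₀ + δ]. Let K_d : ℝ → ℝ be continuous and even with support contained in [−1,1]. Then lim_{h → 0⁺} h^{−1/(v+1)} · ∫_{t₀−δ}^{t₀+δ} K_d(g(t)/h) dt = ((v+1)!/|A|)^{1/(v+1)} · ∫_{−1}^{1} K_d(z^{v+1}) dz. -/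
open MeasureTheory Set Filter Topology


lemma srla_abs_sub_le_of_mem_uIcc {a b x : ℝ} (hx : x ∈ uIcc a b) : |x - a| ≤ |b - a| := by
  rcases le_total a b with h | h
  · rw [uIcc_of_le h] at hx
    rw [abs_of_nonneg (by linarith [hx.1]), abs_of_nonneg (by linarith)]
    linarith [hx.2]
  · rw [uIcc_of_ge h] at hx
    rw [abs_of_nonpos (by linarith [hx.2]), abs_of_nonpos (by linarith)]
    linarith [hx.1]

lemma srla_taylor (v : ℕ) (t₀ δ : ℝ) (hδ : 0 < δ) (g : ℝ → ℝ)
    (hg0 : g t₀ = 0)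
    (hdiff : ∀ j ≤ v, DifferentiableOn ℝ
      (iteratedDerivWithin j g (Icc (t₀ - δ) (t₀ + δ))) (Icc (t₀ - δ) (t₀ + δ)))
    (hderiv0 : ∀ j, 1 ≤ j → j ≤ v →
      iteratedDerivWithin j g (Icc (t₀ - δ) (t₀ + δ)) t₀ = 0)
    (L : ℝ) (hL0 : 0 ≤ L)
    (hL : ∀ t ∈ Icc (t₀ - δ) (t₀ + δ),
      |iteratedDerivWithin (v + 1) g (Icc (t₀ - δ) (t₀ + δ)) t
        - iteratedDerivWithin (v + 1) g (Icc (t₀ - δ) (t₀ + δ)) t₀| ≤ L * |t - t₀|) :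
    ∀ t ∈ Icc (t₀ - δ) (t₀ + δ),
      |g t - iteratedDerivWithin (v + 1) g (Icc (t₀ - δ) (t₀ + δ)) t₀
        / (Nat.factorial (v + 1)) * (t - t₀) ^ (v + 1)| ≤ L * |t - t₀| ^ (v + 2) := by
  set I := Icc (t₀ - δ) (t₀ + δ) with hI
  set A := iteratedDerivWithin (v + 1) g I t₀ with hA
  have hab : t₀ - δ < t₀ + δ := by linarith
  have hud : UniqueDiffOn ℝ I := uniqueDiffOn_Icc hab
  have ht₀I : t₀ ∈ I := ⟨by linarith, by linarith⟩
  -- main induction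
  have key : ∀ k : ℕ, k ≤ v + 1 → ∀ t ∈ I,
      |iteratedDerivWithin (v + 1 - k) g I t - A / (Nat.factorial k) * (t - t₀) ^ k|
        ≤ L * |t - t₀| ^ (k + 1) := by
    intro k
    induction k with
    | zero =>
      intro _ t ht
      simpa using hL t ht
    | succ k ih =>
      intro hk1 t ht
      have hk : k ≤ v + 1 := Nat.le_of_succ_le hk1
      have hjv : v + 1 - (k + 1) ≤ v := by omega
      set j := v + 1 - (k + 1) with hj
      have hjk : j + 1 = v + 1 - k := by omega
      -- the function e and its derivative
      set e : ℝ → ℝ := fun t => iteratedDerivWithin j g I t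
        - A / (Nat.factorial (k + 1)) * (t - t₀) ^ (k + 1) with he
      set e' : ℝ → ℝ := fun x => iteratedDerivWithin (j + 1) g I x
        - A / (Nat.factorial k) * (x - t₀) ^ k with he'
      have hderive : ∀ x ∈ I, HasDerivWithinAt e (e' x) I x := by
        intro x hx
        have h1 : HasDerivWithinAt (iteratedDerivWithin j g I)
            (iteratedDerivWithin (j + 1) g I x) I x := by
          have := ((hdiff j hjv) x hx).hasDerivWithinAt
          rwa [← iteratedDerivWithin_succ] at this
        have h2 : HasDerivAt (fun t : ℝ => A / (Nat.factorial (k + 1)) * (t - t₀) ^ (k + 1))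
            (A / (Nat.factorial k) * (x - t₀) ^ k) x := by
          have h3 : HasDerivAt (fun t : ℝ => (t - t₀) ^ (k + 1))
              ((k + 1 : ℕ) * (x - t₀) ^ k) x := by
            simpa using ((hasDerivAt_id x).sub_const t₀).fun_pow (k + 1)
          have h4 := h3.const_mul (A / (Nat.factorial (k + 1)))
          refine h4.congr_deriv ?_
          rw [Nat.factorial_succ]
          push_cast
          have : (Nat.factorial k : ℝ) ≠ 0 := Nat.cast_ne_zero.2 (Nat.factorial_ne_zero k)
          field_simp
        exact h1.sub h2.hasDerivWithinAt
      have het₀ : e t₀ = 0 := by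
        have : iteratedDerivWithin j g I t₀ = 0 := by
          rcases Nat.eq_zero_or_pos j with hj0 | hj0
          · rw [hj0]; simpa [iteratedDerivWithin_zero] using hg0
          · exact hderiv0 j hj0 hjv
        simp [he, this]
      -- apply MVT on uIcc t₀ t
      have hsub : uIcc t₀ t ⊆ I := by
        rw [hI]
        rw [uIcc] at *
        exact Icc_subset_Icc (le_min ht₀I.1 ht.1) (max_le ht₀I.2 ht.2)
      have hbound : ∀ x ∈ uIcc t₀ t, ‖e' x‖ ≤ L * |t - t₀| ^ (k + 1) := by
        intro x hx
        have hxI : x ∈ I := hsub hx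
        have h1 : |e' x| ≤ L * |x - t₀| ^ (k + 1) := by
          have := ih hk x hxI
          rwa [← hjk] at this
        have h2 : |x - t₀| ≤ |t - t₀| := srla_abs_sub_le_of_mem_uIcc hx
        calc ‖e' x‖ = |e' x| := rfl
          _ ≤ L * |x - t₀| ^ (k + 1) := h1
          _ ≤ L * |t - t₀| ^ (k + 1) := by
              apply mul_le_mul_of_nonneg_left _ hL0
              exact pow_le_pow_left₀ (abs_nonneg _) h2 _
      have := Convex.norm_image_sub_le_of_norm_hasDerivWithin_le
        (fun x hx => (hderive x (hsub hx)).mono hsub) hbound (convex_uIcc t₀ t)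
        left_mem_uIcc right_mem_uIcc
      rw [het₀, sub_zero] at this
      calc |iteratedDerivWithin j g I t - A / ↑(k + 1).factorial * (t - t₀) ^ (k + 1)|
          = ‖e t‖ := rfl
        _ ≤ L * |t - t₀| ^ (k + 1) * ‖t - t₀‖ := this
        _ = L * |t - t₀| ^ (k + 1 + 1) := by
            rw [Real.norm_eq_abs, pow_succ]; ring
  intro t ht
  have := key (v + 1) le_rfl t ht
  simpa using this

-- change of variables t = t₀ + c s for set integrals
lemma srla_subst (F : ℝ → ℝ) (t₀ c : ℝ) (hc : 0 < c) (a b : ℝ) :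
    ∫ t in Icc a b, F t = c * ∫ s : ℝ, (Icc a b).indicator F (t₀ + c * s) := by
  have h1 : ∫ s : ℝ, (Icc a b).indicator F (t₀ + c * s)
      = |c⁻¹| • ∫ y : ℝ, (Icc a b).indicator F (t₀ + y) := by
    exact MeasureTheory.Measure.integral_comp_mul_left (fun y => (Icc a b).indicator F (t₀ + y)) c
  have h2 : ∫ y : ℝ, (Icc a b).indicator F (t₀ + y) = ∫ t : ℝ, (Icc a b).indicator F t :=
    MeasureTheory.integral_add_left_eq_self (fun t => (Icc a b).indicator F t) t₀
  rw [h1, h2, ← MeasureTheory.integral_indicator measurableSet_Icc]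
  rw [abs_of_pos (inv_pos.2 hc), smul_eq_mul]
  field_simp

lemma srla_indicator_comp (f : ℝ → ℝ) (t₀ c a : ℝ) (hc : 0 < c) (s : ℝ) :
    (Icc (t₀ - a) (t₀ + a)).indicator f (t₀ + c * s)
      = (Icc (-(a/c)) (a/c)).indicator (fun s => f (t₀ + c * s)) s := by
  have k1 : s ≤ a / c ↔ c * s ≤ a := by rw [le_div_iff₀ hc, mul_comm]
  have k2 : -(a / c) ≤ s ↔ t₀ - a ≤ t₀ + c * s := by
    rw [neg_le, le_div_iff₀ hc]
    constructor <;> intro h <;> nlinarith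
  have hmem : s ∈ Icc (-(a/c)) (a/c) ↔ t₀ + c * s ∈ Icc (t₀ - a) (t₀ + a) := by
    simp only [mem_Icc, k1, ← k2]
    constructor <;> rintro ⟨h1, h2⟩ <;> exact ⟨h1, by linarith⟩
  by_cases hs : s ∈ Icc (-(a/c)) (a/c)
  · rw [indicator_of_mem hs, indicator_of_mem (hmem.1 hs)]
  · rw [indicator_of_notMem hs, indicator_of_notMem (fun hmem2 => hs (hmem.2 hmem2))]

lemma srla_limit_integral (n : ℕ) (hn : 1 ≤ n) (B : ℝ) (hB : B ≠ 0)
    (K_d : ℝ → ℝ) (hKe : ∀ x, K_d (-x) = K_d x)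
    (hKs : Function.support K_d ⊆ Icc (-1 : ℝ) 1) :
    ∫ s : ℝ, K_d (B * s ^ n) = |B| ^ (-(1:ℝ)/(n:ℝ)) * ∫ z in Icc (-1 : ℝ) 1, K_d (z ^ n) := by
  have hK0 : ∀ x : ℝ, 1 < |x| → K_d x = 0 := by
    intro x hx
    by_contra h
    have h2 := hKs (Function.mem_support.2 h)
    rw [mem_Icc] at h2
    rcases le_or_gt 0 x with h3 | h3
    · rw [abs_of_nonneg h3] at hx; linarith [h2.2]
    · rw [abs_of_neg h3] at hx; linarith [h2.1]
  have hBpos : 0 < |B| := abs_pos.2 hB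
  have hnne : (n : ℝ) ≠ 0 := Nat.cast_ne_zero.2 (by omega)
  set b := |B| ^ (-(1:ℝ)/(n:ℝ)) with hb
  have hbpos : 0 < b := Real.rpow_pos_of_pos hBpos _
  have hbn : b ^ n = |B|⁻¹ := by
    rw [hb, ← Real.rpow_natCast (|B| ^ (-(1:ℝ)/(n:ℝ))) n, ← Real.rpow_mul hBpos.le]
    rw [div_mul_cancel₀ _ hnne, Real.rpow_neg_one]
  have key : ∀ z : ℝ, K_d (B * (b * z) ^ n) = K_d (z ^ n) := by
    intro z
    rw [mul_pow, ← mul_assoc, hbn]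
    rcases lt_or_gt_of_ne hB with hB' | hB'
    · have : B * |B|⁻¹ = -1 := by rw [abs_of_neg hB']; field_simp
      rw [this, neg_one_mul, hKe]
    · have : B * |B|⁻¹ = 1 := by rw [abs_of_pos hB']; field_simp
      rw [this, one_mul]
  have h1 := MeasureTheory.Measure.integral_comp_mul_left (fun s => K_d (B * s ^ n)) b
  simp only [key] at h1
  have h2 : ∫ z in Icc (-1 : ℝ) 1, K_d (z ^ n) = ∫ z : ℝ, K_d (z ^ n) := by
    apply setIntegral_eq_integral_of_forall_compl_eq_zero
    intro z hz
    apply hK0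
    have hz1 : 1 < |z| := by
      rw [mem_Icc, not_and_or, not_le, not_le] at hz
      rcases hz with h | h
      · rw [abs_of_neg (by linarith)]; linarith
      · rw [abs_of_pos (by linarith)]; linarith
    calc (1:ℝ) < |z| := hz1
      _ ≤ |z| ^ n := le_self_pow₀ hz1.le (by omega)
      _ = |z ^ n| := (abs_pow z n).symm
  rw [h2, h1, abs_of_pos (inv_pos.2 hbpos), smul_eq_mul, ← mul_assoc,
    mul_inv_cancel₀ hbpos.ne', one_mul]


set_option maxHeartbeats 1000000 in
/-- single-root Laplace-type asymptotic for kernel integrals over a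
shrinking level-set window (equations (B.2)–(B.4), (B.28)). -/
theorem single_root_laplace_asymptotic
    (v : ℕ) (t₀ δ : ℝ) (hδ : 0 < δ) (g : ℝ → ℝ)
    (hg0 : g t₀ = 0)
    (hdiff : ∀ j ≤ v, DifferentiableOn ℝ
      (iteratedDerivWithin j g (Icc (t₀ - δ) (t₀ + δ))) (Icc (t₀ - δ) (t₀ + δ)))
    (hderiv0 : ∀ j, 1 ≤ j → j ≤ v →
      iteratedDerivWithin j g (Icc (t₀ - δ) (t₀ + δ)) t₀ = 0)
    (hderivne : iteratedDerivWithin (v + 1) g (Icc (t₀ - δ) (t₀ + δ)) t₀ ≠ 0)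
    (hlip : ∃ C : NNReal, LipschitzOnWith C
      (iteratedDerivWithin (v + 1) g (Icc (t₀ - δ) (t₀ + δ))) (Icc (t₀ - δ) (t₀ + δ)))
    (hmonoL : StrictMonoOn g (Icc (t₀ - δ) t₀) ∨ StrictAntiOn g (Icc (t₀ - δ) t₀))
    (hmonoR : StrictMonoOn g (Icc t₀ (t₀ + δ)) ∨ StrictAntiOn g (Icc t₀ (t₀ + δ)))
    (K_d : ℝ → ℝ) (hKc : Continuous K_d) (hKe : ∀ x, K_d (-x) = K_d x)
    (hKs : Function.support K_d ⊆ Icc (-1 : ℝ) 1) :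
    Tendsto (fun h : ℝ =>
        h ^ (-(1:ℝ) / ((v:ℝ) + 1)) * ∫ x in Icc (t₀ - δ) (t₀ + δ), K_d (g x / h))
      (𝓝[>] 0)
      (𝓝 (((Nat.factorial (v + 1) : ℝ) /
          |iteratedDerivWithin (v + 1) g (Icc (t₀ - δ) (t₀ + δ)) t₀|) ^ ((1:ℝ) / ((v:ℝ) + 1)) *
        ∫ z in Icc (-1 : ℝ) 1, K_d (z ^ (v + 1)))) := by
  obtain ⟨C, hC⟩ := hlip
  set I := Icc (t₀ - δ) (t₀ + δ) with hIdef
  set A := iteratedDerivWithin (v + 1) g I t₀ with hAdef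
  have hab : t₀ - δ < t₀ + δ := by linarith
  have ht₀I : t₀ ∈ I := ⟨by linarith, by linarith⟩
  set n := v + 1 with hndef
  have hnR : ((v:ℝ) + 1) = (n:ℝ) := by rw [hndef]; push_cast; ring
  have hnne : (n : ℝ) ≠ 0 := Nat.cast_ne_zero.2 (by omega)
  have hnposR : (0:ℝ) < (n:ℝ) := by positivity
  set L : ℝ := max (C : ℝ) 1 with hLdef
  have hL0 : 0 < L := lt_of_lt_of_le one_pos (le_max_right _ _)
  set B := A / (Nat.factorial n : ℝ) with hBdef
  have hfacpos : (0:ℝ) < (Nat.factorial n : ℝ) := by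
    exact_mod_cast Nat.factorial_pos n
  have hB0 : B ≠ 0 := div_ne_zero hderivne hfacpos.ne'
  have hBpos : 0 < |B| := abs_pos.2 hB0
  -- Taylor estimate
  have htay : ∀ t ∈ I, |g t - B * (t - t₀) ^ n| ≤ L * |t - t₀| ^ (n + 1) := by
    have h1 := srla_taylor v t₀ δ hδ g hg0 hdiff hderiv0 L hL0.le ?_
    · intro t ht
      have := h1 t ht
      rw [div_mul_eq_mul_div, mul_comm] at this ⊢
      convert this using 3
    · intro t ht
      have h2 := hC.dist_le_mul t ht t₀ ht₀I
      rw [Real.dist_eq, Real.dist_eq] at h2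
      calc |iteratedDerivWithin (v+1) g I t - iteratedDerivWithin (v+1) g I t₀|
          ≤ (C:ℝ) * |t - t₀| := h2
        _ ≤ L * |t - t₀| := mul_le_mul_of_nonneg_right (le_max_left _ _) (abs_nonneg _)
  -- choice of small radius
  set δ' := min δ (|B| / (2 * L)) with hδ'def
  have hδ'pos : 0 < δ' := lt_min hδ (div_pos hBpos (by linarith))
  have hδ'le : δ' ≤ δ := min_le_left _ _
  have hLδ' : L * δ' ≤ |B| / 2 := by
    have h1 : δ' ≤ |B| / (2 * L) := min_le_right _ _
    have h2 : L * (|B| / (2 * L)) = |B| / 2 := by field_simp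
    nlinarith [mul_le_mul_of_nonneg_left h1 hL0.le]
  -- lower bound near t₀
  have hglb : ∀ u : ℝ, |u| ≤ δ' → |B| / 2 * |u| ^ n ≤ |g (t₀ + u)| := by
    intro u hu
    have hu1 : -δ ≤ u := by linarith [neg_abs_le u]
    have hu2 : u ≤ δ := by linarith [le_abs_self u]
    have huI : t₀ + u ∈ I := ⟨by linarith, by linarith⟩
    have h1 := htay _ huI
    have he : t₀ + u - t₀ = u := by ring
    rw [he] at h1
    have h3 : L * |u| ^ (n + 1) ≤ |B| / 2 * |u| ^ n := by
      rw [pow_succ]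
      calc L * (|u| ^ n * |u|) = (L * |u|) * |u| ^ n := by ring
        _ ≤ (|B| / 2) * |u| ^ n := by
            apply mul_le_mul_of_nonneg_right _ (pow_nonneg (abs_nonneg u) n)
            calc L * |u| ≤ L * δ' := mul_le_mul_of_nonneg_left hu hL0.le
              _ ≤ |B| / 2 := hLδ'
    have h4 : |B * u ^ n| - |g (t₀ + u)| ≤ |g (t₀ + u) - B * u ^ n| := by
      rw [abs_sub_comm]
      exact abs_sub_abs_le_abs_sub _ _
    rw [abs_mul, abs_pow] at h4
    linarith
  -- continuity of g
  have hgc : ContinuousOn g I := by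
    have h := (hdiff 0 (Nat.zero_le v)).continuousOn
    rwa [iteratedDerivWithin_zero] at h
  -- g nonzero away from t₀
  have hgne : ∀ t ∈ I, t ≠ t₀ → g t ≠ 0 := by
    intro t ht hne hgt
    rcases lt_or_gt_of_ne hne with h | h
    · have htm : t ∈ Icc (t₀ - δ) t₀ := ⟨ht.1, h.le⟩
      have ht₀m : t₀ ∈ Icc (t₀ - δ) t₀ := ⟨by linarith, le_rfl⟩
      rcases hmonoL with hm | hm
      · have := hm htm ht₀m h; rw [hgt, hg0] at this; exact lt_irrefl 0 this
      · have := hm htm ht₀m h; rw [hgt, hg0] at this; exact lt_irrefl 0 this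
    · have htm : t ∈ Icc t₀ (t₀ + δ) := ⟨h.le, ht.2⟩
      have ht₀m : t₀ ∈ Icc t₀ (t₀ + δ) := ⟨le_rfl, by linarith⟩
      rcases hmonoR with hm | hm
      · have := hm ht₀m htm h; rw [hgt, hg0] at this; exact lt_irrefl 0 this
      · have := hm ht₀m htm h; rw [hgt, hg0] at this; exact lt_irrefl 0 this
  -- minimum of |g| on the annulus
  set Kc := I \ Ioo (t₀ - δ') (t₀ + δ') with hKcdef
  have hKc_cpt : IsCompact Kc := isCompact_Icc.diff isOpen_Ioo
  have hKc_ne : (t₀ + δ) ∈ Kc := by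
    refine ⟨⟨by linarith, le_rfl⟩, ?_⟩
    rw [mem_Ioo]; push_neg; intro _; linarith
  obtain ⟨t₁, ht₁, hmin⟩ := hKc_cpt.exists_isMinOn ⟨_, hKc_ne⟩
    ((hgc.mono diff_subset).abs)
  set m := |g t₁| with hmdef
  have hm0 : 0 < m := by
    apply abs_pos.2
    apply hgne t₁ ht₁.1
    intro h
    apply ht₁.2
    rw [h, mem_Ioo]
    constructor <;> linarith
  -- kernel vanishing and bound
  have hK0 : ∀ x : ℝ, 1 < |x| → K_d x = 0 := by
    intro x hx
    by_contra hne
    have h2 := hKs (Function.mem_support.2 hne)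
    rw [mem_Icc] at h2
    rcases le_or_gt 0 x with h3 | h3
    · rw [abs_of_nonneg h3] at hx; linarith [h2.2]
    · rw [abs_of_neg h3] at hx; linarith [h2.1]
  have hKcs : HasCompactSupport K_d := by
    apply HasCompactSupport.intro (isCompact_Icc : IsCompact (Icc (-1:ℝ) 1))
    intro x hx
    apply hK0
    rw [mem_Icc] at hx; push_neg at hx
    rcases le_or_gt (-1 : ℝ) x with h3 | h3
    · rw [abs_of_pos (by linarith [hx h3])]; exact hx h3
    · rw [abs_of_neg (by linarith)]; linarith
  obtain ⟨M, hM⟩ := hKcs.exists_bound_of_continuous hKc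
  have hM0 : 0 ≤ M := le_trans (norm_nonneg _) (hM 0)
  -- threshold radius R
  set R := max 1 ((2 / |B|) ^ ((1:ℝ)/(n:ℝ))) with hRdef
  have hR1 : (1:ℝ) ≤ R := le_max_left _ _
  have hRpow : ∀ s : ℝ, R < |s| → 2 < |B| * |s| ^ n := by
    intro s hs
    have h1 : (2 / |B|) ^ ((1:ℝ)/(n:ℝ)) ≤ R := le_max_right _ _
    have h2 : ((2 / |B|) ^ ((1:ℝ)/(n:ℝ))) ^ (n:ℕ) = 2 / |B| := by
      rw [← Real.rpow_natCast ((2 / |B|) ^ ((1:ℝ)/(n:ℝ))) n,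
        ← Real.rpow_mul (by positivity), one_div_mul_cancel hnne, Real.rpow_one]
    have h3 : 2 / |B| < |s| ^ n := by
      calc 2 / |B| = ((2 / |B|) ^ ((1:ℝ)/(n:ℝ))) ^ (n:ℕ) := h2.symm
        _ < |s| ^ (n:ℕ) := by
            apply pow_lt_pow_left₀ (lt_of_le_of_lt h1 hs) (by positivity) (by omega)
    rw [div_lt_iff₀ hBpos] at h3
    nlinarith
  -- scaling function
  set c : ℝ → ℝ := fun h => h ^ ((1:ℝ)/(n:ℝ)) with hcdef
  have hcpos : ∀ h : ℝ, 0 < h → 0 < c h := fun h hh => Real.rpow_pos_of_pos hh _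
  have hcn : ∀ h : ℝ, 0 < h → (c h) ^ (n:ℕ) = h := by
    intro h hh
    rw [hcdef]
    simp only
    rw [← Real.rpow_natCast (h ^ ((1:ℝ)/(n:ℝ))) n, ← Real.rpow_mul hh.le,
      one_div_mul_cancel hnne, Real.rpow_one]
  have hc0 : Tendsto c (𝓝[>] (0:ℝ)) (𝓝 0) := by
    have h1 := (Real.continuousAt_rpow_const 0 ((1:ℝ)/(n:ℝ))
      (Or.inr (by positivity))).tendsto
    rw [Real.zero_rpow (by positivity)] at h1
    exact h1.mono_left nhdsWithin_le_nhds
  -- the substituted integrand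
  set Φ : ℝ → ℝ → ℝ := fun h s => I.indicator (fun t => K_d (g t / h)) (t₀ + c h * s)
    with hΦdef
  -- step 2 : rewrite the original expression
  have heq : ∀ᶠ h in 𝓝[>] (0:ℝ),
      h ^ (-(1:ℝ) / ((v:ℝ) + 1)) * ∫ x in I, K_d (g x / h) = ∫ s : ℝ, Φ h s := by
    filter_upwards [self_mem_nhdsWithin] with h hh
    rw [mem_Ioi] at hh
    have h1 := srla_subst (fun t => K_d (g t / h)) t₀ (c h) (hcpos h hh) (t₀ - δ) (t₀ + δ)
    rw [hIdef, h1, ← mul_assoc]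
    have h2 : h ^ (-(1:ℝ) / ((v:ℝ) + 1)) * c h = 1 := by
      rw [hnR, hcdef]
      simp only
      rw [← Real.rpow_add hh]
      rw [show -(1:ℝ) / (n:ℝ) + 1 / (n:ℝ) = 0 by ring, Real.rpow_zero]
    rw [h2, one_mul]
  -- dominating function
  set bound : ℝ → ℝ := (Icc (-R) R).indicator (fun _ => M) with hbddef
  have hbound_int : Integrable bound := by
    apply IntegrableOn.integrable_indicator _ measurableSet_Icc
    exact integrableOn_const measure_Icc_lt_top.ne
  set h₀ := min m 1 with hh₀def
  have hh₀pos : 0 < h₀ := lt_min hm0 one_pos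
  have hdom : ∀ᶠ h in 𝓝[>] (0:ℝ), ∀ᵐ s : ℝ, ‖Φ h s‖ ≤ bound s := by
    filter_upwards [Ioo_mem_nhdsGT hh₀pos] with h hh
    obtain ⟨hh1, hh2⟩ := hh
    apply MeasureTheory.ae_of_all
    intro s
    by_cases hsR : |s| ≤ R
    · have hbs : bound s = M := by
        rw [hbddef]
        exact indicator_of_mem (mem_Icc.2 (abs_le.1 hsR)) _
      rw [hbs, hΦdef]
      simp only
      by_cases hmem : t₀ + c h * s ∈ I
      · rw [indicator_of_mem hmem]; exact hM _
      · rw [indicator_of_notMem hmem]; simpa using hM0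
    · push_neg at hsR
      have hΦ0 : Φ h s = 0 := by
        rw [hΦdef]
        simp only
        by_cases hmem : t₀ + c h * s ∈ I
        · rw [indicator_of_mem hmem]
          apply hK0
          rw [abs_div, abs_of_pos hh1, lt_div_iff₀ hh1, one_mul]
          set u := c h * s with hudef
          have hcu : |u| ≤ δ := by
            rw [hIdef, mem_Icc] at hmem
            rw [abs_le]; constructor <;> linarith [hmem.1, hmem.2]
          by_cases hud : |u| ≤ δ'
          · have h5 := hglb u hud
            have h6 : |u| ^ n = h * |s| ^ n := by
              rw [hudef, abs_mul, mul_pow, abs_of_pos (hcpos h hh1), hcn h hh1]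
            have h7 := hRpow s hsR
            rw [h6] at h5
            nlinarith
          · push_neg at hud
            have htKc : t₀ + u ∈ Kc := by
              refine ⟨hmem, fun hIoo => ?_⟩
              rw [mem_Ioo] at hIoo
              have : |u| < δ' := abs_lt.2 ⟨by linarith [hIoo.1], by linarith [hIoo.2]⟩
              linarith
            have h8 := hmin htKc
            calc h < h₀ := hh2
              _ ≤ m := min_le_left _ _
              _ ≤ |g (t₀ + u)| := h8
        · rw [indicator_of_notMem hmem]
      have hbs : bound s = 0 := by
        rw [hbddef]
        apply indicator_of_notMem
        rw [mem_Icc]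
        intro hmem2
        exact absurd (abs_le.2 hmem2) (not_le.2 hsR)
      rw [hΦ0, hbs, norm_zero]
  -- measurability
  have hmeas : ∀ᶠ h in 𝓝[>] (0:ℝ), AEStronglyMeasurable (Φ h) volume := by
    filter_upwards [self_mem_nhdsWithin] with h hh
    rw [mem_Ioi] at hh
    have hrw : Φ h = (Icc (-(δ / c h)) (δ / c h)).indicator
        (fun s => K_d (g (t₀ + c h * s) / h)) := by
      funext s
      exact srla_indicator_comp (fun t => K_d (g t / h)) t₀ (c h) δ (hcpos h hh) s
    rw [hrw, aestronglyMeasurable_indicator_iff measurableSet_Icc]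
    apply ContinuousOn.aestronglyMeasurable _ measurableSet_Icc
    apply hKc.comp_continuousOn
    apply ContinuousOn.div_const
    apply hgc.comp (Continuous.continuousOn
      (continuous_const.add (continuous_const.mul continuous_id)))
    intro s hs
    rw [mem_Icc] at hs
    have hcp := hcpos h hh
    have e1 : c h * (δ / c h) = δ := by field_simp
    have e2 := mul_le_mul_of_nonneg_left hs.1 hcp.le
    have e3 := mul_le_mul_of_nonneg_left hs.2 hcp.le
    rw [mul_neg, e1] at e2
    rw [e1] at e3
    rw [hIdef, mem_Icc]
    constructor
    · change t₀ - δ ≤ t₀ + c h * s; linarith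
    · change t₀ + c h * s ≤ t₀ + δ; linarith
  -- pointwise limit
  have hlim : ∀ᵐ s : ℝ, Tendsto (fun h => Φ h s) (𝓝[>] (0:ℝ)) (𝓝 (K_d (B * s ^ n))) := by
    apply MeasureTheory.ae_of_all
    intro s
    have hsmall : ∀ᶠ h in 𝓝[>] (0:ℝ), 0 < h ∧ c h * |s| < δ' := by
      filter_upwards [self_mem_nhdsWithin,
        hc0.eventually (gt_mem_nhds (show (0:ℝ) < δ' / (|s| + 1) by positivity))] with h hh hch
      rw [mem_Ioi] at hh
      refine ⟨hh, ?_⟩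
      have h1 : 0 < c h := hcpos h hh
      have h2 : c h * |s| ≤ c h * (|s| + 1) := by nlinarith
      have h3 : c h * (|s| + 1) < (δ' / (|s| + 1)) * (|s| + 1) :=
        mul_lt_mul_of_pos_right hch (by positivity)
      have h4 : (δ' / (|s| + 1)) * (|s| + 1) = δ' := by field_simp
      linarith
    have hev : ∀ᶠ h in 𝓝[>] (0:ℝ), Φ h s = K_d (g (t₀ + c h * s) / h) := by
      filter_upwards [hsmall] with h hh
      obtain ⟨hh1, hh2⟩ := hh
      have h1 : |c h * s| < δ' := by
        rw [abs_mul, abs_of_pos (hcpos h hh1)]; exact hh2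
      have hmem : t₀ + c h * s ∈ I := by
        rw [hIdef, mem_Icc]
        have h2 := abs_lt.1 h1
        constructor <;> linarith [h2.1, h2.2]
      rw [hΦdef]
      simp only
      rw [indicator_of_mem hmem]
    have hdiffb : ∀ᶠ h in 𝓝[>] (0:ℝ),
        ‖g (t₀ + c h * s) / h - B * s ^ n‖ ≤ (L * |s| ^ (n + 1)) * c h := by
      filter_upwards [hsmall] with h hh
      obtain ⟨hh1, hh2⟩ := hh
      have h1 : |c h * s| < δ' := by
        rw [abs_mul, abs_of_pos (hcpos h hh1)]; exact hh2
      have hmem : t₀ + c h * s ∈ I := by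
        rw [hIdef, mem_Icc]
        have h2 := abs_lt.1 h1
        constructor <;> linarith [h2.1, h2.2]
      have h2 := htay _ hmem
      have he : t₀ + c h * s - t₀ = c h * s := by ring
      rw [he] at h2
      have h3 : (c h * s) ^ n = h * s ^ n := by rw [mul_pow, hcn h hh1]
      have h4 : g (t₀ + c h * s) / h - B * s ^ n
          = (g (t₀ + c h * s) - B * (c h * s) ^ n) / h := by
        rw [h3]; field_simp
      rw [Real.norm_eq_abs, h4, abs_div, abs_of_pos hh1, div_le_iff₀ hh1]
      calc |g (t₀ + c h * s) - B * (c h * s) ^ n| ≤ L * |c h * s| ^ (n + 1) := h2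
        _ = (L * |s| ^ (n + 1)) * c h * h := by
            rw [abs_mul, abs_of_pos (hcpos h hh1), mul_pow, pow_succ (c h) n, hcn h hh1]
            ring
    have htend0 : Tendsto (fun h : ℝ => g (t₀ + c h * s) / h - B * s ^ n)
        (𝓝[>] (0:ℝ)) (𝓝 0) := by
      apply squeeze_zero_norm' hdiffb
      have h5 := hc0.const_mul (L * |s| ^ (n + 1))
      rw [mul_zero] at h5
      exact h5
    have htend : Tendsto (fun h : ℝ => g (t₀ + c h * s) / h) (𝓝[>] (0:ℝ))
        (𝓝 (B * s ^ n)) := by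
      have h5 := htend0.add_const (B * s ^ n)
      simpa using h5
    have h6 := (hKc.tendsto (B * s ^ n)).comp htend
    exact Filter.Tendsto.congr' (EventuallyEq.symm hev) h6
  -- dominated convergence
  have hmain := MeasureTheory.tendsto_integral_filter_of_dominated_convergence
    bound hmeas hdom hbound_int hlim
  rw [srla_limit_integral n (by omega) B hB0 K_d hKe hKs] at hmain
  have hconst : |B| ^ (-(1:ℝ)/(n:ℝ))
      = ((Nat.factorial (v + 1) : ℝ) / |A|) ^ ((1:ℝ) / ((v:ℝ) + 1)) := by
    have hA0 : (0:ℝ) < |A| := abs_pos.2 hderivne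
    have h1 : |B| = |A| / (Nat.factorial n : ℝ) := by
      rw [hBdef, abs_div, abs_of_pos hfacpos]
    rw [h1, hnR, show -(1:ℝ)/(n:ℝ) = -((1:ℝ)/(n:ℝ)) by ring,
      Real.rpow_neg (by positivity), ← Real.inv_rpow (by positivity), inv_div]
  rw [hconst] at hmain
  exact Filter.Tendsto.congr' (EventuallyEq.symm heq) hmain
end

section
/- Let K : ℝ → ℝ be continuous with support contained in [−1,1], and let (b_n)_{n ∈ ℕ} be a sequence of positive reals with b_n → 0 and n·b_n → ∞. Then lim_{n → ∞} (1/(n·b_n)) · Σ_{j=1}^{n} K(j/(n·b_n))² = ∫_0^∞ K(x)² dx. -/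
open MeasureTheory Set Filter Topology

private lemma ceil_meas (c : ℝ) (f : ℝ → ℝ) (hf : Continuous f) :
    Measurable fun x : ℝ => f ((⌈c * x⌉ : ℝ) / c) := by
  apply hf.measurable.comp
  exact (measurable_from_top.comp (measurable_const.mul measurable_id).ceil).div_const c

private lemma integrableOn_ceil (c : ℝ) (f : ℝ → ℝ) (hf : Continuous f) {M : ℝ}
    (hM : ∀ y, |f y| ≤ M) (a b : ℝ) :
    IntegrableOn (fun x : ℝ => f ((⌈c * x⌉ : ℝ) / c)) (Ioc a b) := by
  apply Measure.integrableOn_of_bounded (M := M) measure_Ioc_lt_top.ne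
    (ceil_meas c f hf).aestronglyMeasurable
  filter_upwards with x using by rw [Real.norm_eq_abs]; exact hM _

private lemma step_integral (f : ℝ → ℝ) (c : ℝ) (hc : 0 < c) (j : ℕ) :
    ∫ x in Ioc ((j : ℝ) / c) (((j : ℝ) + 1) / c), f ((⌈c * x⌉ : ℝ) / c)
      = f (((j : ℝ) + 1) / c) / c := by
  rw [setIntegral_congr_fun measurableSet_Ioc
    (g := fun _ => f (((j : ℝ) + 1) / c)) ?_]
  · have hdiff : ((j:ℝ)+1)/c - (j:ℝ)/c = 1/c := by field_simp; ring
    rw [setIntegral_const, measureReal_def, Real.volume_Ioc, smul_eq_mul,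
      ENNReal.toReal_ofReal (by rw [hdiff]; positivity), hdiff]
    ring
  · intro x hx
    have h1 : (j : ℝ) < c * x := by
      have := hx.1
      rw [div_lt_iff₀ hc] at this
      linarith [this]
    have h2 : c * x ≤ (j : ℝ) + 1 := by
      have := hx.2
      rw [le_div_iff₀ hc] at this
      linarith [this]
    have hceil : ⌈c * x⌉ = (j : ℤ) + 1 := by
      rw [Int.ceil_eq_iff]
      constructor
      · push_cast; linarith
      · push_cast; linarith
    simp only [hceil]
    push_cast
    ring_nf

private lemma sum_eq_integral (f : ℝ → ℝ) (hf : Continuous f) {M : ℝ}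
    (hM : ∀ y, |f y| ≤ M) (c : ℝ) (hc : 0 < c) (n : ℕ) :
    ∫ x in Ioc (0 : ℝ) ((n : ℝ) / c), f ((⌈c * x⌉ : ℝ) / c)
      = (1 / c) * ∑ j ∈ Finset.Icc 1 n, f ((j : ℝ) / c) := by
  induction n with
  | zero => simp
  | succ n ih =>
    have hcast : ((n + 1 : ℕ) : ℝ) = (n : ℝ) + 1 := by push_cast; ring
    have h0n : (0 : ℝ) ≤ (n : ℝ) / c := by positivity
    have hnn1 : (n : ℝ) / c ≤ ((n : ℝ) + 1) / c := by
      gcongr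
      linarith
    have hunion : Ioc (0 : ℝ) (((n : ℝ) + 1) / c)
        = Ioc 0 ((n : ℝ) / c) ∪ Ioc ((n : ℝ) / c) (((n : ℝ) + 1) / c) :=
      (Ioc_union_Ioc_eq_Ioc h0n hnn1).symm
    rw [hcast, hunion, setIntegral_union (Ioc_disjoint_Ioc_of_le le_rfl) measurableSet_Ioc
      (integrableOn_ceil c f hf hM _ _) (integrableOn_ceil c f hf hM _ _),
      ih, step_integral f c hc n, Finset.sum_Icc_succ_top (by omega : 1 ≤ n + 1)]
    push_cast
    ring

theorem tendsto_ceil_div (c : ℕ → ℝ) (hc : Tendsto c atTop atTop) (x : ℝ) :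
    Tendsto (fun n => (⌈c n * x⌉ : ℝ) / c n) atTop (𝓝 x) := by
  have hpos : ∀ᶠ n in atTop, 0 < c n := hc.eventually_gt_atTop 0
  have hup : Tendsto (fun n => x + 1 / c n) atTop (𝓝 x) := by
    have : Tendsto (fun n => 1 / c n) atTop (𝓝 0) := hc.inv_tendsto_atTop.congr
      (fun n => (one_div _).symm)
    simpa using tendsto_const_nhds.add this
  apply tendsto_of_tendsto_of_tendsto_of_le_of_le' tendsto_const_nhds hup
  · filter_upwards [hpos] with n hn
    rw [le_div_iff₀ hn, mul_comm]
    exact Int.le_ceil _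
  · filter_upwards [hpos] with n hn
    rw [div_le_iff₀ hn]
    have := Int.ceil_lt_add_one (c n * x)
    have h1 : (x + 1 / c n) * c n = c n * x + 1 := by field_simp
    linarith [this, h1.ge]

/-- behind equation (B.29): Riemann-sum limit for squared boundary
kernels evaluated at the grid `j/(n·b_n)`. -/
theorem boundary_kernel_riemann_limit
    (K : ℝ → ℝ) (hKc : Continuous K)
    (hKs : Function.support K ⊆ Icc (-1 : ℝ) 1)
    (b : ℕ → ℝ) (hbpos : ∀ n, 0 < b n)
    (hb0 : Tendsto b atTop (𝓝 0))
    (hnb : Tendsto (fun n : ℕ => (n:ℝ) * b n) atTop atTop) :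
    Tendsto (fun n : ℕ =>
        (1 / ((n:ℝ) * b n)) * ∑ j ∈ Finset.Icc 1 n, (K ((j:ℝ) / ((n:ℝ) * b n)))^2)
      atTop (𝓝 (∫ x in Ioi (0:ℝ), (K x)^2)) := by
  set f : ℝ → ℝ := fun x => (K x) ^ 2 with hfdef
  have hf : Continuous f := hKc.pow 2
  have hfs : ∀ y : ℝ, 1 < y → f y = 0 := by
    intro y hy
    have : K y = 0 := by
      by_contra h
      have := hKs h
      exact absurd this.2 (not_le.mpr hy)
    simp [hfdef, this]
  -- bound
  have hcs : HasCompactSupport f := by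
    apply HasCompactSupport.intro isCompact_Icc (K := Icc (-1 : ℝ) 1)
    intro y hy
    have : K y = 0 := by
      by_contra h
      exact hy (hKs h)
    simp [hfdef, this]
  obtain ⟨M, hM⟩ := hcs.exists_bound_of_continuous hf
  simp only [Real.norm_eq_abs] at hM
  have hM0 : 0 ≤ M := le_trans (abs_nonneg _) (hM 0)
  set c : ℕ → ℝ := fun n => (n : ℝ) * b n with hcdef
  have hcpos : ∀ᶠ n in atTop, 0 < c n := hnb.eventually_gt_atTop 0
  -- n / c n → ∞
  have hratio : Tendsto (fun n : ℕ => (n : ℝ) / c n) atTop atTop := by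
    have hinv : Tendsto (fun n => (b n)⁻¹) atTop atTop := by
      apply Filter.Tendsto.inv_tendsto_nhdsGT_zero
      exact tendsto_nhdsWithin_iff.mpr ⟨hb0, Eventually.of_forall hbpos⟩
    apply hinv.congr'
    filter_upwards [eventually_ge_atTop 1] with n hn
    have hn0 : (n : ℝ) ≠ 0 := by positivity
    have hb0' : b n ≠ 0 := (hbpos n).ne'
    field_simp [hcdef]
    simp [hcdef, mul_comm]
  -- the sequence of functions
  set F : ℕ → ℝ → ℝ := fun n => (Ioc (0 : ℝ) ((n : ℝ) / c n)).indicator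
    (fun x => f ((⌈c n * x⌉ : ℝ) / c n)) with hFdef
  have key : Tendsto (fun n => ∫ x, F n x) atTop (𝓝 (∫ x in Ioi (0:ℝ), f x)) := by
    rw [← integral_indicator measurableSet_Ioi]
    apply tendsto_integral_filter_of_dominated_convergence
      ((Ioc (0:ℝ) 1).indicator fun _ => M)
    · filter_upwards with n
      exact ((ceil_meas (c n) f hf).indicator measurableSet_Ioc).aestronglyMeasurable
    · filter_upwards [hcpos] with n hcn
      filter_upwards with x
      rw [Real.norm_eq_abs, hFdef]
      by_cases hx : x ∈ Ioc (0 : ℝ) ((n : ℝ) / c n)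
      · simp only [indicator_of_mem hx]
        set y := (⌈c n * x⌉ : ℝ) / c n with hy
        have hxy : x ≤ y := by
          rw [hy, le_div_iff₀ hcn, mul_comm]
          exact Int.le_ceil _
        by_cases hy1 : y ≤ 1
        · have hx1 : x ∈ Ioc (0 : ℝ) 1 := ⟨hx.1, hxy.trans hy1⟩
          rw [indicator_of_mem hx1]
          exact hM y
        · rw [hfs y (not_le.mp hy1), abs_zero]
          by_cases hx1 : x ∈ Ioc (0 : ℝ) 1
          · rw [indicator_of_mem hx1]; exact hM0
          · rw [indicator_of_notMem hx1]
      · simp only [indicator_of_notMem hx, abs_zero]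
        by_cases hx1 : x ∈ Ioc (0 : ℝ) 1
        · rw [indicator_of_mem hx1]; exact hM0
        · rw [indicator_of_notMem hx1]
    · rw [integrable_indicator_iff measurableSet_Ioc]
      exact integrableOn_const measure_Ioc_lt_top.ne
    · filter_upwards with x
      by_cases hx : 0 < x
      · rw [indicator_of_mem (mem_Ioi.mpr hx)]
        have hev : ∀ᶠ n in atTop, F n x = f ((⌈c n * x⌉ : ℝ) / c n) := by
          filter_upwards [hratio.eventually_ge_atTop x] with n hn
          exact Set.indicator_of_mem (show x ∈ Ioc (0:ℝ) ((n:ℝ)/c n) from ⟨hx, hn⟩) _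
        have : Tendsto (fun n => f ((⌈c n * x⌉ : ℝ) / c n)) atTop (𝓝 (f x)) :=
          (hf.continuousAt.tendsto).comp (tendsto_ceil_div c hnb x)
        exact this.congr' (by filter_upwards [hev] with n h using h.symm)
      · rw [indicator_of_notMem (by simpa using hx)]
        apply tendsto_const_nhds.congr'
        filter_upwards with n
        have : x ∉ Ioc (0 : ℝ) ((n : ℝ) / c n) := fun h => hx h.1
        exact (indicator_of_notMem this _).symm
  apply key.congr'
  filter_upwards [hcpos] with n hcn
  rw [hFdef]
  simp only
  rw [integral_indicator measurableSet_Ioc, sum_eq_integral f hf hM (c n) hcn n]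
end
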